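/- arXiv:1008.3677 — 6 statements merged into one kernel-verified Lean document; each statement's English description precedes it below -/
import Mathlib

section
/- Let S = {s_1 < s_2 < ... < s_n} be a set of n ≥ 1 integers with 0 ∉ S, and let f_0, f_1, ..., f_n be positive integers. Then the cardinality of MR_S(f_0, f_1, ..., f_n), the set of multi-noded rooted trees on S ∪ {0} of vertex data (f_0, f_1, ..., f_n), is (∑_{j=0}^{n} f_j)^{n−1} · f_0. -/
open SimpleGraph

section Forest

variable {V : Type*} [Fintype V] [DecidableEq V]

/-- Labelled rooted forests on vertex set `W` with root set `R`:
`p.1` is the parent function (identity off `W \ R`), `p.2` the labelling. -/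
def MForest (f : V → ℕ) (W R : Finset V) : Type _ :=
  {p : (V → V) × (V → ℕ) //
    (∀ v, v ∉ W \ R → p.1 v = v ∧ p.2 v = 0) ∧
    (∀ v ∈ W \ R, p.1 v ∈ W ∧ p.2 v ∈ Finset.Icc 1 (f (p.1 v))) ∧
    (∀ v ∈ W, ∃ k, p.1^[k] v ∈ R)}

instance mforest_finite (f : V → ℕ) (W R : Finset V) : Finite (MForest f W R) := by
  classical
  set B := ∑ v, f v with hB
  apply Finite.of_injective (α := MForest f W R)
    (β := (V → V) × (V → Fin (B + 1)))
    (fun p => (p.1.1, fun v => ⟨min (p.1.2 v) B, by omega⟩))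
  have hb : ∀ (π : V → V) (β : V → ℕ),
      ((∀ v ∉ W \ R, π v = v ∧ β v = 0) ∧
        (∀ v ∈ W \ R, π v ∈ W ∧ β v ∈ Finset.Icc 1 (f (π v))) ∧
        (∀ v ∈ W, ∃ k, π^[k] v ∈ R)) → ∀ v, β v ≤ B := by
    rintro π β ⟨hc1, hc2, hc3⟩ v
    by_cases hv : v ∈ W \ R
    · have h2 := (hc2 v hv).2
      simp only [Finset.mem_Icc] at h2
      exact le_trans h2.2 (Finset.single_le_sum (fun i _ => Nat.zero_le _) (Finset.mem_univ _))
    · have := (hc1 v hv).2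
      omega
  rintro ⟨⟨π₁, β₁⟩, h₁⟩ ⟨⟨π₂, β₂⟩, h₂⟩ h
  simp only [Prod.mk.injEq] at h
  apply Subtype.ext
  have hb₁ := hb π₁ β₁ h₁
  have hb₂ := hb π₂ β₂ h₂
  have hββ : β₁ = β₂ := by
    funext v
    have := congrFun h.2 v
    simp only [Fin.mk.injEq] at this
    have e1 := hb₁ v
    have e2 := hb₂ v
    omega
  exact Prod.ext h.1 hββ

lemma nat_card_sigma' {ι : Type*} [Fintype ι] (F : ι → Type*) [∀ i, Finite (F i)] :
    Nat.card (Σ i, F i) = ∑ i, Nat.card (F i) := by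
  letI : ∀ i, Fintype (F i) := fun i => Fintype.ofFinite _
  simp [Nat.card_eq_fintype_card]

end Forest
open Finset

section KeySum

variable {V : Type*} [DecidableEq V]

lemma key_sum (M : Finset V) (g : V → ℕ) (x y : ℕ) : ∀ s : ℕ,
    ∑ C ∈ M.powerset, x ^ C.card * (s + ∑ c ∈ C, g c) * y ^ (M.card - C.card)
      = s * (x + y) ^ M.card + (∑ c ∈ M, g c) * x * (x + y) ^ (M.card - 1) := by
  induction M using Finset.induction_on with
  | empty => simp
  | @insert a M' ha ih =>
    intro s
    rw [Finset.sum_powerset_insert ha]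
    have hcard : (insert a M').card = M'.card + 1 := Finset.card_insert_of_notMem ha
    have e1 : ∑ C ∈ M'.powerset, x ^ C.card * (s + ∑ c ∈ C, g c) * y ^ ((insert a M').card - C.card)
        = y * ∑ C ∈ M'.powerset, x ^ C.card * (s + ∑ c ∈ C, g c) * y ^ (M'.card - C.card) := by
      rw [Finset.mul_sum]
      apply Finset.sum_congr rfl
      intro C hC
      have hle : C.card ≤ M'.card := Finset.card_le_card (Finset.mem_powerset.mp hC)
      have : (insert a M').card - C.card = (M'.card - C.card) + 1 := by omega
      rw [this, pow_succ]
      ring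
    have e2 : ∑ C ∈ M'.powerset, x ^ (insert a C).card * ((s + ∑ c ∈ insert a C, g c)) *
          y ^ ((insert a M').card - (insert a C).card)
        = x * ∑ C ∈ M'.powerset, x ^ C.card * ((s + g a) + ∑ c ∈ C, g c) * y ^ (M'.card - C.card) := by
      rw [Finset.mul_sum]
      apply Finset.sum_congr rfl
      intro C hC
      have hC' : C ⊆ M' := Finset.mem_powerset.mp hC
      have haC : a ∉ C := fun h => ha (hC' h)
      rw [Finset.card_insert_of_notMem haC, Finset.sum_insert haC, hcard]
      have : M'.card + 1 - (C.card + 1) = M'.card - C.card := by omega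
      rw [this, pow_succ]
      ring_nf
    rw [e1, e2, ih s, ih (s + g a), Finset.sum_insert ha, hcard]
    rcases Finset.eq_empty_or_nonempty M' with hM | hM
    · subst hM; simp; ring
    · have h1 : 1 ≤ M'.card := Finset.card_pos.mpr hM
      have h2 : M'.card - 1 + 1 = M'.card := by omega
      have e3 : (x + y) ^ (M'.card + 1) = (x + y) ^ M'.card * (x + y) := by rw [pow_succ]
      have e4 : (x + y) ^ M'.card = (x + y) ^ (M'.card - 1) * (x + y) := by
        conv_lhs => rw [← h2]
        rw [pow_succ]
      have e5 : M'.card + 1 - 1 = M'.card := by omega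
      rw [e5, e3]
      simp only [e4]
      ring
end KeySum

section Reach

variable {V : Type*} [DecidableEq V]

lemma reach_down (π : V → V) (r0 : V) (C R : Finset V)
    (hC : ∀ v, v ≠ r0 → π v = r0 → v ∈ C) :
    ∀ k v, π^[k] v ∈ R → v ≠ r0 →
      ∃ k', (fun u => if u ∈ C then u else π u)^[k'] v ∈ (R.erase r0) ∪ C := by
  intro k
  induction k with
  | zero =>
    intro v hv hne
    exact ⟨0, by simpa [Finset.mem_union, Finset.mem_erase, hne] using Or.inl hv⟩
  | succ k ih =>
    intro v hv hne
    by_cases hvC : v ∈ C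
    · exact ⟨0, by simp [Finset.mem_union, hvC]⟩
    by_cases hvR : v ∈ R
    · exact ⟨0, by simp [Finset.mem_union, Finset.mem_erase, hne, hvR]⟩
    · have hπ : π v ≠ r0 := fun h => hvC (hC v hne h)
      have hiter : π^[k] (π v) ∈ R := by
        rwa [← Function.iterate_succ_apply]
      obtain ⟨k', hk'⟩ := ih (π v) hiter hπ
      refine ⟨k' + 1, ?_⟩
      rw [Function.iterate_succ_apply]
      simpa [hvC] using hk'

lemma reach_up (π : V → V) (r0 : V) (C R : Finset V) (hr0 : r0 ∈ R) :
    ∀ k v, π^[k] v ∈ (R.erase r0) ∪ C →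
      ∃ k', (fun u => if u ∈ C then r0 else π u)^[k'] v ∈ R := by
  intro k
  induction k with
  | zero =>
    intro v hv
    simp only [Function.iterate_zero, id_eq] at hv
    rcases Finset.mem_union.mp hv with h | h
    · exact ⟨0, by simpa using (Finset.mem_erase.mp h).2⟩
    · exact ⟨1, by simpa [h] using hr0⟩
  | succ k ih =>
    intro v hv
    by_cases hvC : v ∈ C
    · exact ⟨1, by simpa [hvC] using hr0⟩
    by_cases hvR : v ∈ R
    · exact ⟨0, by simpa using hvR⟩
    · have hiter : π^[k] (π v) ∈ (R.erase r0) ∪ C := by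
        rwa [← Function.iterate_succ_apply]
      obtain ⟨k', hk'⟩ := ih (π v) hiter
      refine ⟨k' + 1, ?_⟩
      rw [Function.iterate_succ_apply]
      simpa [hvC] using hk'

end Reach
open Finset

section Split

variable {V : Type*} [Fintype V] [DecidableEq V]

lemma hdiff_lemma {W R C : Finset V} {r0 : V} (hr0 : r0 ∈ R) (hC : C ⊆ W \ R) :
    (W.erase r0) \ ((R.erase r0) ∪ C) = (W \ R) \ C := by
  ext v
  simp only [Finset.mem_sdiff, Finset.mem_erase, Finset.mem_union, not_or]
  constructor
  · rintro ⟨⟨hvr0, hvW⟩, h1, h2⟩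
    exact ⟨⟨hvW, fun hvR => h1 ⟨hvr0, hvR⟩⟩, h2⟩
  · rintro ⟨⟨hvW, hvR⟩, hvC⟩
    exact ⟨⟨fun h => hvR (h ▸ hr0), hvW⟩, fun h => hvR h.2, hvC⟩

/-- Reattach the children `C` of `r0` to `r0`. -/
def glue (f : V → ℕ) (W R : Finset V) (hRW : R ⊆ W) (r0 : V) (hr0 : r0 ∈ R)
    (x : Σ C : ↥((W \ R).powerset),
      ((↥(C.1 : Finset V) → ↥(Finset.Icc 1 (f r0))) ×
        MForest f (W.erase r0) ((R.erase r0) ∪ C.1))) : MForest f W R := by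
  obtain ⟨⟨C, hC⟩, lab, ⟨⟨π, β⟩, h1, h2, h3⟩⟩ := x
  simp only at h1 h2 h3 lab ⊢
  rw [Finset.mem_powerset] at hC
  have hd := hdiff_lemma hr0 hC
  rw [hd] at h1 h2
  refine ⟨⟨fun v => if v ∈ C then r0 else π v,
           fun v => if h : v ∈ C then (lab ⟨v, h⟩ : ℕ) else β v⟩, ?_, ?_, ?_⟩
  · intro v hv
    have hvC : v ∉ C := fun h => hv (hC h)
    have hv' : v ∉ (W \ R) \ C := fun h => hv (Finset.mem_sdiff.mp h).1
    simp only [if_neg hvC, dif_neg hvC]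
    exact h1 v hv'
  · intro v hv
    by_cases hvC : v ∈ C
    · simp only [if_pos hvC, dif_pos hvC]
      refine ⟨hRW hr0, ?_⟩
      exact (lab ⟨v, hvC⟩).2
    · simp only [if_neg hvC, dif_neg hvC]
      have hv' : v ∈ (W \ R) \ C := Finset.mem_sdiff.mpr ⟨hv, hvC⟩
      obtain ⟨hπ, hβ⟩ := h2 v hv'
      exact ⟨Finset.mem_of_mem_erase hπ, hβ⟩
  · intro v hv
    by_cases hvr : v = r0
    · exact ⟨0, by simpa [hvr] using hr0⟩
    · have hv' : v ∈ W.erase r0 := Finset.mem_erase.mpr ⟨hvr, hv⟩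
      obtain ⟨k, hk⟩ := h3 v hv'
      exact reach_up π r0 C R hr0 k v hk

lemma glue_bijective (f : V → ℕ) (W R : Finset V) (hRW : R ⊆ W) (r0 : V) (hr0 : r0 ∈ R) :
    Function.Bijective (glue f W R hRW r0 hr0) := by
  constructor
  · rintro ⟨⟨C₁, hC₁⟩, lab₁, ⟨⟨π₁, β₁⟩, g1₁, g2₁, g3₁⟩⟩
      ⟨⟨C₂, hC₂⟩, lab₂, ⟨⟨π₂, β₂⟩, g1₂, g2₂, g3₂⟩⟩ heq
    have hC₁' := Finset.mem_powerset.mp hC₁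
    have hC₂' := Finset.mem_powerset.mp hC₂
    have hd₁ := hdiff_lemma hr0 hC₁'
    have hd₂ := hdiff_lemma hr0 hC₂'
    have heq' := congrArg Subtype.val heq
    simp only [glue, Prod.mk.injEq] at heq'
    obtain ⟨hPi, hB⟩ := heq'
    -- the child sets agree
    have hCC : C₁ = C₂ := by
      have key : ∀ (C₁ C₂ : Finset V) (π₁ π₂ : V → V), C₁ ⊆ W \ R → C₂ ⊆ W \ R →
          (∀ v ∈ (W.erase r0) \ ((R.erase r0) ∪ C₂), π₂ v ∈ W.erase r0 ∧ True) →
          ((fun v => if v ∈ C₁ then r0 else π₁ v) = fun v => if v ∈ C₂ then r0 else π₂ v) →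
          ∀ v ∈ C₁, v ∈ C₂ := by
        intro C₁ C₂ π₁ π₂ hs₁ hs₂ h2 hfe v hv
        by_contra hv2
        have := congrFun hfe v
        simp only [if_pos hv, if_neg hv2] at this
        have hv' : v ∈ (W.erase r0) \ ((R.erase r0) ∪ C₂) := by
          rw [hdiff_lemma hr0 hs₂]
          exact Finset.mem_sdiff.mpr ⟨hs₁ hv, hv2⟩
        exact (Finset.mem_erase.mp (h2 v hv').1).1 this.symm
      apply Finset.Subset.antisymm
      · intro v hv
        exact key C₁ C₂ π₁ π₂ hC₁' hC₂' (fun v hv => ⟨(g2₂ v hv).1, trivial⟩) hPi v hv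
      · intro v hv
        exact key C₂ C₁ π₂ π₁ hC₂' hC₁' (fun v hv => ⟨(g2₁ v hv).1, trivial⟩) hPi.symm v hv
    subst hCC
    rw [hd₁] at g1₁ g2₁
    rw [hd₁] at g1₂ g2₂
    have hππ : π₁ = π₂ := by
      funext v
      by_cases hvC : v ∈ C₁
      · have hv1 : v ∉ (W \ R) \ C₁ := fun h => (Finset.mem_sdiff.mp h).2 hvC
        exact ((g1₁ v hv1).1).trans ((g1₂ v hv1).1).symm
      · have := congrFun hPi v
        simpa [if_neg hvC] using this
    have hββ : β₁ = β₂ := by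
      funext v
      by_cases hvC : v ∈ C₁
      · have hv1 : v ∉ (W \ R) \ C₁ := fun h => (Finset.mem_sdiff.mp h).2 hvC
        exact ((g1₁ v hv1).2).trans ((g1₂ v hv1).2).symm
      · have := congrFun hB v
        simpa [dif_neg hvC] using this
    have hll : lab₁ = lab₂ := by
      funext c
      obtain ⟨c, hc⟩ := c
      have := congrFun hB c
      simp only [dif_pos hc] at this
      exact Subtype.ext this
    subst hππ; subst hββ; subst hll
    rfl
  · rintro ⟨⟨π, β⟩, h1, h2, h3⟩
    set C₀ : Finset V := (W \ R).filter (fun v => π v = r0) with hC₀def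
    have hC₀sub : C₀ ⊆ W \ R := Finset.filter_subset _ _
    have hd := hdiff_lemma hr0 hC₀sub
    have hmemC₀ : ∀ v, v ∈ C₀ ↔ v ∈ W \ R ∧ π v = r0 := by
      intro v; simp [hC₀def]
    refine ⟨⟨⟨C₀, Finset.mem_powerset.mpr hC₀sub⟩,
      fun c => ⟨β c, ?_⟩,
      ⟨⟨fun v => if v ∈ C₀ then v else π v, fun v => if v ∈ C₀ then 0 else β v⟩,
        ?_, ?_, ?_⟩⟩, ?_⟩
    · obtain ⟨c, hc⟩ := c
      obtain ⟨hcM, hcπ⟩ := (hmemC₀ c).mp hc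
      have h2' : β c ∈ Finset.Icc 1 (f (π c)) := (h2 c hcM).2
      rwa [hcπ] at h2'
    · simp only
      rw [hd]
      intro v hv
      by_cases hvC : v ∈ C₀
      · simp [hvC]
      · have hvM : v ∉ W \ R := by
          intro h
          exact hv (Finset.mem_sdiff.mpr ⟨h, hvC⟩)
        simp only [if_neg hvC]
        exact h1 v hvM
    · simp only
      rw [hd]
      intro v hv
      obtain ⟨hvM, hvC⟩ := Finset.mem_sdiff.mp hv
      have hπ : π v ≠ r0 := fun h => hvC ((hmemC₀ v).mpr ⟨hvM, h⟩)
      simp only [if_neg hvC]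
      exact ⟨Finset.mem_erase.mpr ⟨hπ, (h2 v hvM).1⟩, (h2 v hvM).2⟩
    · simp only
      intro v hv
      obtain ⟨hvr, hvW⟩ := Finset.mem_erase.mp hv
      obtain ⟨k, hk⟩ := h3 v hvW
      refine reach_down π r0 C₀ R ?_ k v hk hvr
      intro u hur huπ
      by_cases huM : u ∈ W \ R
      · exact (hmemC₀ u).mpr ⟨huM, huπ⟩
      · exact absurd ((h1 u huM).1.symm.trans huπ) hur
    · apply Subtype.ext
      simp only [glue]
      refine Prod.ext ?_ ?_
      · funext v
        simp only
        by_cases hvC : v ∈ C₀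
        · simp only [if_pos hvC]
          exact (((hmemC₀ v).mp hvC).2).symm
        · simp [hvC]
      · funext v
        simp only
        by_cases hvC : v ∈ C₀
        · simp [hvC]
        · simp [hvC]

end Split
open Finset

section Count

variable {V : Type*} [Fintype V] [DecidableEq V]

theorem mforest_card (f : V → ℕ) (hf : ∀ v, 1 ≤ f v) :
    ∀ (W R : Finset V), R ⊆ W →
      Nat.card (MForest f W R) =
        if W = R then 1 else (∑ r ∈ R, f r) * (∑ v ∈ W, f v) ^ (W.card - R.card - 1) := by
  intro W
  induction W using Finset.strongInduction with
  | _ W ih =>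
  intro R hRW
  by_cases hWR : W = R
  · rw [if_pos hWR]
    subst hWR
    rw [Nat.card_eq_one_iff_unique]
    constructor
    · constructor
      rintro ⟨⟨π₁, β₁⟩, h1₁, _, _⟩ ⟨⟨π₂, β₂⟩, h1₂, _, _⟩
      have hempty : ∀ v : V, v ∉ W \ W := by simp
      apply Subtype.ext
      refine Prod.ext (funext fun v => ?_) (funext fun v => ?_)
      · exact ((h1₁ v (hempty v)).1).trans ((h1₂ v (hempty v)).1).symm
      · exact ((h1₁ v (hempty v)).2).trans ((h1₂ v (hempty v)).2).symm
    · exact ⟨⟨⟨id, fun _ => 0⟩, fun v _ => ⟨rfl, rfl⟩,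
        fun v hv => absurd hv (by simp), fun v hv => ⟨0, hv⟩⟩⟩
  rw [if_neg hWR]
  by_cases hRe : R = ∅
  · subst hRe
    simp only [Finset.sum_empty, Nat.zero_mul]
    have hWne : W.Nonempty := by
      rcases Finset.eq_empty_or_nonempty W with h | h
      · exact absurd h hWR
      · exact h
    have : IsEmpty (MForest f W ∅) := by
      constructor
      rintro ⟨⟨π, β⟩, _, _, h3⟩
      obtain ⟨v, hv⟩ := hWne
      obtain ⟨k, hk⟩ := h3 v hv
      exact absurd hk (Finset.notMem_empty _)
    exact Nat.card_of_isEmpty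
  · obtain ⟨r0, hr0⟩ := Finset.nonempty_iff_ne_empty.mpr hRe
    have hr0W : r0 ∈ W := hRW hr0
    have hMne : (W \ R).Nonempty := by
      rw [Finset.sdiff_nonempty]
      intro h
      exact hWR (Finset.Subset.antisymm h hRW)
    -- abbreviations
    have hWe : W.erase r0 = (R.erase r0) ∪ (W \ R) := by
      ext v
      simp only [Finset.mem_erase, Finset.mem_union, Finset.mem_sdiff]
      constructor
      · rintro ⟨hvr, hvW⟩
        by_cases hvR : v ∈ R
        · exact Or.inl ⟨hvr, hvR⟩
        · exact Or.inr ⟨hvW, hvR⟩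
      · rintro (⟨hvr, hvR⟩ | ⟨hvW, hvR⟩)
        · exact ⟨hvr, hRW hvR⟩
        · exact ⟨fun h => hvR (h ▸ hr0), hvW⟩
    have hdisj : ∀ C : Finset V, C ⊆ W \ R → Disjoint (R.erase r0) C := by
      intro C hC
      rw [Finset.disjoint_left]
      intro v hv hvC
      exact (Finset.mem_sdiff.mp (hC hvC)).2 (Finset.mem_of_mem_erase hv)
    have hiff : ∀ C : Finset V, C ⊆ W \ R → (W.erase r0 = R.erase r0 ∪ C ↔ C = W \ R) := by
      intro C hC
      constructor
      · intro h
        apply Finset.Subset.antisymm hC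
        intro v hv
        have hv1 : v ∈ W.erase r0 := by
          rw [hWe]
          exact Finset.mem_union_right _ hv
        rw [h] at hv1
        rcases Finset.mem_union.mp hv1 with h' | h'
        · exact absurd (Finset.mem_of_mem_erase h') (Finset.mem_sdiff.mp hv).2
        · exact h'
      · rintro rfl
        exact hWe
    have hcardW : W.card = R.card + (W \ R).card := by
      have := Finset.card_sdiff_add_card_eq_card hRW
      omega
    have hRpos : 1 ≤ R.card := Finset.card_pos.mpr ⟨r0, hr0⟩
    have hMpos : 1 ≤ (W \ R).card := Finset.card_pos.mpr hMne
    -- the split bijection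
    rw [← Nat.card_congr (Equiv.ofBijective _ (glue_bijective f W R hRW r0 hr0))]
    rw [nat_card_sigma']
    rw [Finset.sum_coe_sort ((W \ R).powerset)
      (fun C => Nat.card ((↥C → ↥(Finset.Icc 1 (f r0))) ×
        MForest f (W.erase r0) (R.erase r0 ∪ C)))]
    have hstep : ∀ C ∈ (W \ R).powerset,
        Nat.card ((↥C → ↥(Finset.Icc 1 (f r0))) × MForest f (W.erase r0) (R.erase r0 ∪ C)) =
        f r0 ^ C.card * (if C = W \ R then 1 else
          ((∑ v ∈ R.erase r0, f v) + ∑ c ∈ C, f c) *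
            (∑ v ∈ W.erase r0, f v) ^ ((W \ R).card - C.card - 1)) := by
      intro C hC
      have hCM : C ⊆ W \ R := Finset.mem_powerset.mp hC
      have hsub : R.erase r0 ∪ C ⊆ W.erase r0 := by
        rw [hWe]
        exact Finset.union_subset_union (Finset.Subset.refl _) hCM
      rw [Nat.card_prod, Nat.card_fun, Nat.card_eq_finsetCard, Nat.card_eq_finsetCard,
        Nat.card_Icc]
      have hIcc : f r0 + 1 - 1 = f r0 := by omega
      rw [hIcc]
      rw [ih (W.erase r0) (Finset.erase_ssubset hr0W) (R.erase r0 ∪ C) hsub]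
      rw [if_congr (hiff C hCM) rfl rfl]
      rw [Finset.sum_union (hdisj C hCM)]
      have hexp : (W.erase r0).card - (R.erase r0 ∪ C).card - 1
          = (W \ R).card - C.card - 1 := by
        rw [Finset.card_union_of_disjoint (hdisj C hCM), Finset.card_erase_of_mem hr0W,
          Finset.card_erase_of_mem hr0]
        have hCle : C.card ≤ (W \ R).card := Finset.card_le_card hCM
        omega
      rw [hexp]
    rw [Finset.sum_congr rfl hstep]
    -- now pure arithmetic
    have hG : 0 < ∑ v ∈ W.erase r0, f v := by
      apply Finset.sum_pos (fun i _ => hf i)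
      obtain ⟨u, hu⟩ := hMne
      obtain ⟨huW, huR⟩ := Finset.mem_sdiff.mp hu
      exact ⟨u, Finset.mem_erase.mpr ⟨fun h => huR (h ▸ hr0), huW⟩⟩
    apply Nat.eq_of_mul_eq_mul_right hG
    set s := ∑ v ∈ R.erase r0, f v with hs
    set G := ∑ v ∈ W.erase r0, f v with hGdef
    set m := (W \ R).card with hm
    have hGsum : G = s + ∑ c ∈ W \ R, f c := by
      rw [hGdef, hWe, Finset.sum_union (hdisj _ (Finset.Subset.refl _))]
    have hF : ∑ v ∈ W, f v = f r0 + G := by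
      rw [hGdef, ← Finset.add_sum_erase W f hr0W]
    have hSR : ∑ r ∈ R, f r = f r0 + s := by
      rw [hs, ← Finset.add_sum_erase R f hr0]
    rw [Finset.sum_mul]
    have hptwise : ∀ C ∈ (W \ R).powerset,
        (f r0 ^ C.card * (if C = W \ R then 1 else
          (s + ∑ c ∈ C, f c) * G ^ (m - C.card - 1))) * G
        = f r0 ^ C.card * (s + ∑ c ∈ C, f c) * G ^ (m - C.card) := by
      intro C hC
      have hCM : C ⊆ W \ R := Finset.mem_powerset.mp hC
      by_cases hCeq : C = W \ R
      · rw [if_pos hCeq, hCeq]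
        have hz : m - (W \ R).card = 0 := by omega
        rw [hz, ← hGsum]
        ring
      · rw [if_neg hCeq]
        have hlt : C.card < m := by
          rw [hm]
          exact Finset.card_lt_card (Finset.ssubset_iff_subset_ne.mpr ⟨hCM, hCeq⟩)
        set k := m - C.card - 1 with hk
        have h2 : m - C.card = k + 1 := by omega
        rw [h2, pow_succ]
        ring
    rw [Finset.sum_congr rfl hptwise]
    rw [key_sum (W \ R) f (f r0) G s]
    rw [hSR, hF]
    have hm1 : W.card - R.card - 1 = m - 1 := by omega
    rw [hm1]
    set σ := ∑ c ∈ W \ R, f c with hσ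
    set p := m - 1 with hp
    have hmp : m = p + 1 := by omega
    rw [← hm, hmp, pow_succ, hGsum]
    ring
end Count
open SimpleGraph Finset

section TreeSide

variable {V : Type*} [DecidableEq V] {G : SimpleGraph V}

lemma isPath_concat {u v w : V} {p : G.Walk u v} (hp : p.IsPath) (h : G.Adj v w)
    (hw : w ∉ p.support) : (p.concat h).IsPath := by
  rw [← SimpleGraph.Walk.isPath_reverse_iff, SimpleGraph.Walk.reverse_concat]
  exact SimpleGraph.Walk.IsPath.cons hp.reverse
    (by simpa [SimpleGraph.Walk.support_reverse] using hw) (h := h.symm)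

lemma exists_path_length_dist (hc : G.Connected) (u v : V) :
    ∃ p : G.Walk u v, p.IsPath ∧ p.length = G.dist u v := by
  obtain ⟨p, hp⟩ := hc.exists_walk_length_eq_dist u v
  refine ⟨p.bypass, SimpleGraph.Walk.bypass_isPath p, le_antisymm ?_ ?_⟩
  · exact le_trans (SimpleGraph.Walk.length_bypass_le p) hp.le
  · exact SimpleGraph.dist_le p.bypass

lemma mem_support_dist_le {u v w : V} (p : G.Walk u v) (hw : w ∈ p.support) :
    G.dist u w ≤ p.length :=
  le_trans (SimpleGraph.dist_le (p.takeUntil w hw)) (SimpleGraph.Walk.length_takeUntil_le p hw)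

lemma mem_support_dist_lt {u v w : V} (p : G.Walk u v) (hw : w ∈ p.support) (hne : w ≠ v) :
    G.dist u w < p.length := by
  have hlen : (p.takeUntil w hw).length + (p.dropUntil w hw).length = p.length := by
    rw [← SimpleGraph.Walk.length_append, SimpleGraph.Walk.take_spec]
  have hdrop : 0 < (p.dropUntil w hw).length := by
    by_contra h
    push_neg at h
    interval_cases hd : (p.dropUntil w hw).length
    · cases hq : p.dropUntil w hw with
      | nil => exact hne rfl
      | cons h' q => rw [hq] at hd; simp at hd
  have := mem_support_dist_le (p.takeUntil w hw) (SimpleGraph.Walk.end_mem_support _)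
  omega

lemma tree_exists_parent (hG : G.IsTree) (r v : V) (hv : v ≠ r) :
    ∃ w, G.Adj v w ∧ G.dist r w + 1 = G.dist r v := by
  have hc := hG.isConnected
  obtain ⟨p, hp, hlen⟩ := exists_path_length_dist hc r v
  have hd : 0 < G.dist r v := hc.pos_dist_of_ne (Ne.symm hv)
  have h1 : p.length - 1 < p.length := by omega
  have hadj : G.Adj (p.getVert (p.length - 1)) v := by
    have := p.adj_getVert_succ h1
    rwa [show p.length - 1 + 1 = p.length by omega, p.getVert_length] at this
  set b := p.getVert (p.length - 1) with hb
  have hbs : b ∈ p.support :=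
    SimpleGraph.Walk.mem_support_iff_exists_getVert.mpr ⟨p.length - 1, rfl, by omega⟩
  have hblt : G.dist r b < p.length := mem_support_dist_lt p hbs hadj.ne
  have htri : G.dist r v ≤ G.dist r b + 1 := by
    have h2 := hc.dist_triangle (u := r) (v := b) (w := v)
    have h3 : G.dist b v = 1 := SimpleGraph.dist_eq_one_iff_adj.mpr hadj
    omega
  exact ⟨b, hadj.symm, by omega⟩

lemma tree_parent_unique (hG : G.IsTree) (r v w₁ w₂ : V)
    (h₁ : G.Adj v w₁) (hd₁ : G.dist r w₁ + 1 = G.dist r v)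
    (h₂ : G.Adj v w₂) (hd₂ : G.dist r w₂ + 1 = G.dist r v) : w₁ = w₂ := by
  obtain ⟨p₁, hp₁, hl₁⟩ := exists_path_length_dist hG.isConnected r w₁
  obtain ⟨p₂, hp₂, hl₂⟩ := exists_path_length_dist hG.isConnected r w₂
  have hv₁ : v ∉ p₁.support := by
    intro hmem
    have := mem_support_dist_le p₁ hmem
    omega
  have hv₂ : v ∉ p₂.support := by
    intro hmem
    have := mem_support_dist_le p₂ hmem
    omega
  have hq₁ : (p₁.concat h₁.symm).IsPath := isPath_concat hp₁ h₁.symm hv₁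
  have hq₂ : (p₂.concat h₂.symm).IsPath := isPath_concat hp₂ h₂.symm hv₂
  obtain ⟨p, _, hup⟩ := hG.existsUnique_path r v
  have e : p₁.concat h₁.symm = p₂.concat h₂.symm := (hup _ hq₁).trans (hup _ hq₂).symm
  have he : (p₁.concat h₁.symm).edges = (p₂.concat h₂.symm).edges := by rw [e]
  rw [SimpleGraph.Walk.edges_concat, SimpleGraph.Walk.edges_concat] at he
  have hlast := congrArg List.getLast? he
  simp only [List.concat_eq_append, List.getLast?_concat] at hlast
  have hS : s(w₁, v) = s(w₂, v) := by
    injection hlast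
  rcases Sym2.eq_iff.mp hS with ⟨h, -⟩ | ⟨ha, hb⟩
  · exact h
  · exact absurd ha.symm h₁.ne

lemma tree_adj_dist_ne (hG : G.IsTree) (r v w : V) (hadj : G.Adj v w) :
    G.dist r v ≠ G.dist r w := by
  intro heq
  obtain ⟨p, hp, hl⟩ := exists_path_length_dist hG.isConnected r v
  have hw : w ∉ p.support := by
    intro hmem
    have h1 := mem_support_dist_lt p hmem (fun h => hadj.ne h.symm)
    omega
  have hq : (p.concat hadj).IsPath := isPath_concat hp hadj hw
  obtain ⟨p₂, hp₂, hl₂⟩ := exists_path_length_dist hG.isConnected r w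
  obtain ⟨p₀, _, hup⟩ := hG.existsUnique_path r w
  have e : p.concat hadj = p₂ := (hup _ hq).trans (hup _ hp₂).symm
  have hle : (p.concat hadj).length = p₂.length := by rw [e]
  rw [SimpleGraph.Walk.length_concat] at hle
  omega

lemma tree_adj_dist_succ (hG : G.IsTree) (r v w : V) (hadj : G.Adj v w)
    (hlt : G.dist r v < G.dist r w) : G.dist r w = G.dist r v + 1 := by
  have h2 := hG.isConnected.dist_triangle (u := r) (v := v) (w := w)
  have h3 : G.dist v w = 1 := SimpleGraph.dist_eq_one_iff_adj.mpr hadj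
  omega

end TreeSide
open SimpleGraph Finset

section ForestSide

variable {V : Type*} [DecidableEq V]

noncomputable def fdep (π : V → V) (r : V) (hreach : ∀ v, ∃ k, π^[k] v = r) (v : V) : ℕ :=
  Nat.find (hreach v)

variable {π : V → V} {r : V}

lemma fdep_spec (hreach : ∀ v, ∃ k, π^[k] v = r) (v : V) :
    π^[fdep π r hreach v] v = r := Nat.find_spec (hreach v)

lemma fdep_zero (hreach : ∀ v, ∃ k, π^[k] v = r) (v : V) :
    fdep π r hreach v = 0 ↔ v = r := by
  unfold fdep
  rw [Nat.find_eq_zero]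
  simp

lemma pi_ne (hreach : ∀ v, ∃ k, π^[k] v = r) {v : V} (hv : v ≠ r) : π v ≠ v := by
  intro h
  obtain ⟨k, hk⟩ := hreach v
  rw [Function.iterate_fixed h] at hk
  exact hv hk

lemma fdep_succ (hreach : ∀ v, ∃ k, π^[k] v = r) {v : V} (hv : v ≠ r) :
    fdep π r hreach (π v) + 1 = fdep π r hreach v := by
  have h0 : fdep π r hreach v ≠ 0 := fun h => hv ((fdep_zero hreach v).mp h)
  have hs : π^[fdep π r hreach v] v = r := fdep_spec hreach v
  have h1 : π^[fdep π r hreach v - 1] (π v) = r := by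
    have he : fdep π r hreach v - 1 + 1 = fdep π r hreach v := by omega
    rw [← he] at hs
    rw [← Function.iterate_succ_apply]
    exact hs
  have h2 : fdep π r hreach (π v) ≤ fdep π r hreach v - 1 := Nat.find_min' _ h1
  have h3 : fdep π r hreach v ≤ fdep π r hreach (π v) + 1 := by
    apply Nat.find_min'
    rw [Function.iterate_succ_apply]
    exact fdep_spec hreach (π v)
  omega

def fgraph (π : V → V) : SimpleGraph V := SimpleGraph.fromRel (fun a b => π a = b)

lemma fgraph_adj (π : V → V) (a b : V) :
    (fgraph π).Adj a b ↔ a ≠ b ∧ (π a = b ∨ π b = a) := by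
  simp [fgraph, SimpleGraph.fromRel_adj]

lemma adj_parent (hreach : ∀ v, ∃ k, π^[k] v = r) {v : V} (hv : v ≠ r) :
    (fgraph π).Adj v (π v) := by
  rw [fgraph_adj]
  exact ⟨(pi_ne hreach hv).symm, Or.inl rfl⟩

lemma exists_walk_dep (hreach : ∀ v, ∃ k, π^[k] v = r) :
    ∀ (n : ℕ) (v : V), fdep π r hreach v = n →
      ∃ p : (fgraph π).Walk v r, p.length = n := by
  intro n
  induction n using Nat.strong_induction_on with
  | _ n ih =>
    intro v hv
    by_cases hvr : v = r
    · subst hvr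
      refine ⟨SimpleGraph.Walk.nil, ?_⟩
      rw [← hv, (fdep_zero hreach _).mpr rfl]
      rfl
    · have hd := fdep_succ hreach hvr
      obtain ⟨q, hq⟩ := ih (fdep π r hreach (π v)) (by omega) (π v) rfl
      exact ⟨SimpleGraph.Walk.cons (adj_parent hreach hvr) q, by simp [hq]; omega⟩

lemma fgraph_connected (hπr : π r = r) (hreach : ∀ v, ∃ k, π^[k] v = r) :
    (fgraph π).Connected := by
  rw [SimpleGraph.connected_iff]
  refine ⟨fun u v => ?_, ⟨r⟩⟩
  obtain ⟨p, _⟩ := exists_walk_dep hreach (fdep π r hreach u) u rfl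
  obtain ⟨q, _⟩ := exists_walk_dep hreach (fdep π r hreach v) v rfl
  exact p.reachable.trans q.reachable.symm

lemma fdep_le_walk (hπr : π r = r) (hreach : ∀ v, ∃ k, π^[k] v = r) {v : V} :
    ∀ {a : V} (p : (fgraph π).Walk a v),
      fdep π r hreach v ≤ fdep π r hreach a + p.length := by
  intro a p
  induction p with
  | nil => simp
  | cons hadj q ihq =>
    rename_i a b c
    have hstep : fdep π r hreach b ≤ fdep π r hreach a + 1 := by
      rcases (fgraph_adj π a b).mp hadj with ⟨hne, h | h⟩
      · by_cases har : a = r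
        · subst har
          rw [hπr] at h
          exact absurd h hne
        · have := fdep_succ hreach har
          rw [h] at this
          omega
      · by_cases hbr : b = r
        · subst hbr
          rw [(fdep_zero hreach _).mpr rfl]
          omega
        · have := fdep_succ hreach hbr
          rw [h] at this
          omega
    have := ihq
    simp only [SimpleGraph.Walk.length_cons]
    omega

lemma fgraph_dist (hπr : π r = r) (hreach : ∀ v, ∃ k, π^[k] v = r) (v : V) :
    (fgraph π).dist r v = fdep π r hreach v := by
  apply le_antisymm
  · obtain ⟨p, hp⟩ := exists_walk_dep hreach (fdep π r hreach v) v rfl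
    rw [SimpleGraph.dist_comm]
    exact hp ▸ SimpleGraph.dist_le p
  · obtain ⟨p, hp⟩ := (fgraph_connected hπr hreach).exists_walk_length_eq_dist r v
    have := fdep_le_walk hπr hreach (v := v) (a := r) p
    rw [(fdep_zero hreach r).mpr rfl] at this
    omega

lemma fgraph_acyclic (hπr : π r = r) (hreach : ∀ v, ∃ k, π^[k] v = r) :
    (fgraph π).IsAcyclic := by
  intro v c hc
  have hsupne : c.support.toFinset.Nonempty :=
    ⟨v, List.mem_toFinset.mpr c.start_mem_support⟩
  obtain ⟨x, hxT, hxmax⟩ := Finset.exists_max_image c.support.toFinset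
    (fdep π r hreach) hsupne
  have hx : x ∈ c.support := List.mem_toFinset.mp hxT
  have hmax : ∀ u ∈ c.support, fdep π r hreach u ≤ fdep π r hreach x :=
    fun u hu => hxmax u (List.mem_toFinset.mpr hu)
  have hc' := hc.rotate hx
  have hmax' : ∀ u ∈ (c.rotate x hx).support, fdep π r hreach u ≤ fdep π r hreach x := by
    intro u hu
    rw [SimpleGraph.Walk.support_eq_cons] at hu
    rcases List.mem_cons.mp hu with rfl | hu'
    · exact le_refl _
    · have := (SimpleGraph.Walk.support_rotate c x hx).mem_iff.mp hu'
      apply hmax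
      rw [SimpleGraph.Walk.support_eq_cons]
      exact List.mem_cons_of_mem _ this
  obtain ⟨c'', hc'', hmax''⟩ : ∃ c'' : (fgraph π).Walk x x, c''.IsCycle ∧
      (∀ u ∈ c''.support, fdep π r hreach u ≤ fdep π r hreach x) :=
    ⟨c.rotate x hx, hc', hmax'⟩
  clear hc' hmax'
  obtain ⟨y, hadjxy, p, hcons⟩ := SimpleGraph.Walk.not_nil_iff.mp hc''.not_nil
  rw [hcons] at hc'' hmax''
  have hy : fdep π r hreach y ≤ fdep π r hreach x := by
    apply hmax''
    rw [SimpleGraph.Walk.support_cons]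
    exact List.mem_cons_of_mem _ p.start_mem_support
  have h3 := hc''.three_le_length
  rw [SimpleGraph.Walk.length_cons] at h3
  have hnd := hc''.isCircuit.isTrail.edges_nodup
  rw [SimpleGraph.Walk.edges_cons] at hnd
  obtain ⟨hnotmem, -⟩ := List.nodup_cons.mp hnd
  have hprevnotnil : ¬ p.reverse.Nil := by
    rw [SimpleGraph.Walk.not_nil_iff_lt_length, SimpleGraph.Walk.length_reverse]
    omega
  obtain ⟨z, hadjxz, q, hrev⟩ := SimpleGraph.Walk.not_nil_iff.mp hprevnotnil
  have hmemz : s(x, z) ∈ p.edges := by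
    have h1 : s(x, z) ∈ p.reverse.edges := by
      rw [hrev, SimpleGraph.Walk.edges_cons]
      exact List.mem_cons_self
    rwa [SimpleGraph.Walk.edges_reverse, List.mem_reverse] at h1
  have hyz : y ≠ z := by
    rintro rfl
    exact hnotmem hmemz
  have hzmem : z ∈ p.support := by
    have h1 : z ∈ p.reverse.support := by
      rw [hrev, SimpleGraph.Walk.support_cons]
      exact List.mem_cons_of_mem _ q.start_mem_support
    rwa [SimpleGraph.Walk.support_reverse, List.mem_reverse] at h1
  have hz : fdep π r hreach z ≤ fdep π r hreach x := by
    apply hmax''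
    rw [SimpleGraph.Walk.support_cons]
    exact List.mem_cons_of_mem _ hzmem
  have hparent : ∀ w : V, (fgraph π).Adj x w →
      fdep π r hreach w ≤ fdep π r hreach x → π x = w := by
    intro w hadj hle
    rcases (fgraph_adj π x w).mp hadj with ⟨hne, h | h⟩
    · exact h
    · exfalso
      have hwr : w ≠ r := by
        rintro rfl
        rw [hπr] at h
        exact hne h.symm
      have := fdep_succ hreach hwr
      rw [h] at this
      omega
  have hxy := hparent y hadjxy hy
  have hxz := hparent z hadjxz hz
  exact hyz (hxy ▸ hxz ▸ rfl)


lemma fgraph_isTree (hπr : π r = r) (hreach : ∀ v, ∃ k, π^[k] v = r) :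
    (fgraph π).IsTree :=
  ⟨fgraph_connected hπr hreach, fgraph_acyclic hπr hreach⟩

end ForestSide
open SimpleGraph Finset

section PartA

variable {V : Type*} [Fintype V] [DecidableEq V] {π : V → V} {r : V}

lemma no_both_parents (hπr : π r = r) (hreach : ∀ v, ∃ k, π^[k] v = r)
    {a b : V} (hne : a ≠ b) (h1 : π a = b) (h2 : π b = a) : False := by
  by_cases har : a = r
  · subst har
    rw [hπr] at h1
    exact hne h1
  · by_cases hbr : b = r
    · subst hbr
      rw [hπr] at h2
      exact hne h2.symm
    · have q1 := fdep_succ hreach har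
      have q2 := fdep_succ hreach hbr
      rw [h1] at q1
      rw [h2] at q2
      omega

def upβfun (π : V → V) (β : V → ℕ) : Sym2 V → ℕ :=
  Sym2.lift ⟨fun a b => (if π b = a then β b else 0) + (if π a = b then β a else 0),
    fun _ _ => add_comm _ _⟩

lemma upβ_eval (π : V → V) (β : V → ℕ) (a b : V) :
    upβfun π β s(a, b) = (if π b = a then β b else 0) + (if π a = b then β a else 0) :=
  Sym2.lift_mk _ _ _

lemma upβ_child (hπr : π r = r) (hreach : ∀ v, ∃ k, π^[k] v = r) {β : V → ℕ}
    {v : V} (hv : v ≠ r) : upβfun π β s(v, π v) = β v := by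
  rw [upβ_eval]
  have h1 : ¬ (π (π v) = v) := by
    intro h
    exact no_both_parents hπr hreach (Ne.symm (pi_ne hreach hv)) rfl h
  rw [if_neg h1, if_pos rfl]
  omega

lemma upβ_zero_of_notedge (hπr : π r = r) (hreach : ∀ v, ∃ k, π^[k] v = r) {β : V → ℕ}
    (hβr : β r = 0) {e : Sym2 V} (he : e ∉ (fgraph π).edgeSet) : upβfun π β e = 0 := by
  revert he
  refine Sym2.ind (fun a b => ?_) e
  intro he
  rw [SimpleGraph.mem_edgeSet, fgraph_adj] at he
  rw [upβ_eval]
  by_cases hab : a = b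
  · subst hab
    by_cases hpa : π a = a
    · have har : a = r := by
        by_contra h
        exact pi_ne hreach h hpa
      subst har
      simp [hpa, hβr]
    · simp [hpa]
  · have h1 : ¬ π a = b := fun h => he ⟨hab, Or.inl h⟩
    have h2 : ¬ π b = a := fun h => he ⟨hab, Or.inr h⟩
    simp [h1, h2]

lemma up_label_cond (f : V → ℕ) (hπr : π r = r) (hreach : ∀ v, ∃ k, π^[k] v = r) {β : V → ℕ}
    (hlab : ∀ v, v ≠ r → β v ∈ Finset.Icc 1 (f (π v))) :
    ∀ v w, (fgraph π).Adj v w → (fgraph π).dist r v < (fgraph π).dist r w →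
      upβfun π β s(v, w) ∈ Finset.Icc 1 (f v) := by
  intro v w hadj hlt
  rw [fgraph_dist hπr hreach, fgraph_dist hπr hreach] at hlt
  have hwr : w ≠ r := by
    rintro rfl
    rw [(fdep_zero hreach _).mpr rfl] at hlt
    omega
  have hπw : π w = v := by
    rcases (fgraph_adj π v w).mp hadj with ⟨hne, h | h⟩
    · exfalso
      by_cases hvr : v = r
      · subst hvr
        rw [hπr] at h
        exact hwr h.symm
      · have := fdep_succ hreach hvr
        rw [h] at this
        omega
    · exact h
  have heval : upβfun π β s(v, w) = β w := by
    have h0 := upβ_child hπr hreach (β := β) hwr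
    rw [hπw] at h0
    rw [← h0, Sym2.eq_swap]
  rw [heval, ← hπw]
  exact hlab w hwr

noncomputable def up (f : V → ℕ) (r : V) (x : MForest f Finset.univ {r}) :
    {p : SimpleGraph V × (Sym2 V → ℕ) //
      p.1.IsTree ∧
      (∀ v w, p.1.Adj v w → p.1.dist r v < p.1.dist r w →
        p.2 s(v, w) ∈ Finset.Icc 1 (f v)) ∧
      (∀ e, e ∉ p.1.edgeSet → p.2 e = 0)} :=
  ⟨(fgraph x.1.1, upβfun x.1.1 x.1.2), by
    obtain ⟨⟨π, β⟩, h1, h2, h3⟩ := x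
    have hrr : r ∉ Finset.univ \ ({r} : Finset V) := by simp
    have hπr : π r = r := (h1 r hrr).1
    have hβr : β r = 0 := (h1 r hrr).2
    have hreach : ∀ v, ∃ k, π^[k] v = r := by
      intro v
      have := h3 v (Finset.mem_univ v)
      simpa using this
    have hlab : ∀ v, v ≠ r → β v ∈ Finset.Icc 1 (f (π v)) := by
      intro v hv
      exact (h2 v (by simp [hv])).2
    exact ⟨fgraph_isTree hπr hreach, up_label_cond f hπr hreach hlab,
      fun e he => upβ_zero_of_notedge hπr hreach hβr he⟩⟩

end PartA
open SimpleGraph Finset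

section PartA2

variable {V : Type*} [Fintype V] [DecidableEq V]

lemma up_bijective (f : V → ℕ) (r : V) : Function.Bijective (up f r) := by
  constructor
  · rintro ⟨⟨π₁, β₁⟩, g1₁, g2₁, g3₁⟩ ⟨⟨π₂, β₂⟩, g1₂, g2₂, g3₂⟩ heq
    have hrr : r ∉ Finset.univ \ ({r} : Finset V) := by simp
    have hπr₁ : π₁ r = r := (g1₁ r hrr).1
    have hβr₁ : β₁ r = 0 := (g1₁ r hrr).2
    have hπr₂ : π₂ r = r := (g1₂ r hrr).1
    have hβr₂ : β₂ r = 0 := (g1₂ r hrr).2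
    have hreach₁ : ∀ v, ∃ k, π₁^[k] v = r := fun v => by
      simpa using g3₁ v (Finset.mem_univ v)
    have hreach₂ : ∀ v, ∃ k, π₂^[k] v = r := fun v => by
      simpa using g3₂ v (Finset.mem_univ v)
    have heq' := congrArg Subtype.val heq
    simp only [up, Prod.mk.injEq] at heq'
    obtain ⟨hG, hβ⟩ := heq'
    have hdep : ∀ u, fdep π₁ r hreach₁ u = fdep π₂ r hreach₂ u := fun u => by
      rw [← fgraph_dist hπr₁ hreach₁, ← fgraph_dist hπr₂ hreach₂, hG]
    have hππ : π₁ = π₂ := by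
      funext v
      by_cases hv : v = r
      · subst hv
        rw [hπr₁, hπr₂]
      · have hadj : (fgraph π₁).Adj v (π₁ v) := adj_parent hreach₁ hv
        rw [hG] at hadj
        rcases (fgraph_adj π₂ v (π₁ v)).mp hadj with ⟨hne, h | h⟩
        · exact h.symm
        · exfalso
          by_cases hpv : π₁ v = r
          · rw [hpv, hπr₂] at h
            exact hv h.symm
          · have q1 := fdep_succ hreach₁ hv
            have q2 := fdep_succ hreach₂ hpv
            rw [h] at q2
            rw [hdep v, hdep (π₁ v)] at q1
            omega
    have hββ : β₁ = β₂ := by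
      funext v
      by_cases hv : v = r
      · subst hv
        rw [hβr₁, hβr₂]
      · have e1 := upβ_child hπr₁ hreach₁ (β := β₁) hv
        have e2 := upβ_child hπr₂ hreach₂ (β := β₂) hv
        rw [← e1, ← e2, hβ, hππ]
    apply Subtype.ext
    exact Prod.ext hππ hββ
  · rintro ⟨⟨G, βs⟩, hT, hcond, hzero⟩
    replace hT : G.IsTree := hT
    replace hcond : ∀ v w, G.Adj v w → G.dist r v < G.dist r w →
        βs s(v, w) ∈ Finset.Icc 1 (f v) := hcond
    replace hzero : ∀ e, e ∉ G.edgeSet → βs e = 0 := hzero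
    have hconn := hT.isConnected
    set pa : V → V := fun v => if h : v = r then r else
      Classical.choose (tree_exists_parent hT r v h) with hpadef
    have hpar : pa r = r := by simp [hpadef]
    have hspec : ∀ v, v ≠ r → G.Adj v (pa v) ∧ G.dist r (pa v) + 1 = G.dist r v := by
      intro v hv
      have : pa v = Classical.choose (tree_exists_parent hT r v hv) := by
        simp [hpadef, hv]
      rw [this]
      exact Classical.choose_spec (tree_exists_parent hT r v hv)
    have hreach : ∀ v, ∃ k, pa^[k] v = r := by
      have key : ∀ (n : ℕ) (v : V), G.dist r v = n → ∃ k, pa^[k] v = r := by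
        intro n
        induction n using Nat.strong_induction_on with
        | _ n ih =>
          intro v hv
          by_cases hvr : v = r
          · exact ⟨0, hvr⟩
          · have hpos : 0 < G.dist r v := hconn.pos_dist_of_ne (Ne.symm hvr)
            have hd := (hspec v hvr).2
            obtain ⟨k, hk⟩ := ih (G.dist r (pa v)) (by omega) (pa v) rfl
            exact ⟨k + 1, by rw [Function.iterate_succ_apply]; exact hk⟩
      exact fun v => key (G.dist r v) v rfl
    set β' : V → ℕ := fun v => if v = r then 0 else βs s(v, pa v) with hβ'def
    have hβ'r : β' r = 0 := by simp [hβ'def]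
    have hβ'v : ∀ v, v ≠ r → β' v = βs s(v, pa v) := by
      intro v hv
      simp [hβ'def, hv]
    -- graph equality first
    have hGeq : fgraph pa = G := by
      ext v w
      rw [fgraph_adj]
      constructor
      · rintro ⟨hne, h | h⟩
        · have hvr : v ≠ r := by
            rintro rfl
            rw [hpar] at h
            exact hne h
          rw [← h]
          exact (hspec v hvr).1
        · have hwr : w ≠ r := by
            rintro rfl
            rw [hpar] at h
            exact hne h.symm
          rw [← h]
          exact ((hspec w hwr).1).symm
      · intro hadj
        have hne := hadj.ne
        rcases Nat.lt_or_ge (G.dist r v) (G.dist r w) with hlt | hge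
        · have hwr : w ≠ r := by
            rintro rfl
            rw [SimpleGraph.dist_self] at hlt
            omega
          have hsucc := tree_adj_dist_succ hT r v w hadj hlt
          have hpw : pa w = v :=
            tree_parent_unique hT r w (pa w) v (hspec w hwr).1 (hspec w hwr).2
              hadj.symm (by omega)
          exact ⟨hne, Or.inr hpw⟩
        · have hne' := tree_adj_dist_ne hT r v w hadj
          have hlt : G.dist r w < G.dist r v := by omega
          have hvr : v ≠ r := by
            rintro rfl
            rw [SimpleGraph.dist_self] at hlt
            omega
          have hsucc := tree_adj_dist_succ hT r w v hadj.symm hlt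
          have hpv : pa v = w :=
            tree_parent_unique hT r v (pa v) w (hspec v hvr).1 (hspec v hvr).2
              hadj (by omega)
          exact ⟨hne, Or.inl hpv⟩
    refine ⟨⟨⟨pa, β'⟩, ?_, ?_, ?_⟩, ?_⟩
    · intro v hv
      have hvr : v = r := by simpa using hv
      subst hvr
      exact ⟨hpar, hβ'r⟩
    · intro v hv
      have hvr : v ≠ r := by simpa using hv
      refine ⟨Finset.mem_univ _, ?_⟩
      show β' v ∈ Finset.Icc 1 (f (pa v))
      rw [hβ'v v hvr]
      have h1 := (hspec v hvr).1
      have h2 := (hspec v hvr).2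
      have := hcond (pa v) v h1.symm (by omega)
      rwa [Sym2.eq_swap]
    · intro v _
      obtain ⟨k, hk⟩ := hreach v
      exact ⟨k, by simpa using hk⟩
    · apply Subtype.ext
      simp only [up]
      refine Prod.ext hGeq ?_
      funext e
      show upβfun pa β' e = βs e
      by_cases he : e ∈ G.edgeSet
      · revert he
        refine Sym2.ind (fun a b => ?_) e
        intro he
        rw [SimpleGraph.mem_edgeSet] at he
        rcases Nat.lt_or_ge (G.dist r a) (G.dist r b) with hlt | hge
        · have hbr : b ≠ r := by
            rintro rfl
            rw [SimpleGraph.dist_self] at hlt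
            omega
          have hsucc := tree_adj_dist_succ hT r a b he hlt
          have hpb : pa b = a :=
            tree_parent_unique hT r b (pa b) a (hspec b hbr).1 (hspec b hbr).2
              he.symm (by omega)
          have e1 := upβ_child hpar hreach (β := β') hbr
          rw [hpb] at e1
          rw [Sym2.eq_swap, e1, hβ'v b hbr, hpb, Sym2.eq_swap]
        · have hne' := tree_adj_dist_ne hT r a b he
          have hlt : G.dist r b < G.dist r a := by omega
          have har : a ≠ r := by
            rintro rfl
            rw [SimpleGraph.dist_self] at hlt
            omega
          have hsucc := tree_adj_dist_succ hT r b a he.symm hlt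
          have hpa2 : pa a = b :=
            tree_parent_unique hT r a (pa a) b (hspec a har).1 (hspec a har).2
              he (by omega)
          have e1 := upβ_child hpar hreach (β := β') har
          rw [hpa2] at e1
          rw [e1, hβ'v a har, hpa2]
      · rw [hzero e he]
        apply upβ_zero_of_notedge hpar hreach hβ'r
        rwa [hGeq]

theorem partA_card (f : V → ℕ) (r : V) :
    Nat.card {p : SimpleGraph V × (Sym2 V → ℕ) //
        p.1.IsTree ∧
        (∀ v w, p.1.Adj v w → p.1.dist r v < p.1.dist r w →
          p.2 s(v, w) ∈ Finset.Icc 1 (f v)) ∧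
        (∀ e, e ∉ p.1.edgeSet → p.2 e = 0)} = Nat.card (MForest f Finset.univ {r}) :=
  (Nat.card_congr (Equiv.ofBijective _ (up_bijective f r))).symm

end PartA2

/-- **Proposition 2.2.** Let `S` be a set of `n ≥ 1` integers with `0 ∉ S` and let
`f : S ∪ {0} → ℕ` assign a positive integer to each vertex (so `f₀ = f(0)` and `f_i = f(s_i)`).
A multi-noded rooted tree on `S ∪ {0}` of vertex data `f` is a pair `(T, β)` where `T` is a
tree on the vertex set `S ∪ {0}` (rooted at `0`) and `β` assigns to each edge `e` of `T`
a number in `{1, …, f v}`, where `v` is the parent end of `e` (the end closer to the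
root `0`); here `β` is extended by `0` off the edges of `T`. The number of multi-noded
rooted trees is `(∑_{j} f_j)^(n-1) · f₀`. -/
theorem multiNodedRootedTree_card (n : ℕ) (hn : 1 ≤ n)
    (S : Finset ℤ) (hS : (0 : ℤ) ∉ S) (hcard : S.card = n)
    (f : ↥(insert (0 : ℤ) S) → ℕ) (hf : ∀ v, 1 ≤ f v) :
    Nat.card {p : SimpleGraph ↥(insert (0 : ℤ) S) × (Sym2 ↥(insert (0 : ℤ) S) → ℕ) //
        p.1.IsTree ∧
        (∀ v w, p.1.Adj v w →
          p.1.dist ⟨0, Finset.mem_insert_self 0 S⟩ v <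
            p.1.dist ⟨0, Finset.mem_insert_self 0 S⟩ w →
          p.2 s(v, w) ∈ Finset.Icc 1 (f v)) ∧
        (∀ e, e ∉ p.1.edgeSet → p.2 e = 0)} =
      (∑ v, f v) ^ (n - 1) * f ⟨0, Finset.mem_insert_self 0 S⟩ := by
  classical
  set r : ↥(insert (0 : ℤ) S) := ⟨0, Finset.mem_insert_self 0 S⟩ with hr
  rw [partA_card f r]
  rw [mforest_card f hf Finset.univ {r} (Finset.subset_univ _)]
  have hcardV : Fintype.card ↥(insert (0 : ℤ) S) = n + 1 := by
    rw [Fintype.card_coe, Finset.card_insert_of_notMem hS, hcard]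
  have hne : (Finset.univ : Finset ↥(insert (0 : ℤ) S)) ≠ {r} := by
    intro h
    have h2 := congrArg Finset.card h
    rw [Finset.card_univ, hcardV, Finset.card_singleton] at h2
    omega
  rw [if_neg hne]
  rw [Finset.sum_singleton, Finset.card_univ, hcardV, Finset.card_singleton]
  have he : n + 1 - 1 - 1 = n - 1 := by omega
  rw [he, mul_comm]
end

section
/- Let τ ∈ S_d be a d-cycle and let (σ_1, ..., σ_{r-1}) be a factorization of τ of type (e_1, ..., e_{r-1}). Then its factorization graph G is connected, and ∑_{j=1}^{r-1} (e_j − 1) = d − 1 if and only if G is a tree. -/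
open Equiv Equiv.Perm SimpleGraph

/-- Every edge of `G` joins an `S`-vertex (a `Sum.inl`) to a `[d]`-vertex (a `Sum.inr`). -/
def IsBipartiteSD {k d : ℕ} (G : SimpleGraph (Fin k ⊕ Fin d)) : Prop :=
  (∀ a b : Fin k, ¬ G.Adj (Sum.inl a) (Sum.inl b)) ∧
    ∀ x y : Fin d, ¬ G.Adj (Sum.inr x) (Sum.inr y)

/-- `G ∈ 𝒢_S(d, r; e₁, …, e_{r-1})`: an `S`-`[d]` bipartite graph in which the `S`-vertex
`s_j` has degree `e j`. -/
def MemGS {k d : ℕ} (G : SimpleGraph (Fin k ⊕ Fin d)) (e : Fin k → ℕ) : Prop :=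
  IsBipartiteSD G ∧ ∀ j : Fin k, (G.neighborSet (Sum.inl j)).ncard = e j

/-- `(σ₁, …, σ_{r-1})` is a factorization of `τ` of type `(e₁, …, e_{r-1})`:
each `σ j` is an `e j`-cycle and the ordered product is `τ`. -/
def IsFactorization {k d : ℕ} (τ : Perm (Fin d)) (e : Fin k → ℕ)
    (σ : Fin k → Perm (Fin d)) : Prop :=
  (∀ j, (σ j).IsCycle ∧ (σ j).support.card = e j) ∧ (List.ofFn σ).prod = τ

/-- The factorization graph of `σ`: the `S`-vertex `s_j` is joined to the points of the
support of `σ j`. -/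
def facGraph {k d : ℕ} (σ : Fin k → Perm (Fin d)) : SimpleGraph (Fin k ⊕ Fin d) :=
  SimpleGraph.fromRel (fun u v => ∃ (j : Fin k) (x : Fin d),
    u = Sum.inl j ∧ v = Sum.inr x ∧ x ∈ (σ j).support)

/-- Delete all edges incident to `v` (the components of the other vertices are then
exactly the components obtained by removing the vertex `v`). -/
def delV {W : Type*} (G : SimpleGraph W) (v : W) : SimpleGraph W :=
  G.deleteEdges {e : Sym2 W | v ∈ e}

/-- The `[d]`-vertex set of the connected component of `w` after removing the vertex `v`. -/
def compD {k d : ℕ} (G : SimpleGraph (Fin k ⊕ Fin d)) (v w : Fin k ⊕ Fin d) : Set (Fin d) :=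
  {y : Fin d | (delV G v).Reachable w (Sum.inr y)}

/-- `P` is a consecutive piece of the circle `C_γ`. -/
def IsConsecPiece {d : ℕ} (γ : Perm (Fin d)) (P : Set (Fin d)) : Prop :=
  ∃ x ∈ γ.support, ∃ m : ℕ, 1 ≤ m ∧ P = (fun i : ℕ => (γ ^ i) x) '' Set.Iio m

/-- The counterclockwise position of `y` on `C_γ`, starting from `ν`. -/
noncomputable def ccwPos {d : ℕ} (γ : Perm (Fin d)) (ν y : Fin d) : ℕ :=
  sInf {n : ℕ | 1 ≤ n ∧ (γ⁻¹ ^ n) ν = y}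

/-- The `S`-vertex `s` has the consecutive partition property (CPP) on `(G, γ)`: the
`[d]`-vertex sets of the components obtained by removing `s` partition `C_γ` into
consecutive pieces. -/
def HasCPP {k d : ℕ} (G : SimpleGraph (Fin k ⊕ Fin d)) (γ : Perm (Fin d)) (s : Fin k) : Prop :=
  ∀ x ∈ γ.support, IsConsecPiece γ (compD G (Sum.inl s) (Sum.inr x))

/-- The `[d]`-vertex `ν` has the counterclockwise increasing consecutive partition property
(CICPP) on `(G, γ)`: the `[d]`-vertex sets of the components obtained by removing `ν`
partition `C_γ ∖ {ν}` into consecutive pieces, and reading counterclockwise from `ν`, the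
pieces occur in the order of the increasing `S`-vertices incident to `ν`. -/
def HasCICPP {k d : ℕ} (G : SimpleGraph (Fin k ⊕ Fin d)) (γ : Perm (Fin d)) (ν : Fin d) :
    Prop :=
  (∀ j : Fin k, G.Adj (Sum.inr ν) (Sum.inl j) →
    IsConsecPiece γ (compD G (Sum.inr ν) (Sum.inl j))) ∧
  (∀ j j' : Fin k, G.Adj (Sum.inr ν) (Sum.inl j) → G.Adj (Sum.inr ν) (Sum.inl j') → j ≠ j' →
    Disjoint (compD G (Sum.inr ν) (Sum.inl j)) (compD G (Sum.inr ν) (Sum.inl j'))) ∧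
  (∀ y ∈ γ.support, y ≠ ν →
    ∃ j : Fin k, G.Adj (Sum.inr ν) (Sum.inl j) ∧ y ∈ compD G (Sum.inr ν) (Sum.inl j)) ∧
  (∀ j j' : Fin k, G.Adj (Sum.inr ν) (Sum.inl j) → G.Adj (Sum.inr ν) (Sum.inl j') → j < j' →
    ∀ y ∈ compD G (Sum.inr ν) (Sum.inl j), ∀ y' ∈ compD G (Sum.inr ν) (Sum.inl j'),
      ccwPos γ ν y < ccwPos γ ν y')


open Finset in
lemma aux_conn_card {V : Type*} [Fintype V] {G : SimpleGraph V} [Fintype G.edgeSet]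
    (h : G.Connected) : Fintype.card V ≤ G.edgeFinset.card + 1 := by
  classical
  obtain ⟨v0⟩ := h.nonempty
  choose f hf using fun w => (h.preconnected w v0).exists_walk_length_eq_dist
  have hne : ∀ w : V, w ≠ v0 → ¬ (f w).Nil := fun w hw => Walk.not_nil_of_ne hw
  have hkey : ∀ w, w ≠ v0 → G.dist ((f w).getVert 1) v0 < G.dist w v0 := by
    intro w hw
    have h1 : G.dist ((f w).getVert 1) v0 ≤ (f w).tail.length := dist_le _
    have h2 := Walk.length_tail_add_one (hne w hw)
    have h3 := hf w
    omega
  have hcard : (Finset.univ.erase v0).card ≤ G.edgeFinset.card := by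
    apply Finset.card_le_card_of_injOn (fun w => s((w : V), (f w).getVert 1))
    · intro a ha
      rw [Finset.mem_coe, mem_edgeFinset, mem_edgeSet]
      exact (f a).adj_snd (hne a (Finset.ne_of_mem_erase ha))
    · intro a ha b hb hab
      have ha' := Finset.ne_of_mem_erase ha
      have hb' := Finset.ne_of_mem_erase hb
      rw [Sym2.eq_iff] at hab
      rcases hab with ⟨rfl, -⟩ | ⟨h1, h2⟩
      · rfl
      · exfalso
        have k1 := hkey a ha'
        have k2 := hkey b hb'
        rw [h2] at k1; rw [← h1] at k2
        omega
  have h1 : (Finset.univ.erase v0).card = Fintype.card V - 1 := by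
    rw [Finset.card_erase_of_mem (Finset.mem_univ _), Finset.card_univ]
  have h2 : 1 ≤ Fintype.card V := Fintype.card_pos_iff.mpr h.nonempty
  omega

lemma aux_cyclic_card {V : Type*} [Fintype V] {G : SimpleGraph V} [Fintype G.edgeSet]
    (h : G.Connected) (hc : ¬ G.IsAcyclic) : Fintype.card V ≤ G.edgeFinset.card := by
  classical
  rw [SimpleGraph.IsAcyclic] at hc
  push_neg at hc
  obtain ⟨u, c, hcyc⟩ := hc
  have hlen : c.edges ≠ [] := by
    have h3 := hcyc.three_le_length
    intro hnil
    have := c.length_edges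
    rw [hnil] at this
    simp at this
    omega
  obtain ⟨e, he⟩ := List.exists_mem_of_ne_nil _ hlen
  have heG : e ∈ G.edgeSet := c.edges_subset_edgeSet he
  induction e using Sym2.ind with
  | _ v w =>
  have hadjvw : G.Adj v w := heG
  set G' := G \ SimpleGraph.fromEdgeSet {s(v, w)} with hG'
  have h1 : G'.Reachable v w :=
    (SimpleGraph.adj_and_reachable_delete_edges_iff_exists_cycle.mpr ⟨u, c, hcyc, he⟩).2
  have hle : G' ≤ G := sdiff_le
  have hreach : ∀ {x y : V}, G.Reachable x y → G'.Reachable x y := by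
    intro x y hxy
    obtain ⟨p⟩ := hxy
    induction p with
    | nil => exact Reachable.refl _
    | @cons a b z hadj q ih =>
      refine Reachable.trans ?_ ih
      by_cases hab : s(a, b) = s(v, w)
      · rw [Sym2.eq_iff] at hab
        rcases hab with ⟨rfl, rfl⟩ | ⟨rfl, rfl⟩
        · exact h1
        · exact h1.symm
      · refine SimpleGraph.Adj.reachable ?_
        rw [hG', sdiff_adj]
        refine ⟨hadj, ?_⟩
        rw [fromEdgeSet_adj]
        simp only [Set.mem_singleton_iff]
        tauto
  have hconn' : G'.Connected := by
    have := h.nonempty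
    exact ⟨fun x y => hreach (h.preconnected x y)⟩
  haveI : Fintype G'.edgeSet := Fintype.ofFinite _
  have hA := aux_conn_card hconn'
  have hssub : G'.edgeFinset ⊂ G.edgeFinset := by
    rw [Finset.ssubset_iff_of_subset (edgeFinset_subset_edgeFinset.mpr hle)]
    refine ⟨s(v, w), ?_, ?_⟩
    · rw [mem_edgeFinset]; exact heG
    · rw [mem_edgeFinset, mem_edgeSet, hG', sdiff_adj]
      rw [fromEdgeSet_adj]
      simp [hadjvw, hadjvw.ne]
  have := Finset.card_lt_card hssub
  omega

/-- **Corollary 3.4.** The factorization graph `G` of a factorization `(σ₁, …, σ_{r-1})`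
of a `d`-cycle `τ` of type `(e₁, …, e_{r-1})` is connected, and `∑ (e_j - 1) = d - 1`
if and only if `G` is a tree. -/
theorem facGraph_connected_and_sum_iff_isTree (d r : ℕ) (hd : 2 ≤ d) (hr : 2 ≤ r)
    (τ : Perm (Fin d)) (hτ : τ.IsCycle) (hτd : τ.support.card = d)
    (e : Fin (r - 1) → ℕ) (he : ∀ j, 2 ≤ e j)
    (σ : Fin (r - 1) → Perm (Fin d)) (hσ : IsFactorization τ e σ) :
    (facGraph σ).Connected ∧
      ((∑ j, (e j - 1) = d - 1) ↔ (facGraph σ).IsTree) := by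
  classical
  have hadj : ∀ (j : Fin (r - 1)) (x : Fin d), x ∈ (σ j).support →
      (facGraph σ).Adj (Sum.inl j) (Sum.inr x) := by
    intro j x hx
    rw [facGraph, fromRel_adj]
    exact ⟨by simp, Or.inl ⟨j, x, rfl, rfl, hx⟩⟩
  obtain ⟨hcyc, hprod⟩ := hσ
  have hsupp_ne : ∀ j, ((σ j).support).Nonempty := by
    intro j
    rw [← Finset.card_pos, (hcyc j).2]
    have := he j; omega
  have hstep : ∀ (j : Fin (r - 1)) (y : Fin d),
      (facGraph σ).Reachable (Sum.inr y) (Sum.inr ((σ j) y)) := by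
    intro j y
    by_cases hy : (σ j) y = y
    · rw [hy]
    · have h1 : y ∈ (σ j).support := Equiv.Perm.mem_support.mpr hy
      have h2 : (σ j) y ∈ (σ j).support := Equiv.Perm.apply_mem_support.mpr h1
      exact ((hadj j y h1).symm.reachable).trans (hadj j _ h2).reachable
  have hlist : ∀ (l : List (Perm (Fin d))), (∀ g ∈ l, ∃ j, g = σ j) →
      ∀ y, (facGraph σ).Reachable (Sum.inr y) (Sum.inr (l.prod y)) := by
    intro l hl
    induction l with
    | nil =>
      intro y
      simp only [List.prod_nil, Equiv.Perm.one_apply]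
      exact SimpleGraph.Reachable.refl _
    | cons g t ih =>
      intro y
      have h1 := ih (fun g' hg' => hl g' (List.mem_cons_of_mem _ hg')) y
      obtain ⟨j, rfl⟩ := hl g List.mem_cons_self
      have h2 := hstep j (t.prod y)
      rw [List.prod_cons, Equiv.Perm.mul_apply]
      exact h1.trans h2
  have hτstep : ∀ y, (facGraph σ).Reachable (Sum.inr y) (Sum.inr (τ y)) := by
    intro y
    have := hlist (List.ofFn σ) (fun g hg => by
      rw [List.mem_ofFn] at hg; obtain ⟨j, rfl⟩ := hg; exact ⟨j, rfl⟩) y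
    rwa [hprod] at this
  have hpow : ∀ (n : ℕ) (y : Fin d),
      (facGraph σ).Reachable (Sum.inr y) (Sum.inr ((τ ^ n) y)) := by
    intro n
    induction n with
    | zero =>
      intro y
      simp only [pow_zero, Equiv.Perm.one_apply]
      exact SimpleGraph.Reachable.refl _
    | succ n ih =>
      intro y
      rw [pow_succ, Equiv.Perm.mul_apply]
      exact (hτstep y).trans (ih (τ y))
  have hτuniv : ∀ x : Fin d, τ x ≠ x := by
    intro x
    have h1 : τ.support = Finset.univ := Finset.eq_univ_of_card _ (by simp [hτd])
    have h2 : x ∈ τ.support := h1 ▸ Finset.mem_univ x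
    exact Equiv.Perm.mem_support.mp h2
  have hrr : ∀ x y : Fin d, (facGraph σ).Reachable (Sum.inr x) (Sum.inr y) := by
    intro x y
    obtain ⟨n, hn⟩ := hτ.exists_pow_eq (hτuniv x) (hτuniv y)
    have := hpow n x
    rwa [hn] at this
  have x0 : Fin d := ⟨0, by omega⟩
  have hall : ∀ u : Fin (r - 1) ⊕ Fin d, (facGraph σ).Reachable u (Sum.inr x0) := by
    intro u
    cases u with
    | inl j =>
      obtain ⟨x, hx⟩ := hsupp_ne j
      exact (hadj j x hx).reachable.trans (hrr x x0)
    | inr y => exact hrr y x0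
  have hconn : (facGraph σ).Connected := by
    have : Nonempty (Fin (r - 1) ⊕ Fin d) := ⟨Sum.inr x0⟩
    exact ⟨fun u v => (hall u).trans (hall v).symm⟩
  haveI : Fintype (facGraph σ).edgeSet := Fintype.ofFinite _
  have hedge : (facGraph σ).edgeFinset.card = ∑ j, e j := by
    have hbij : ((Finset.univ : Finset (Fin (r - 1))).sigma fun j => (σ j).support).card
        = (facGraph σ).edgeFinset.card := by
      apply Finset.card_bij (fun a _ => s(Sum.inl a.1, Sum.inr a.2))
      · intro a ha
        rw [Finset.mem_sigma] at ha
        rw [mem_edgeFinset, mem_edgeSet]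
        exact hadj a.1 a.2 ha.2
      · rintro ⟨j, x⟩ - ⟨j', x'⟩ - hab
        rw [Sym2.eq_iff] at hab
        rcases hab with ⟨h1, h2⟩ | ⟨h1, h2⟩
        · obtain rfl := Sum.inl_injective h1
          obtain rfl := Sum.inr_injective h2
          rfl
        · exact absurd h1 (by simp)
      · intro b hb
        induction b using Sym2.ind with
        | _ u v =>
        rw [mem_edgeFinset, mem_edgeSet, facGraph, fromRel_adj] at hb
        obtain ⟨-, ⟨j, x, rfl, rfl, hx⟩ | ⟨j, x, rfl, rfl, hx⟩⟩ := hb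
        · exact ⟨⟨j, x⟩, Finset.mem_sigma.mpr ⟨Finset.mem_univ _, hx⟩, rfl⟩
        · exact ⟨⟨j, x⟩, Finset.mem_sigma.mpr ⟨Finset.mem_univ _, hx⟩, Sym2.eq_swap⟩
    rw [← hbij, Finset.card_sigma]
    exact Finset.sum_congr rfl (fun j _ => (hcyc j).2)
  have hV : Fintype.card (Fin (r - 1) ⊕ Fin d) = (r - 1) + d := by simp
  have hsum : ∑ j, e j = (∑ j, (e j - 1)) + (r - 1) := by
    have h1 : ∀ j : Fin (r - 1), e j = (e j - 1) + 1 := fun j => by have := he j; omega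
    calc ∑ j, e j = ∑ j : Fin (r - 1), ((e j - 1) + 1) :=
          Finset.sum_congr rfl fun j _ => h1 j
    _ = (∑ j, (e j - 1)) + (r - 1) := by
        rw [Finset.sum_add_distrib, Finset.sum_const, Finset.card_univ, Fintype.card_fin,
          smul_eq_mul, mul_one]
  refine ⟨hconn, ?_, ?_⟩
  · intro hs
    refine ⟨hconn, ?_⟩
    by_contra hacyc
    have hle := aux_cyclic_card hconn hacyc
    rw [hedge, hV] at hle
    omega
  · intro ht
    have hc := ht.card_edgeFinset
    rw [hedge, hV] at hc
    omega
end

section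
/- Let μ = (u_1 u_2 ⋯ u_q) be a q-cycle in S_d and let η be a permutation of S_d with supp(η) = {u_{j_1}, ..., u_{j_p}} ⊆ supp(μ), where q ≥ j_1 > j_2 > ... > j_p ≥ 1. Let s denote the number of disjoint cycles (counting fixed points of μη lying in supp(μ) as cycles of length 1) in the cycle decomposition of μη restricted to supp(μ); equivalently s = q − ι(μη), where ι denotes the index (sum of cycle lengths minus one over all cycles). Then s ≤ p, and the following are equivalent: (i) s = p; (ii) η is the p-cycle (u_{j_1} u_{j_2} ⋯ u_{j_p}); (iii) μη = (u_{j_1+1} u_{j_1+2} ⋯ u_q u_1 ⋯ u_{j_p}) (u_{j_p+1} u_{j_p+2} ⋯ u_{j_{p-1}}) ⋯ (u_{j_2+1} u_{j_2+2} ⋯ u_{j_1}). -/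
open Equiv Equiv.Perm

private lemma multiset_card_le_sum {s : Multiset ℕ} (h : ∀ x ∈ s, 1 ≤ x) :
    Multiset.card s ≤ s.sum := by
  induction s using Multiset.induction with
  | empty => simp
  | cons a t ih =>
    have h1 := h a (by simp)
    have h2 := ih (fun x hx => h x (by simp [hx]))
    simp only [Multiset.card_cons, Multiset.sum_cons]
    omega

private lemma ct_card_le_supp {β : Type*} [DecidableEq β] [Fintype β] (f : Perm β) :
    Multiset.card f.cycleType ≤ f.support.card := by
  rw [← Equiv.Perm.sum_cycleType]
  exact multiset_card_le_sum (fun x hx => by have := Equiv.Perm.two_le_of_mem_cycleType hx; omega)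

private lemma listprod_apply_eq_self {β : Type*} (L : List (Perm β)) (x : β)
    (h : ∀ f ∈ L, f x = x) : L.prod x = x := by
  induction L with
  | nil => simp
  | cons a L ih =>
    rw [List.prod_cons, Perm.mul_apply, ih (fun f hf => h f (List.mem_cons_of_mem _ hf)),
      h a List.mem_cons_self]

private lemma listprod_reverse_range_apply {β : Type*} (F : ℕ → Perm β) (n m : ℕ) (hm : m < n)
    (y z : β) (h1 : ∀ k, k < m → F k y = y) (h2 : F m y = z)
    (h3 : ∀ k, m < k → k < n → F k z = z) :
    ((List.range n).reverse.map F).prod y = z := by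
  induction n with
  | zero => omega
  | succ n ih =>
    rw [List.range_succ, List.reverse_append, List.reverse_singleton, List.singleton_append,
      List.map_cons, List.prod_cons, Perm.mul_apply]
    rcases Nat.lt_or_ge m n with h | h
    · rw [ih h (fun k hk1 hk2 => h3 k hk1 (by omega)), h3 n h (by omega)]
    · have hmn : m = n := by omega
      subst hmn
      rw [listprod_apply_eq_self, h2]
      intro f hf
      simp only [List.mem_map, List.mem_reverse, List.mem_range] at hf
      obtain ⟨k, hk, rfl⟩ := hf
      exact h1 k hk

private lemma formPerm_stats {β : Type*} [DecidableEq β] [Fintype β] (l : List β) (hl : l.Nodup)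
    (hne : l ≠ []) :
    (l.formPerm).support.card + 1 = l.length + Multiset.card (l.formPerm).cycleType ∧
      Multiset.card (l.formPerm).cycleType ≤ (l.formPerm).support.card := by
  rcases Nat.lt_or_ge l.length 2 with h2 | h2
  · have h1 : l.length = 1 := by
      cases l with
      | nil => exact absurd rfl hne
      | cons a t =>
        simp only [List.length_cons] at h2 ⊢
        omega
    obtain ⟨x, rfl⟩ := List.length_eq_one_iff.mp h1
    simp [List.formPerm_singleton]
  · have h' : ∀ x : β, l ≠ [x] := by
      intro x hx; rw [hx] at h2; simp at h2
    have hsupp : (l.formPerm).support = l.toFinset := List.support_formPerm_of_nodup l hl h'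
    have hcard : (l.formPerm).support.card = l.length := by
      rw [hsupp, List.toFinset_card_of_nodup hl]
    have hcyc : (l.formPerm).IsCycle := List.isCycle_formPerm hl h2
    rw [hcyc.cycleType, hcard]
    simp
    omega

private lemma prod_stats {β : Type*} [DecidableEq β] [Fintype β] (L : List (Perm β))
    (h : L.Pairwise Perm.Disjoint) :
    L.prod.support.card = (L.map (fun f => f.support.card)).sum ∧
      Multiset.card L.prod.cycleType = (L.map (fun f => Multiset.card f.cycleType)).sum := by
  induction L with
  | nil => simp
  | cons a L ih =>
    obtain ⟨h1, h2⟩ := List.pairwise_cons.mp h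
    have hd : Perm.Disjoint a L.prod := Equiv.Perm.disjoint_prod_right _ h1
    obtain ⟨e1, e2⟩ := ih h2
    constructor
    · rw [List.prod_cons, hd.card_support_mul, e1, List.map_cons, List.sum_cons]
    · rw [List.prod_cons, hd.cycleType_mul, List.map_cons, List.sum_cons, Multiset.card_add, e2]

private lemma not_mem_map_idx {β : Type*} [DecidableEq β] {q : ℕ} (u : ℕ → β)
    (huinj : ∀ a b, a < q → b < q → u a = u b → a = b)
    (I : List ℕ) (hI : ∀ i ∈ I, i < q) (i : ℕ) (hi : i < q) (hiI : i ∉ I) : u i ∉ I.map u := by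
  intro h
  obtain ⟨i', hi', heq⟩ := List.mem_map.mp h
  exact hiI (huinj i' i (hI i' hi') hi heq ▸ hi')

private lemma disjoint_formPerm_idx {β : Type*} [DecidableEq β] {q : ℕ} (u : ℕ → β)
    (huinj : ∀ a b, a < q → b < q → u a = u b → a = b)
    (I1 I2 : List ℕ) (h1 : ∀ i ∈ I1, i < q) (h2 : ∀ i ∈ I2, i < q)
    (hd : ∀ i ∈ I1, i ∉ I2) : Perm.Disjoint (I1.map u).formPerm (I2.map u).formPerm := by
  rw [Equiv.Perm.disjoint_iff_eq_or_eq]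
  intro x
  by_cases hx : x ∈ I1.map u
  · right
    obtain ⟨i, hi, rfl⟩ := List.mem_map.mp hx
    exact List.formPerm_apply_of_notMem
      (not_mem_map_idx u huinj I2 h2 i (h1 i hi) (hd i hi))
  · exact Or.inl (List.formPerm_apply_of_notMem hx)

/-- **Lemma 3.6.** Let `μ = (u₁ u₂ ⋯ u_q)` be a `q`-cycle (here `u` is 0-indexed:
`μ` is the cycle on the distinct points `u 0, …, u (q-1)`), and let `η` be a permutation
with `supp(η) = {u_{j₁}, …, u_{j_p}}` where `j 0 > j 1 > ⋯ > j (p-1)` (0-indexed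
positions, all `< q`). Let `s = q − ι(μη)` be the number of disjoint cycles (counting
fixed points inside `supp μ` as 1-cycles) of `μη` on `supp(μ)`, where
`ι(π) = |supp π| − (number of nontrivial cycles of π)`. Then `s ≤ p`, and
`s = p` ↔ `η = (u_{j₁} u_{j₂} ⋯ u_{j_p})` ↔
`μη = (u_{j₁+1} ⋯ u_q u_1 ⋯ u_{j_p})(u_{j_p+1} ⋯ u_{j_{p-1}}) ⋯ (u_{j₂+1} ⋯ u_{j₁})`. -/
theorem cycle_mul_index_characterization (d q p : ℕ) (hq : 2 ≤ q) (hp : 1 ≤ p)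
    (u : ℕ → Fin d) (hu : ((List.range q).map u).Nodup)
    (j : ℕ → ℕ) (hjq : ∀ i < p, j i < q)
    (hanti : ∀ i i', i < i' → i' < p → j i' < j i)
    (μ : Perm (Fin d)) (hμ : μ = ((List.range q).map u).formPerm)
    (η : Perm (Fin d))
    (hη : η.support = (Finset.range p).image (fun i => u (j i)))
    (s : ℕ) (hs : s = q - ((μ * η).support.card - (μ * η).cycleType.card)) :
    s ≤ p ∧
    ((s = p) ↔ η = ((List.range p).map (fun i => u (j i))).formPerm) ∧
    ((s = p) ↔ μ * η =
      (((List.range' (j 0 + 1) (q - 1 - j 0)).map u ++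
          (List.range (j (p - 1) + 1)).map u).formPerm) *
        ((List.range (p - 1)).reverse.map
          (fun i => ((List.range' (j (i + 1) + 1) (j i - j (i + 1))).map u).formPerm)).prod) := by
  classical
  -- basic injectivity facts
  have huinj : ∀ a b, a < q → b < q → u a = u b → a = b := by
    intro a b ha hb hab
    exact List.inj_on_of_nodup_map hu (List.mem_range.mpr ha) (List.mem_range.mpr hb) hab
  have hjlt : ∀ k k', k < k' → k' < p → j k' < j k := hanti
  have hjle : ∀ k k', k ≤ k' → k' < p → j k' ≤ j k := by
    intro k k' hkk hk'
    rcases Nat.eq_or_lt_of_le hkk with rfl | h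
    · omega
    · exact Nat.le_of_lt (hanti k k' h hk')
  have hjinj : ∀ k k', k < p → k' < p → j k = j k' → k = k' := by
    intro k k' hk hk' heq
    rcases Nat.lt_trichotomy k k' with h | h | h
    · have := hanti k k' h hk'; omega
    · exact h
    · have := hanti k' k h hk; omega
  have hp2 : 2 ≤ p := by
    by_contra h
    have hp1 : p = 1 := by omega
    subst hp1
    have : η.support.card = 1 := by
      rw [hη]
      rw [Finset.range_one, Finset.image_singleton, Finset.card_singleton]
    exact Equiv.Perm.card_support_ne_one η this
  have hstep : ∀ t, t < p → t ≤ j (p - 1 - t) := by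
    intro t
    induction t with
    | zero => intro _; omega
    | succ t ih =>
      intro ht
      have h1 := ih (by omega)
      have h2 := hanti (p - 1 - (t + 1)) (p - 1 - t) (by omega) (by omega)
      omega
  have hpq : p ≤ q := by
    have h1 := hstep (p - 1) (by omega)
    have h2 := hjq 0 (by omega)
    simp only [Nat.sub_self] at h1
    omega
  -- application lemmas
  have hμapp : ∀ i, i < q → μ (u i) = u ((i + 1) % q) := by
    intro i hi
    rw [hμ]
    have h1 : i < ((List.range q).map u).length := by simpa using hi
    have h2 := List.formPerm_apply_getElem _ hu i h1
    simpa using h2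
  have hηfix : ∀ x : Fin d, (∀ k, k < p → x ≠ u (j k)) → η x = x := by
    intro x hx
    apply Equiv.Perm.notMem_support.mp
    rw [hη]
    intro hmem
    obtain ⟨k, hk, heq⟩ := Finset.mem_image.mp hmem
    exact hx k (Finset.mem_range.mp hk) heq.symm
  have hgex : ∀ k : ℕ, ∃ k' : ℕ, k < p → (k' < p ∧ η (u (j k)) = u (j k')) := by
    intro k
    by_cases hk : k < p
    · have hx : η (u (j k)) ∈ η.support := by
        apply Equiv.Perm.apply_mem_support.mpr
        rw [hη]
        exact Finset.mem_image.mpr ⟨k, Finset.mem_range.mpr hk, rfl⟩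
      rw [hη] at hx
      obtain ⟨k', hk', heq⟩ := Finset.mem_image.mp hx
      exact ⟨k', fun _ => ⟨Finset.mem_range.mp hk', heq.symm⟩⟩
    · exact ⟨0, fun h => absurd h hk⟩
  obtain ⟨g, hgspec⟩ := Classical.axiomOfChoice hgex
  have hπnJ : ∀ i, i < q → (∀ k, k < p → i ≠ j k) → (μ * η) (u i) = u ((i + 1) % q) := by
    intro i hi hiJ
    rw [Perm.mul_apply, hηfix _ (fun k hk heq => hiJ k hk (huinj i (j k) hi (hjq k hk) heq)),
      hμapp i hi]
  have hπJ : ∀ k, k < p → (μ * η) (u (j k)) = u ((j (g k) + 1) % q) := by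
    intro k hk
    rw [Perm.mul_apply, (hgspec k hk).2, hμapp _ (hjq _ (hgspec k hk).1)]
  have hwalk : ∀ n a, a < q → (∀ m, m < n → ∀ k, k < p → (a + m) % q ≠ j k) →
      ((μ * η) ^ n) (u a) = u ((a + n) % q) := by
    intro n
    induction n with
    | zero => intro a ha _; simp [Nat.mod_eq_of_lt ha]
    | succ n ih =>
      intro a ha h
      have h0 : ∀ k, k < p → a ≠ j k := by
        intro k hk heq
        exact h 0 (by omega) k hk (by rw [Nat.add_zero, Nat.mod_eq_of_lt ha]; exact heq)
      rw [pow_succ, Perm.mul_apply, hπnJ a ha h0]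
      have ha1 : (a + 1) % q < q := Nat.mod_lt _ (by omega)
      have := ih ((a + 1) % q) ha1 (fun m hm k hk => by
        have h2 := h (m + 1) (by omega) k hk
        rw [Nat.mod_add_mod, show a + 1 + m = a + (m + 1) by ring]
        exact h2)
      rw [this, Nat.mod_add_mod, show a + 1 + n = a + (n + 1) by ring]
  have hhit : ∀ a, a < q → ∃ k, k < p ∧ Perm.SameCycle (μ * η) (u a) (u (j k)) := by
    intro a ha
    have hex : ∃ t, ∃ k, k < p ∧ (a + t) % q = j k := by
      refine ⟨(j 0 + q - a) % q, 0, by omega, ?_⟩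
      rw [Nat.add_mod_mod, show a + (j 0 + q - a) = j 0 + q by omega, Nat.add_mod_right,
        Nat.mod_eq_of_lt (hjq 0 (by omega))]
    obtain ⟨k, hk, hkt⟩ := Nat.find_spec hex
    refine ⟨k, hk, ⟨(Nat.find hex : ℤ), ?_⟩⟩
    rw [zpow_natCast, hwalk (Nat.find hex) a ha
      (fun m hm k' hk' heq => Nat.find_min hex hm ⟨k', hk', heq⟩), hkt]
  have hland : ∀ m, m < p → ∃ t : ℕ,
      ((μ * η) ^ t) (u ((j m + 1) % q)) = u (j ((m + (p - 1)) % p)) := by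
    intro m hm
    by_cases hm0 : m = 0
    · subst hm0
      have hp1 : (0 + (p - 1)) % p = p - 1 := by
        rw [Nat.zero_add, Nat.mod_eq_of_lt (by omega)]
      rw [hp1]
      have hj0q := hjq 0 (by omega)
      have hjp1q := hjq (p - 1) (by omega)
      by_cases hj0 : j 0 = q - 1
      · refine ⟨j (p - 1), ?_⟩
        have ha : (j 0 + 1) % q = 0 := by
          rw [hj0, show q - 1 + 1 = q by omega, Nat.mod_self]
        rw [ha, hwalk _ 0 (by omega) ?_, Nat.zero_add, Nat.mod_eq_of_lt hjp1q]
        intro m' hm' k hk heq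
        have h1 := hjle k (p - 1) (by omega) (by omega)
        rw [Nat.zero_add, Nat.mod_eq_of_lt (by omega)] at heq
        omega
      · refine ⟨q - 1 - j 0 + j (p - 1), ?_⟩
        have ha : (j 0 + 1) % q = j 0 + 1 := Nat.mod_eq_of_lt (by omega)
        rw [ha, hwalk _ _ (by omega) ?_,
          show j 0 + 1 + (q - 1 - j 0 + j (p - 1)) = j (p - 1) + q by omega,
          Nat.add_mod_right, Nat.mod_eq_of_lt hjp1q]
        intro m' hm' k hk heq
        have h1 := hjle 0 k (by omega) hk
        have h2 := hjle k (p - 1) (by omega) (by omega)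
        rcases Nat.lt_or_ge (j 0 + 1 + m') q with hlt | hge
        · rw [Nat.mod_eq_of_lt hlt] at heq
          omega
        · rw [Nat.mod_eq_sub_mod hge, Nat.mod_eq_of_lt (by omega)] at heq
          omega
    · have hm1 : 1 ≤ m := by omega
      have hidx : (m + (p - 1)) % p = m - 1 := by
        rw [show m + (p - 1) = (m - 1) + p by omega, Nat.add_mod_right,
          Nat.mod_eq_of_lt (by omega)]
      rw [hidx]
      refine ⟨j (m - 1) - (j m + 1), ?_⟩
      have hjm1 : j m < j (m - 1) := hanti (m - 1) m (by omega) hm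
      have hjm1q : j (m - 1) < q := hjq _ (by omega)
      have ha : (j m + 1) % q = j m + 1 := Nat.mod_eq_of_lt (by omega)
      rw [ha, hwalk _ _ (by omega) ?_,
        show j m + 1 + (j (m - 1) - (j m + 1)) = j (m - 1) by omega,
        Nat.mod_eq_of_lt hjm1q]
      intro m' hm' k hk heq
      rw [Nat.mod_eq_of_lt (by omega)] at heq
      rcases Nat.lt_or_ge k m with hkm | hkm
      · have := hjle k (m - 1) (by omega) (by omega)
        omega
      · have := hjle m k hkm hk
        omega
  have harc : ∀ m, m < p →
      Perm.SameCycle (μ * η) (u (j m)) (u (j ((g m + (p - 1)) % p))) := by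
    intro m hm
    obtain ⟨t, ht⟩ := hland (g m) (hgspec m hm).1
    refine ⟨((t + 1 : ℕ) : ℤ), ?_⟩
    rw [zpow_natCast, pow_succ, Perm.mul_apply, hπJ m hm, ht]
  -- counting
  have hMcard : ((List.range q).map u).toFinset.card = q := by
    rw [List.toFinset_card_of_nodup hu]
    simp
  have hsuppπ : (μ * η).support ⊆ ((List.range q).map u).toFinset := by
    intro x hx
    have hx2 := Equiv.Perm.support_mul_le μ η hx
    rcases Finset.mem_union.mp hx2 with h | h
    · rw [hμ] at h
      exact List.support_formPerm_le _ h
    · rw [hη] at h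
      obtain ⟨k, hk, rfl⟩ := Finset.mem_image.mp h
      rw [List.mem_toFinset, List.mem_map]
      exact ⟨j k, List.mem_range.mpr (hjq k (Finset.mem_range.mp hk)), rfl⟩
  have hscq : (μ * η).support.card ≤ q := by
    rw [← hMcard]
    exact Finset.card_le_card hsuppπ
  have hccsc : Multiset.card (μ * η).cycleType ≤ (μ * η).support.card := ct_card_le_supp _
  set T : Finset (Fin d ⊕ Perm (Fin d)) :=
    ((((List.range q).map u).toFinset \ (μ * η).support).map ⟨Sum.inl, Sum.inl_injective⟩) ∪
      ((μ * η).cycleFactorsFinset.map ⟨Sum.inr, Sum.inr_injective⟩) with hT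
  have hccfac : Multiset.card (μ * η).cycleType = (μ * η).cycleFactorsFinset.card := by
    rw [Equiv.Perm.cycleType_def, Multiset.card_map]
    rfl
  have hTcard : T.card = (q - (μ * η).support.card) + Multiset.card (μ * η).cycleType := by
    rw [hT, Finset.card_union_of_disjoint, Finset.card_map, Finset.card_map,
      Finset.card_sdiff_of_subset hsuppπ, hMcard, hccfac]
    · rw [Finset.disjoint_left]
      intro a ha hb
      obtain ⟨x, _, rfl⟩ := Finset.mem_map.mp ha
      obtain ⟨c, _, hcc⟩ := Finset.mem_map.mp hb
      simp at hcc
  set Φ : ℕ → (Fin d ⊕ Perm (Fin d)) := fun k =>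
    if (μ * η) (u (j k)) = u (j k) then Sum.inl (u (j k))
    else Sum.inr ((μ * η).cycleOf (u (j k))) with hΦ
  have hΦmem : ∀ k ∈ Finset.range p, Φ k ∈ T := by
    intro k hk
    rw [Finset.mem_range] at hk
    simp only [hΦ]
    by_cases hfix : (μ * η) (u (j k)) = u (j k)
    · rw [if_pos hfix, hT]
      apply Finset.mem_union_left
      rw [Finset.mem_map]
      refine ⟨u (j k), ?_, rfl⟩
      rw [Finset.mem_sdiff]
      refine ⟨?_, Equiv.Perm.notMem_support.mpr hfix⟩
      rw [List.mem_toFinset, List.mem_map]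
      exact ⟨j k, List.mem_range.mpr (hjq k hk), rfl⟩
    · rw [if_neg hfix, hT]
      apply Finset.mem_union_right
      rw [Finset.mem_map]
      exact ⟨(μ * η).cycleOf (u (j k)),
        Equiv.Perm.cycleOf_mem_cycleFactorsFinset_iff.mpr (Equiv.Perm.mem_support.mpr hfix), rfl⟩
  have hΦsurj : ∀ y ∈ T, ∃ k, k ∈ Finset.range p ∧ Φ k = y := by
    intro y hy
    rw [hT, Finset.mem_union] at hy
    rcases hy with hy | hy
    · obtain ⟨x, hx, rfl⟩ := Finset.mem_map.mp hy
      rw [Finset.mem_sdiff] at hx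
      obtain ⟨hxM, hxn⟩ := hx
      obtain ⟨i, hiq, rfl⟩ : ∃ i, i < q ∧ u i = x := by
        rw [List.mem_toFinset, List.mem_map] at hxM
        obtain ⟨i, hi, he⟩ := hxM
        exact ⟨i, List.mem_range.mp hi, he⟩
      have hfix : (μ * η) (u i) = u i := Equiv.Perm.notMem_support.mp hxn
      obtain ⟨k, hk, hsc⟩ := hhit i hiq
      obtain ⟨n, hn⟩ := hsc
      have heq : u (j k) = u i := by
        rw [← hn, Equiv.Perm.zpow_apply_eq_self_of_apply_eq_self hfix]
      refine ⟨k, Finset.mem_range.mpr hk, ?_⟩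
      simp only [hΦ]
      rw [heq, if_pos hfix]
      rfl
    · obtain ⟨c, hc, rfl⟩ := Finset.mem_map.mp hy
      obtain ⟨hcyc, hfac⟩ := Equiv.Perm.mem_cycleFactorsFinset_iff.mp hc
      obtain ⟨x, hx1, -⟩ := hcyc
      have hxc : x ∈ c.support := Equiv.Perm.mem_support.mpr hx1
      have hπx : (μ * η) x ≠ x := by rw [← hfac x hxc]; exact hx1
      have hxM : x ∈ ((List.range q).map u).toFinset :=
        hsuppπ (Equiv.Perm.mem_support.mpr hπx)
      obtain ⟨i, hiq, rfl⟩ : ∃ i, i < q ∧ u i = x := by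
        rw [List.mem_toFinset, List.mem_map] at hxM
        obtain ⟨i, hi, he⟩ := hxM
        exact ⟨i, List.mem_range.mp hi, he⟩
      obtain ⟨k, hk, hsc⟩ := hhit i hiq
      have hjkm : (μ * η) (u (j k)) ≠ u (j k) := by
        obtain ⟨n, hn⟩ := hsc
        intro hfix
        apply hπx
        have h1 : ((μ * η) ^ n) ((μ * η) (u i)) = (μ * η) (((μ * η) ^ n) (u i)) := by
          rw [← Perm.mul_apply, ← Perm.mul_apply, ← zpow_add_one, ← zpow_one_add, add_comm]
        rw [hn, hfix, ← hn] at h1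
        exact ((μ * η) ^ n).injective h1
      refine ⟨k, Finset.mem_range.mpr hk, ?_⟩
      simp only [hΦ]
      rw [if_neg hjkm]
      have e1 : (μ * η).cycleOf (u i) = (μ * η).cycleOf (u (j k)) := hsc.cycleOf_eq
      have e2 : c = (μ * η).cycleOf (u i) := Equiv.Perm.cycle_is_cycleOf hxc hc
      rw [← e1, ← e2]
      rfl
  have hTs : T.card = s := by
    rw [hTcard, hs]
    omega
  have hsle : s ≤ p := by
    rw [← hTs, ← Finset.card_range p]
    exact Finset.card_le_card_of_surjOn Φ
      (fun y hy => by
        obtain ⟨k, hk, hky⟩ := hΦsurj y hy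
        exact ⟨k, Finset.mem_coe.mpr hk, hky⟩)
  -- general helpers for concrete lists
  have hmapnodup : ∀ I : List ℕ, I.Nodup → (∀ e ∈ I, e < q) → (I.map u).Nodup := by
    intro I hI hIq
    apply List.Nodup.map_on ?_ hI
    intro a ha b hb heq
    exact huinj a b (hIq a ha) (hIq b hb) heq
  have hLpnodup : (((List.range p).map (fun i => u (j i)))).Nodup := by
    apply List.Nodup.map_on ?_ List.nodup_range
    intro a ha b hb heq
    rw [List.mem_range] at ha hb
    exact hjinj a b ha hb (huinj _ _ (hjq a ha) (hjq b hb) heq)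
  -- direction : s = p → η is the cycle
  have hBdir : s = p → η = ((List.range p).map (fun i => u (j i))).formPerm := by
    intro hsp
    have hinj := Finset.inj_on_of_surj_on_of_card_le (s := Finset.range p) (t := T)
      (fun a _ => Φ a) (fun a ha => hΦmem a ha)
      (fun b hb => by obtain ⟨k, hk, hky⟩ := hΦsurj b hb; exact ⟨k, hk, hky⟩)
      (by rw [Finset.card_range, hTs, hsp])
    have hSCinj : ∀ k k', k < p → k' < p →
        Perm.SameCycle (μ * η) (u (j k)) (u (j k')) → k = k' := by
      intro k k' hk hk' hsc
      by_cases hfix : (μ * η) (u (j k)) = u (j k)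
      · obtain ⟨n, hn⟩ := hsc
        have heq : u (j k') = u (j k) := by
          rw [← hn, Equiv.Perm.zpow_apply_eq_self_of_apply_eq_self hfix]
        exact hjinj k k' hk hk' (huinj _ _ (hjq k hk) (hjq k' hk') heq.symm)
      · have hfix' : (μ * η) (u (j k')) ≠ u (j k') := by
          intro hfix'
          obtain ⟨n, hn⟩ := hsc.symm
          have heq : u (j k) = u (j k') := by
            rw [← hn, Equiv.Perm.zpow_apply_eq_self_of_apply_eq_self hfix']
          rw [heq] at hfix
          exact hfix hfix'
        apply hinj (Finset.mem_range.mpr hk) (Finset.mem_range.mpr hk')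
        simp only [hΦ]
        rw [if_neg hfix, if_neg hfix', hsc.cycleOf_eq]
    have hgsucc : ∀ m, m < p → g m = (m + 1) % p := by
      intro m hm
      have h1 := hSCinj m ((g m + (p - 1)) % p) hm (Nat.mod_lt _ (by omega)) (harc m hm)
      have hgm := (hgspec m hm).1
      by_cases h0 : g m = 0
      · rw [h0, Nat.zero_add, Nat.mod_eq_of_lt (by omega)] at h1
        rw [h0, h1, show p - 1 + 1 = p by omega, Nat.mod_self]
      · rw [show g m + (p - 1) = (g m - 1) + p by omega, Nat.add_mod_right,
          Nat.mod_eq_of_lt (by omega)] at h1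
        rw [Nat.mod_eq_of_lt (by omega)]
        omega
    ext x
    by_cases hx : ∃ k, k < p ∧ u (j k) = x
    · obtain ⟨k, hk, rfl⟩ := hx
      have hlen : ((List.range p).map (fun i => u (j i))).length = p := by simp
      have hfp := List.formPerm_apply_getElem _ hLpnodup k (by rw [hlen]; exact hk)
      simp only [List.getElem_map, List.getElem_range, hlen, List.length_map,
        List.length_range] at hfp
      rw [(hgspec k hk).2, hgsucc k hk, hfp]
    · have hx1 : ∀ k, k < p → x ≠ u (j k) := by
        intro k hk heq
        exact hx ⟨k, hk, heq.symm⟩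
      rw [hηfix x hx1, List.formPerm_apply_of_notMem]
      intro hmem
      rw [List.mem_map] at hmem
      obtain ⟨i, hi, he⟩ := hmem
      exact hx ⟨i, List.mem_range.mp hi, he⟩
  -- arc application lemma
  have hFapp : ∀ i, i < p - 1 → ∀ e, j (i + 1) < e → e ≤ j i →
      ((List.range' (j (i + 1) + 1) (j i - j (i + 1))).map u).formPerm (u e) =
        u (if e = j i then j (i + 1) + 1 else e + 1) := by
    intro i hi e he1 he2
    have hjiq : j i < q := hjq i (by omega)
    have hnd : ((List.range' (j (i + 1) + 1) (j i - j (i + 1))).map u).Nodup :=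
      hmapnodup _ List.nodup_range' (fun e' he' => by rw [List.mem_range'_1] at he'; omega)
    have hlen : ((List.range' (j (i + 1) + 1) (j i - j (i + 1))).map u).length
        = j i - j (i + 1) := by simp
    have htl : e - j (i + 1) - 1 < j i - j (i + 1) := by omega
    have hget : ((List.range' (j (i + 1) + 1) (j i - j (i + 1))).map u)[e - j (i + 1) - 1]'(by
        rw [hlen]; exact htl) = u e := by
      simp only [List.getElem_map, List.getElem_range'_1]
      congr 1
      omega
    have hfp := List.formPerm_apply_getElem _ hnd (e - j (i + 1) - 1) (by rw [hlen]; exact htl)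
    rw [hget] at hfp
    rw [hfp]
    simp only [List.length_map, List.length_range', List.getElem_map, List.getElem_range'_1]
    congr 1
    by_cases hej : e = j i
    · rw [if_pos hej, show e - j (i + 1) - 1 + 1 = j i - j (i + 1) by omega, Nat.mod_self]
    · rw [if_neg hej, Nat.mod_eq_of_lt (by omega)]
      omega
  -- arc fixing lemma
  have hFfix : ∀ i, i < p - 1 → ∀ e, e < q → (e ≤ j (i + 1) ∨ j i < e) →
      ((List.range' (j (i + 1) + 1) (j i - j (i + 1))).map u).formPerm (u e) = u e := by
    intro i hi e he hor
    apply List.formPerm_apply_of_notMem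
    apply not_mem_map_idx u huinj _ ?_ e he
    · rw [List.mem_range'_1]
      omega
    · intro e' he'
      rw [List.mem_range'_1] at he'
      have : j i < q := hjq i (by omega)
      omega
  -- big-arc facts
  have hlBidx : ((List.range' (j 0 + 1) (q - 1 - j 0)).map u ++
      (List.range (j (p - 1) + 1)).map u) =
      ((List.range' (j 0 + 1) (q - 1 - j 0)) ++ List.range (j (p - 1) + 1)).map u :=
    List.map_append.symm
  have hj0q : j 0 < q := hjq 0 (by omega)
  have hjp1q : j (p - 1) < q := hjq (p - 1) (by omega)
  have hjp10 : j (p - 1) < j 0 := hanti 0 (p - 1) (by omega) (by omega)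
  have hBidxlt : ∀ e ∈ (List.range' (j 0 + 1) (q - 1 - j 0)) ++ List.range (j (p - 1) + 1),
      e < q := by
    intro e he
    rcases List.mem_append.mp he with h | h
    · rw [List.mem_range'_1] at h; omega
    · rw [List.mem_range] at h; omega
  have hBnd : (((List.range' (j 0 + 1) (q - 1 - j 0)) ++ List.range (j (p - 1) + 1)).map u).Nodup := by
    apply hmapnodup _ ?_ hBidxlt
    apply List.Nodup.append List.nodup_range' List.nodup_range
    intro e he1 he2
    rw [List.mem_range'_1] at he1
    rw [List.mem_range] at he2
    omega
  have hBlen : (((List.range' (j 0 + 1) (q - 1 - j 0)) ++ List.range (j (p - 1) + 1)).map u).length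
      = (q - 1 - j 0) + (j (p - 1) + 1) := by simp
  have hBfix : ∀ e, e < q → j (p - 1) < e → e ≤ j 0 →
      (((List.range' (j 0 + 1) (q - 1 - j 0)) ++ List.range (j (p - 1) + 1)).map u).formPerm (u e)
        = u e := by
    intro e he h1 h2
    apply List.formPerm_apply_of_notMem
    apply not_mem_map_idx u huinj _ hBidxlt e he
    intro hmem
    rcases List.mem_append.mp hmem with h | h
    · rw [List.mem_range'_1] at h; omega
    · rw [List.mem_range] at h; omega
  -- getElem for big arc index list
  have hBget : ∀ t (htl : t < (q - 1 - j 0) + (j (p - 1) + 1)),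
      (((List.range' (j 0 + 1) (q - 1 - j 0)) ++ List.range (j (p - 1) + 1)).map u)[t]'(by
        rw [hBlen]; omega) =
      u (if t < q - 1 - j 0 then j 0 + 1 + t else t - (q - 1 - j 0)) := by
    intro t ht
    by_cases h : t < q - 1 - j 0
    · rw [if_pos h]
      simp only [List.map_append]
      rw [List.getElem_append_left (by simpa using h)]
      simp only [List.getElem_map, List.getElem_range'_1]
    · rw [if_neg h]
      simp only [List.map_append]
      rw [List.getElem_append_right (by simpa using h)]
      simp only [List.getElem_map, List.getElem_range, List.length_map, List.length_range']
  -- big arc application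
  have hBapp : ∀ e, e < q → (e ≤ j (p - 1) ∨ j 0 < e) →
      (((List.range' (j 0 + 1) (q - 1 - j 0)) ++ List.range (j (p - 1) + 1)).map u).formPerm (u e)
        = u (if e = j (p - 1) then (j 0 + 1) % q else (e + 1) % q) := by
    intro e he hor
    set t := if j 0 < e then e - j 0 - 1 else (q - 1 - j 0) + e with htdef
    have htl : t < (q - 1 - j 0) + (j (p - 1) + 1) := by
      rw [htdef]; split_ifs <;> omega
    have hget : (((List.range' (j 0 + 1) (q - 1 - j 0)) ++ List.range (j (p - 1) + 1)).map u)[t]'(by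
        rw [hBlen]; omega) = u e := by
      rw [hBget t htl]
      congr 1
      rw [htdef]
      split_ifs <;> omega
    have hfp := List.formPerm_apply_getElem _ hBnd t (by rw [hBlen]; omega)
    rw [hget] at hfp
    rw [hfp]
    simp only [List.length_map, List.length_append, List.length_range', List.length_range]
    rw [hBget ((t + 1) % ((q - 1 - j 0) + (j (p - 1) + 1))) (Nat.mod_lt _ (by omega))]
    congr 1
    by_cases hej : e = j (p - 1)
    · rw [if_pos hej]
      have ht1 : t + 1 = (q - 1 - j 0) + (j (p - 1) + 1) := by
        rw [htdef, if_neg (by omega)]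
        omega
      rw [ht1, Nat.mod_self]
      by_cases hj0 : j 0 + 1 < q
      · rw [if_pos (by omega), Nat.mod_eq_of_lt hj0]
      · rw [if_neg (by omega), Nat.mod_eq_sub_mod (by omega), Nat.mod_eq_of_lt (by omega)]
        omega
    · rw [if_neg hej]
      rcases hor with hor | hor
      · have hlt : e < j (p - 1) := by omega
        have ht' : t = q - 1 - j 0 + e := by rw [htdef, if_neg (by omega)]
        have htor : t + 1 < (q - 1 - j 0) + (j (p - 1) + 1) := by omega
        rw [Nat.mod_eq_of_lt htor, if_neg (by omega), Nat.mod_eq_of_lt (by omega)]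
        omega
      · have ht' : t = e - j 0 - 1 := by rw [htdef, if_pos hor]
        have htor : t + 1 < (q - 1 - j 0) + (j (p - 1) + 1) := by omega
        rw [Nat.mod_eq_of_lt htor]
        by_cases heq1 : e < q - 1
        · rw [if_pos (by omega), Nat.mod_eq_of_lt (by omega)]
          omega
        · rw [if_neg (by omega), Nat.mod_eq_sub_mod (by omega), Nat.mod_eq_of_lt (by omega)]
          omega
  -- direction : η is the cycle → μη is the explicit product
  have hCdir : η = ((List.range p).map (fun i => u (j i))).formPerm → μ * η =
      (((List.range' (j 0 + 1) (q - 1 - j 0)).map u ++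
          (List.range (j (p - 1) + 1)).map u).formPerm) *
        ((List.range (p - 1)).reverse.map
          (fun i => ((List.range' (j (i + 1) + 1) (j i - j (i + 1))).map u).formPerm)).prod := by
    intro hii
    have hgk : ∀ k, k < p → η (u (j k)) = u (j ((k + 1) % p)) := by
      intro k hk
      rw [hii]
      have hfp := List.formPerm_apply_getElem _ hLpnodup k (by simpa using hk)
      simpa using hfp
    have hπapp : ∀ k, k < p → (μ * η) (u (j k)) = u ((j ((k + 1) % p) + 1) % q) := by
      intro k hk
      rw [Perm.mul_apply, hgk k hk, hμapp _ (hjq _ (Nat.mod_lt _ (by omega)))]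
    rw [hlBidx]
    refine Equiv.ext fun x => ?_
    by_cases hx : ∃ i, i < q ∧ u i = x
    · obtain ⟨i, hiq, rfl⟩ := hx
      by_cases hreg : j (p - 1) < i ∧ i ≤ j 0
      · -- middle region : inside one of the small arcs
        have hexm : ∃ m, j (m + 1) < i :=
          ⟨p - 2, by rw [show p - 2 + 1 = p - 1 by omega]; exact hreg.1⟩
        set m := Nat.find hexm with hmdef
        have hm1 : j (m + 1) < i := Nat.find_spec hexm
        have hmle : m ≤ p - 2 :=
          Nat.find_min' hexm (by rw [show p - 2 + 1 = p - 1 by omega]; exact hreg.1)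
        have hmp : m < p - 1 := by omega
        have hmi : i ≤ j m := by
          by_cases h0 : m = 0
          · rw [h0]; exact hreg.2
          · have hnm := Nat.find_min hexm (m := m - 1) (by omega)
            rw [show m - 1 + 1 = m by omega] at hnm
            omega
        have hjmq : j m < q := hjq m (by omega)
        have hjm1 : j (m + 1) < j m := hanti m (m + 1) (by omega) (by omega)
        have hprod : ((List.range (p - 1)).reverse.map
            (fun i => ((List.range' (j (i + 1) + 1) (j i - j (i + 1))).map u).formPerm)).prod (u i)
            = u (if i = j m then j (m + 1) + 1 else i + 1) := by
          apply listprod_reverse_range_apply _ (p - 1) m hmp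
          · intro k hk
            apply hFfix k (by omega) i hiq
            left
            have := Nat.find_min hexm (m := k) (by omega)
            omega
          · exact hFapp m hmp i hm1 hmi
          · intro k hk1 hk2
            have h1 := hjle (m + 1) k hk1 (by omega)
            apply hFfix k hk2 _ ?_ ?_
            · split_ifs <;> omega
            · right
              split_ifs <;> omega
        have hibeg : j (p - 1) < (if i = j m then j (m + 1) + 1 else i + 1) := by
          have := hjle (m + 1) (p - 1) (by omega) (by omega)
          split_ifs <;> omega
        have hiend : (if i = j m then j (m + 1) + 1 else i + 1) ≤ j 0 := by
          have := hjle 0 m (by omega) (by omega)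
          split_ifs <;> omega
        have hRHS : ((((List.range' (j 0 + 1) (q - 1 - j 0)) ++
            List.range (j (p - 1) + 1)).map u).formPerm *
            ((List.range (p - 1)).reverse.map
            (fun i => ((List.range' (j (i + 1) + 1) (j i - j (i + 1))).map u).formPerm)).prod)
            (u i) = u (if i = j m then j (m + 1) + 1 else i + 1) := by
          rw [Perm.mul_apply, hprod, hBfix _ (by split_ifs <;> omega) hibeg hiend]
        rw [hRHS]
        by_cases hij : i = j m
        · rw [if_pos hij, hij, hπapp m (by omega), Nat.mod_eq_of_lt (show m + 1 < p by omega)]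
          congr 1
          exact Nat.mod_eq_of_lt (by omega)
        · rw [if_neg hij, hπnJ i hiq ?_]
          · congr 1
            exact Nat.mod_eq_of_lt (by omega)
          · intro k hk heq
            rcases le_or_gt k m with h | h
            · have h1 := hjle k m h (by omega)
              have h2 : j k = j m := by omega
              exact hij (by rw [heq, hjinj k m hk (by omega) h2])
            · have h1 := hjle (m + 1) k h hk
              omega
      · -- outer region : the big arc
        have hreg' : i ≤ j (p - 1) ∨ j 0 < i := by omega
        have hprod : ((List.range (p - 1)).reverse.map
            (fun i => ((List.range' (j (i + 1) + 1) (j i - j (i + 1))).map u).formPerm)).prod (u i)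
            = u i := by
          apply listprod_apply_eq_self
          intro f hf
          simp only [List.mem_map, List.mem_reverse, List.mem_range] at hf
          obtain ⟨k, hk, rfl⟩ := hf
          apply hFfix k hk i hiq
          rcases hreg' with h | h
          · left
            have := hjle (k + 1) (p - 1) (by omega) (by omega)
            omega
          · right
            have := hjle 0 k (by omega) (by omega)
            omega
        have hRHS : ((((List.range' (j 0 + 1) (q - 1 - j 0)) ++
            List.range (j (p - 1) + 1)).map u).formPerm *
            ((List.range (p - 1)).reverse.map
            (fun i => ((List.range' (j (i + 1) + 1) (j i - j (i + 1))).map u).formPerm)).prod)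
            (u i) = u (if i = j (p - 1) then (j 0 + 1) % q else (i + 1) % q) := by
          rw [Perm.mul_apply, hprod, hBapp i hiq hreg']
        rw [hRHS]
        by_cases hij : i = j (p - 1)
        · rw [if_pos hij, hij, hπapp (p - 1) (by omega),
            show (p - 1 + 1) % p = 0 by rw [show p - 1 + 1 = p by omega, Nat.mod_self]]
        · rw [if_neg hij, hπnJ i hiq ?_]
          intro k hk heq
          have h1 := hjle k (p - 1) (by omega) (by omega)
          rcases hreg' with h | h
          · have h2 : j k = j (p - 1) := by omega
            exact hij (by rw [heq, hjinj k (p - 1) hk (by omega) h2])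
          · have h4 := hjle 0 k (by omega) hk
            omega
    · -- x outside the support of everything
      have hxn : ∀ e, e < q → u e ≠ x := fun e he heq => hx ⟨e, he, heq⟩
      have hLHS : (μ * η) x = x := by
        rw [Perm.mul_apply, hηfix x (fun k hk heq => hxn (j k) (hjq k hk) heq.symm), hμ]
        apply List.formPerm_apply_of_notMem
        intro hmem
        rw [List.mem_map] at hmem
        obtain ⟨e, he, heq⟩ := hmem
        exact hxn e (List.mem_range.mp he) heq
      have hprodx : ((List.range (p - 1)).reverse.map
          (fun i => ((List.range' (j (i + 1) + 1) (j i - j (i + 1))).map u).formPerm)).prod x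
          = x := by
        apply listprod_apply_eq_self
        intro f hf
        simp only [List.mem_map, List.mem_reverse, List.mem_range] at hf
        obtain ⟨k, hk, rfl⟩ := hf
        apply List.formPerm_apply_of_notMem
        intro hmem
        rw [List.mem_map] at hmem
        obtain ⟨e, he, heq⟩ := hmem
        rw [List.mem_range'_1] at he
        have : j k < q := hjq k (by omega)
        exact hxn e (by omega) heq
      rw [hLHS, Perm.mul_apply, hprodx]
      symm
      apply List.formPerm_apply_of_notMem
      intro hmem
      rw [List.mem_map] at hmem
      obtain ⟨e, he, heq⟩ := hmem
      exact hxn e (hBidxlt e he) heq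
  -- direction : explicit product → s = p
  have hDdir : μ * η =
      (((List.range' (j 0 + 1) (q - 1 - j 0)).map u ++
          (List.range (j (p - 1) + 1)).map u).formPerm) *
        ((List.range (p - 1)).reverse.map
          (fun i => ((List.range' (j (i + 1) + 1) (j i - j (i + 1))).map u).formPerm)).prod →
      s = p := by
    intro hiii
    have hAnodup : ∀ k, k < p - 1 → ((List.range' (j (k + 1) + 1) (j k - j (k + 1))).map u).Nodup := by
      intro k hk
      apply hmapnodup _ List.nodup_range'
      intro e he
      rw [List.mem_range'_1] at he
      have := hjq k (by omega)
      omega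
    have hAbound : ∀ k, k < p - 1 → ∀ e ∈ List.range' (j (k + 1) + 1) (j k - j (k + 1)), e < q := by
      intro k hk e he
      rw [List.mem_range'_1] at he
      have := hjq k (by omega)
      omega
    have hπprod : μ * η =
        ((((List.range' (j 0 + 1) (q - 1 - j 0)) ++ List.range (j (p - 1) + 1)).map u).formPerm ::
          (List.range (p - 1)).reverse.map
          (fun i => ((List.range' (j (i + 1) + 1) (j i - j (i + 1))).map u).formPerm)).prod := by
      rw [List.prod_cons, ← hlBidx]
      exact hiii
    have hpair : ((((List.range' (j 0 + 1) (q - 1 - j 0)) ++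
        List.range (j (p - 1) + 1)).map u).formPerm ::
        (List.range (p - 1)).reverse.map
        (fun i => ((List.range' (j (i + 1) + 1) (j i - j (i + 1))).map u).formPerm)).Pairwise
        Perm.Disjoint := by
      rw [List.pairwise_cons]
      constructor
      · intro f hf
        simp only [List.mem_map, List.mem_reverse, List.mem_range] at hf
        obtain ⟨k, hk, rfl⟩ := hf
        apply disjoint_formPerm_idx u huinj _ _ hBidxlt (hAbound k hk)
        intro e he hmem
        rw [List.mem_range'_1] at hmem
        have h1 := hjle 0 k (by omega) (by omega)
        have h2 := hjle (k + 1) (p - 1) (by omega) (by omega)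
        rcases List.mem_append.mp he with h | h
        · rw [List.mem_range'_1] at h; omega
        · rw [List.mem_range] at h; omega
      · rw [List.pairwise_map]
        apply List.Pairwise.imp_of_mem ?_ ((List.pairwise_reverse).mpr (List.pairwise_lt_range (n := p - 1)))
        intro a b ha hb hab
        rw [List.mem_reverse, List.mem_range] at ha hb
        apply disjoint_formPerm_idx u huinj _ _ (hAbound a ha) (hAbound b hb)
        intro e he hmem
        rw [List.mem_range'_1] at he hmem
        have h1 := hjle (b + 1) a (by omega) (by omega)
        omega
    obtain ⟨hsc, hcc⟩ := prod_stats _ hpair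
    rw [← hπprod] at hsc hcc
    simp only [List.map_cons, List.sum_cons] at hsc hcc
    have hstatB := formPerm_stats _ hBnd (List.length_pos_iff.mp (by rw [hBlen]; omega))
    rw [hBlen] at hstatB
    have hsum : ∀ n, n ≤ p - 1 →
        ((((List.range n).reverse.map
          (fun i => ((List.range' (j (i + 1) + 1) (j i - j (i + 1))).map u).formPerm)).map
            (fun f => f.support.card)).sum + n =
          (j 0 - j n) + (((List.range n).reverse.map
          (fun i => ((List.range' (j (i + 1) + 1) (j i - j (i + 1))).map u).formPerm)).map
            (fun f => Multiset.card f.cycleType)).sum) ∧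
        ((((List.range n).reverse.map
          (fun i => ((List.range' (j (i + 1) + 1) (j i - j (i + 1))).map u).formPerm)).map
            (fun f => Multiset.card f.cycleType)).sum ≤
          (((List.range n).reverse.map
          (fun i => ((List.range' (j (i + 1) + 1) (j i - j (i + 1))).map u).formPerm)).map
            (fun f => f.support.card)).sum) := by
      intro n
      induction n with
      | zero => intro _; simp
      | succ n ih =>
        intro hn
        obtain ⟨e1, e2⟩ := ih (by omega)
        have hstat := formPerm_stats ((List.range' (j (n + 1) + 1) (j n - j (n + 1))).map u)
          (hAnodup n (by omega)) (List.length_pos_iff.mp (by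
            simp only [List.length_map, List.length_range']
            have := hanti n (n + 1) (by omega) (by omega)
            omega))
        have hlenk : ((List.range' (j (n + 1) + 1) (j n - j (n + 1))).map u).length
            = j n - j (n + 1) := by simp
        rw [hlenk] at hstat
        have ha := hjle 0 n (by omega) (by omega)
        have hb := hanti n (n + 1) (by omega) (by omega)
        simp only [List.range_succ, List.reverse_append, List.reverse_singleton,
          List.singleton_append, List.map_cons, List.sum_cons]
        constructor <;> omega
    obtain ⟨hsum1, hsum2⟩ := hsum (p - 1) (le_refl _)
    rw [hs]
    omega
  exact ⟨hsle, ⟨hBdir, fun hii => hDdir (hCdir hii)⟩,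
    ⟨fun hsp => hCdir (hBdir hsp), hDdir⟩⟩
end

section
/- Suppose ∑_{j=1}^{r-1} (e_j − 1) = d − 1 and (σ_1, ..., σ_{r-1}) is a factorization of the d-cycle τ = (1 2 ⋯ d) of type (e_1, ..., e_{r-1}). Then for each 1 ≤ j ≤ r−1 the elements of σ_j appear clockwise on C_τ; that is, there exist integers 1 ≤ c_1 < c_2 < ... < c_{e_j} ≤ d such that σ_j is the cycle (c_1 c_2 ⋯ c_{e_j}). -/
open Equiv Equiv.Perm

namespace Clockwise

open Fin.NatCast Fin.CommRing


variable {α : Type*}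

/-- The setoid whose classes are the orbits (cycles) of a permutation. -/
def scSetoid (f : Perm α) : Setoid α :=
  ⟨f.SameCycle, ⟨fun x => Equiv.Perm.SameCycle.refl f x, fun h => h.symm, fun h h' => h.trans h'⟩⟩

/-- Number of orbits of a permutation. -/
noncomputable def nOrbits (f : Perm α) : ℕ := Nat.card (Quotient (scSetoid f))

/-- The setoid obtained from `s` by additionally identifying `a` and `b`. -/
def joinPair (s : Setoid α) (a b : α) : Setoid α where
  r x y := s.r x y ∨ (s.r x a ∧ s.r b y) ∨ (s.r x b ∧ s.r a y)
  iseqv := by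
    constructor
    · intro x; exact Or.inl (s.refl x)
    · rintro x y (h | ⟨h1, h2⟩ | ⟨h1, h2⟩)
      · exact Or.inl (s.symm h)
      · exact Or.inr (Or.inr ⟨s.symm h2, s.symm h1⟩)
      · exact Or.inr (Or.inl ⟨s.symm h2, s.symm h1⟩)
    · rintro x y z (h | ⟨h1, h2⟩ | ⟨h1, h2⟩) (h' | ⟨h1', h2'⟩ | ⟨h1', h2'⟩)
      · exact Or.inl (s.trans h h')
      · exact Or.inr (Or.inl ⟨s.trans h h1', h2'⟩)
      · exact Or.inr (Or.inr ⟨s.trans h h1', h2'⟩)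
      · exact Or.inr (Or.inl ⟨h1, s.trans h2 h'⟩)
      · exact Or.inl (s.trans h1 (s.trans (s.symm (s.trans h2 h1')) h2'))
      · exact Or.inl (s.trans h1 h2')
      · exact Or.inr (Or.inr ⟨h1, s.trans h2 h'⟩)
      · exact Or.inl (s.trans h1 h2')
      · exact Or.inl (s.trans h1 (s.trans (s.symm (s.trans h2 h1')) h2'))

lemma joinPair_le (s : Setoid α) (a b : α) {x y : α} (h : s.r x y) : (joinPair s a b).r x y :=
  Or.inl h

lemma joinPair_ab (s : Setoid α) (a b : α) : (joinPair s a b).r a b :=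
  Or.inr (Or.inl ⟨s.refl a, s.refl b⟩)

lemma card_le_joinPair [Finite α] (s : Setoid α) (a b : α) :
    Nat.card (Quotient s) ≤ Nat.card (Quotient (joinPair s a b)) + 1 := by
  classical
  set q := joinPair s a b with hq
  have hwd : ∀ x y : α, s.r x y →
      (if s.r x b ∧ ¬ s.r x a then (Sum.inr () : Quotient q ⊕ Unit)
        else Sum.inl (Quotient.mk q x)) =
      (if s.r y b ∧ ¬ s.r y a then (Sum.inr () : Quotient q ⊕ Unit)
        else Sum.inl (Quotient.mk q y)) := by
    intro x y hxy
    have hb : s.r x b ↔ s.r y b := ⟨fun h => s.trans (s.symm hxy) h, fun h => s.trans hxy h⟩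
    have ha : s.r x a ↔ s.r y a := ⟨fun h => s.trans (s.symm hxy) h, fun h => s.trans hxy h⟩
    by_cases h : s.r x b ∧ ¬ s.r x a
    · rw [if_pos h, if_pos ⟨hb.mp h.1, fun h' => h.2 (ha.mpr h')⟩]
    · rw [if_neg h, if_neg (by tauto)]
      exact congrArg _ (Quotient.sound (Or.inl hxy))
  let F : Quotient s → Quotient q ⊕ Unit :=
    Quotient.lift (fun x => if s.r x b ∧ ¬ s.r x a then (Sum.inr () : Quotient q ⊕ Unit)
      else Sum.inl (Quotient.mk q x)) hwd
  have hinj : Function.Injective F := by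
    intro q1 q2
    induction q1 using Quotient.ind
    induction q2 using Quotient.ind
    rename_i x y
    intro hF
    simp only [F, Quotient.lift_mk] at hF
    by_cases hx : s.r x b ∧ ¬ s.r x a <;> by_cases hy : s.r y b ∧ ¬ s.r y a
    · exact Quotient.sound (s.trans hx.1 (s.symm hy.1))
    · rw [if_pos hx, if_neg hy] at hF; exact absurd hF (by simp)
    · rw [if_neg hx, if_pos hy] at hF; exact absurd hF (by simp)
    · rw [if_neg hx, if_neg hy] at hF
      have hxy : q.r x y := Quotient.exact (Sum.inl.inj hF)
      rcases hxy with h | ⟨h1, h2⟩ | ⟨h1, h2⟩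
      · exact Quotient.sound h
      · -- x ~ a, b ~ y ; y doesn't satisfy (y~b ∧ ¬y~a) but y~b holds, so y~a
        have hyb : s.r y b := s.symm h2
        have hya : s.r y a := by tauto
        exact Quotient.sound (s.trans h1 (s.trans (s.symm hya) (s.refl y)))
      · -- x ~ b, a ~ y; x~b so x~a
        have hxa : s.r x a := by tauto
        exact Quotient.sound (s.trans hxa h2)
  calc Nat.card (Quotient s) ≤ Nat.card (Quotient q ⊕ Unit) :=
        Nat.card_le_card_of_injective F hinj
    _ = Nat.card (Quotient q) + 1 := by rw [Nat.card_sum]; simp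


section B
variable [DecidableEq α]

lemma sameCycle_le_joinPair (f : Perm α) (a b : α) {x y : α}
    (h : (swap a b * f).SameCycle x y) :
    (joinPair (scSetoid f) a b).r x y := by
  set s := scSetoid f with hs
  set q := joinPair s a b with hq
  have key : ∀ z : α, q.r z ((swap a b * f) z) := by
    intro z
    have h1 : q.r z (f z) := Or.inl ⟨1, by simp⟩
    have h2 : q.r (f z) ((swap a b * f) z) := by
      simp only [Perm.mul_apply]
      by_cases hza : f z = a
      · rw [hza, swap_apply_left]; exact joinPair_ab s a b
      · by_cases hzb : f z = b
        · rw [hzb, swap_apply_right]; exact q.symm (joinPair_ab s a b)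
        · rw [swap_apply_of_ne_of_ne hza hzb]
    exact q.trans h1 h2
  obtain ⟨i, hi⟩ := h
  set g := swap a b * f with hg
  have main : ∀ i : ℤ, q.r x ((g ^ i) x) := by
    intro i
    induction i using Int.induction_on with
    | zero => simpa using q.refl x
    | succ k ih =>
      have : g ^ ((k : ℤ) + 1) = g * g ^ (k : ℤ) := by
        rw [add_comm]; exact zpow_one_add g k
      rw [this]
      exact q.trans ih (key _)
    | pred k ih =>
      have : g ^ (-(k : ℤ) - 1) = g⁻¹ * g ^ (-(k : ℤ)) := by
        rw [sub_eq_add_neg, add_comm]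
        rw [zpow_add, zpow_neg_one]
      rw [this]
      refine q.trans ih ?_
      have := key (g⁻¹ ((g ^ (-(k : ℤ))) x))
      simp only [Perm.inv_def, Equiv.apply_symm_apply] at this
      exact q.symm this
  have := main i
  rwa [hi] at this

lemma nOrbits_step [Finite α] (f : Perm α) (a b : α) :
    nOrbits f ≤ nOrbits (swap a b * f) + 1 := by
  set s := scSetoid f with hs
  set q := joinPair s a b with hq
  set g := swap a b * f with hg
  have hle : Nat.card (Quotient q) ≤ nOrbits g := by
    have hsurj : Function.Surjective
        (Quotient.map' (fun x => x) (fun x y h => sameCycle_le_joinPair f a b h) :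
          Quotient (scSetoid g) → Quotient q) := by
      intro z
      induction z using Quotient.ind
      rename_i x
      exact ⟨Quotient.mk _ x, rfl⟩
    exact Nat.card_le_card_of_surjective _ hsurj
  calc nOrbits f ≤ Nat.card (Quotient q) + 1 := card_le_joinPair s a b
    _ ≤ nOrbits g + 1 := by omega

lemma card_le_nOrbits_add_length [Finite α] (l : List (Perm α))
    (hl : ∀ t ∈ l, t.IsSwap) :
    Nat.card α ≤ nOrbits l.prod + l.length := by
  induction l with
  | nil =>
    simp only [List.prod_nil, List.length_nil, add_zero]
    refine Nat.card_le_card_of_injective (Quotient.mk (scSetoid 1)) ?_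
    intro x y h
    have := Quotient.exact h
    exact (Equiv.Perm.sameCycle_one (x := x) (y := y)).mp this
  | cons t l ih =>
    obtain ⟨a, b, hab, rfl⟩ := hl t List.mem_cons_self
    have h1 := ih (fun u hu => hl u (List.mem_cons_of_mem _ hu))
    have h2 := nOrbits_step l.prod a b
    simp only [List.prod_cons, List.length_cons]
    omega

end B

section C

variable {β : Type*} [DecidableEq β] [Fintype β]

lemma formPerm_swap_list (l : List β) (hl : l.Nodup) :
    ∃ w : List (Perm β), (∀ t ∈ w, t.IsSwap) ∧ w.prod = l.formPerm ∧
      w.length + 1 = max l.length 1 := by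
  refine ⟨List.zipWith Equiv.swap l l.tail, ?_, rfl, ?_⟩
  · intro t ht
    rw [List.mem_iff_getElem] at ht
    obtain ⟨i, hi, rfl⟩ := ht
    rw [List.length_zipWith] at hi
    have hi1 : i < l.length := lt_of_lt_of_le hi (min_le_left _ _)
    have hi2 : i < l.tail.length := lt_of_lt_of_le hi (min_le_right _ _)
    rw [List.getElem_zipWith]
    refine ⟨l[i], l.tail[i], ?_, rfl⟩
    rw [List.getElem_tail]
    intro h
    have := (List.Nodup.getElem_inj_iff hl).mp h
    omega
  · rw [List.length_zipWith, List.length_tail]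
    cases l with
    | nil => simp
    | cons x xs => simp only [List.length_cons, List.length_tail]; omega

lemma cycle_swap_list {g : Perm β} (hg : g.IsCycle) :
    ∃ w : List (Perm β), (∀ t ∈ w, t.IsSwap) ∧ w.prod = g ∧
      w.length + 1 = g.support.card := by
  obtain ⟨x, hx, -⟩ := id hg
  have hx' : x ∈ g.support := mem_support.mpr hx
  have hform : (g.toList x).formPerm = g := by
    rw [Equiv.Perm.formPerm_toList, hg.cycleOf_eq hx]
  have hlen : (g.toList x).length = g.support.card := by
    rw [Equiv.Perm.length_toList, hg.cycleOf_eq hx]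
  obtain ⟨w, hw1, hw2, hw3⟩ := formPerm_swap_list (g.toList x) (Equiv.Perm.nodup_toList g x)
  refine ⟨w, hw1, by rw [hw2, hform], ?_⟩
  have h2 : 2 ≤ (g.toList x).length := by
    rw [hlen]; exact hg.two_le_card_support
  rw [← hlen]
  omega

lemma cycles_swap_list (L : List (Perm β)) (hL : ∀ g ∈ L, g.IsCycle) :
    ∃ w : List (Perm β), (∀ t ∈ w, t.IsSwap) ∧ w.prod = L.prod ∧
      w.length = (L.map (fun g => g.support.card - 1)).sum := by
  induction L with
  | nil => exact ⟨[], by simp, by simp, by simp⟩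
  | cons g L ih =>
    obtain ⟨w1, h11, h12, h13⟩ := cycle_swap_list (hL g List.mem_cons_self)
    obtain ⟨w2, h21, h22, h23⟩ := ih (fun u hu => hL u (List.mem_cons_of_mem _ hu))
    refine ⟨w1 ++ w2, ?_, ?_, ?_⟩
    · intro t ht; rcases List.mem_append.mp ht with h | h
      · exact h11 t h
      · exact h21 t h
    · rw [List.prod_append, h12, h22, List.prod_cons]
    · rw [List.length_append, List.map_cons, List.sum_cons, h23]
      omega


end C

section D

variable {n : ℕ}



-- walk lemma
lemma walk (σ : Perm (Fin (n+1))) (x : Fin (n+1)) (m : ℕ)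
    (h : ∀ i : ℕ, 1 ≤ i → i ≤ m → x + (i : Fin (n+1)) ∉ σ.support) :
    ((σ⁻¹ * finRotate (n+1)) ^ m) x = x + (m : Fin (n+1)) := by
  induction m with
  | zero => simp
  | succ m ih =>
    have ih' := ih (fun i h1 h2 => h i h1 (le_trans h2 (Nat.le_succ m)))
    have hnot : x + ((m+1 : ℕ) : Fin (n+1)) ∉ σ.support := h (m+1) (by omega) le_rfl
    have hfix : σ⁻¹ (x + ((m+1 : ℕ) : Fin (n+1))) = x + ((m+1 : ℕ) : Fin (n+1)) := by
      have : x + ((m+1 : ℕ) : Fin (n+1)) ∉ σ⁻¹.support := by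
        rwa [Equiv.Perm.support_inv]
      exact Equiv.Perm.notMem_support.mp this
    rw [pow_succ', Perm.mul_apply, ih', Perm.mul_apply, finRotate_succ_apply]
    have hc : x + ((m : ℕ) : Fin (n+1)) + 1 = x + ((m+1 : ℕ) : Fin (n+1)) := by
      push_cast; ring
    rw [hc, hfix]

lemma orbit_hits_marked (σ : Perm (Fin (n+1))) (hne : σ.support.Nonempty) (x : Fin (n+1)) :
    ∃ y, (σ⁻¹ * finRotate (n+1)).SameCycle x y ∧ y + 1 ∈ σ.support := by
  by_contra hcon
  push_neg at hcon
  set π := σ⁻¹ * finRotate (n+1) with hπ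
  have key : ∀ m : ℕ, (π ^ m) x = x + (m : Fin (n+1)) := by
    intro m
    induction m with
    | zero => simp
    | succ m ih =>
      have hsc : π.SameCycle x ((π ^ m) x) := ⟨m, by rw [zpow_natCast]⟩
      have hnot := hcon _ hsc
      rw [ih] at hnot
      have hfix : σ⁻¹ (x + ((m : ℕ) : Fin (n+1)) + 1) = x + ((m : ℕ) : Fin (n+1)) + 1 := by
        have : x + ((m : ℕ) : Fin (n+1)) + 1 ∉ σ⁻¹.support := by
          rwa [Equiv.Perm.support_inv]
        exact Equiv.Perm.notMem_support.mp this
      rw [pow_succ', Perm.mul_apply, ih, hπ, Perm.mul_apply, finRotate_succ_apply, hfix]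
      push_cast; ring
  obtain ⟨s, hs⟩ := hne
  set y := s - 1 with hy
  have hsc : π.SameCycle x y := by
    refine ⟨((y - x).val : ℕ), ?_⟩
    rw [zpow_natCast, key, Fin.cast_val_eq_self]
    ring
  have := hcon y hsc
  rw [hy, sub_add_cancel] at this
  exact this hs


end D

section E

variable {n : ℕ}

lemma val_add_cast (x : Fin (n+1)) (k : ℕ) (hk : k < n+1) :
    (x + (k : Fin (n+1))).val = (x.val + k) % (n+1) := by
  rw [Fin.add_def, Fin.val_natCast, Nat.mod_eq_of_lt hk]

lemma cast_fin_eq (x : Fin (n+1)) (k : ℕ) (h : x.val + k < n + 1) :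
    (x + (k : Fin (n+1))).val = x.val + k := by
  rw [val_add_cast x k (by omega), Nat.mod_eq_of_lt h]

lemma cast_fin_eq_wrap (x : Fin (n+1)) (k : ℕ) (hk : k < n+1) (h : n + 1 ≤ x.val + k) :
    (x + (k : Fin (n+1))).val = x.val + k - (n+1) := by
  rw [val_add_cast x k hk, Nat.mod_eq_sub_mod h, Nat.mod_eq_of_lt (by omega)]

lemma formPerm_sort_step (S : Finset (Fin (n+1))) (h2 : 2 ≤ S.card)
    (x : Fin (n+1)) (hx : x ∈ S) :
    ∃ k : ℕ, 1 ≤ k ∧ x + (k : Fin (n+1)) ∈ S ∧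
      (∀ j : ℕ, 1 ≤ j → j < k → x + (j : Fin (n+1)) ∉ S) ∧
      (S.sort (· ≤ ·)).formPerm x = x + (k : Fin (n+1)) := by
  classical
  set l := S.sort (· ≤ ·) with hl
  have hnd : l.Nodup := S.sort_nodup _
  have hsorted : l.Pairwise (· < ·) := S.sortedLT_sort.pairwise
  have hlen : l.length = S.card := S.length_sort _
  have hmem : ∀ y, y ∈ l ↔ y ∈ S := fun y => Finset.mem_sort _
  have hpw : ∀ (a b : ℕ) (ha : a < l.length) (hb : b < l.length), a < b → l[a] < l[b] :=
    fun a b ha hb hab => List.pairwise_iff_getElem.mp hsorted a b ha hb hab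
  obtain ⟨i, hi, hxi⟩ := List.mem_iff_getElem.mp ((hmem x).mpr hx)
  have hform : l.formPerm x = l[(i+1) % l.length]'(Nat.mod_lt _ (by omega)) := by
    rw [← hxi]
    exact List.formPerm_apply_getElem l hnd i hi
  have hval : ∀ (z : Fin (n+1)), z ∈ S → ∃ m, ∃ hm : m < l.length, l[m] = z :=
    fun z hz => List.mem_iff_getElem.mp ((hmem z).mpr hz)
  by_cases hcase : i + 1 < l.length
  · -- not last element
    set s := l[i+1] with hs
    have hmod : (i+1) % l.length = i + 1 := Nat.mod_eq_of_lt hcase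
    have hlt : x < s := hxi ▸ hpw i (i+1) hi hcase (by omega)
    have hltv : x.val < s.val := hlt
    have hsn : s.val < n + 1 := s.isLt
    set k := s.val - x.val with hk
    have hcast : x + (k : Fin (n+1)) = s :=
      Fin.ext (by rw [cast_fin_eq x k (by omega)]; omega)
    refine ⟨k, by omega, ?_, ?_, ?_⟩
    · rw [hcast]; exact (hmem s).mp (List.getElem_mem _)
    · intro j hj1 hj2 hmemS
      have hv : (x + (j : Fin (n+1))).val = x.val + j := cast_fin_eq x j (by omega)
      obtain ⟨m, hm, hml⟩ := hval _ hmemS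
      have h1 : ¬ (m ≤ i) := by
        intro hle
        have hle2 : l[m] ≤ l[i] := by
          rcases eq_or_lt_of_le hle with rfl | hlt'
          · exact le_rfl
          · exact le_of_lt (hpw m i hm hi hlt')
        rw [hml, hxi] at hle2
        have h3 : (x + (j : Fin (n+1))).val ≤ x.val := hle2
        omega
      have h2' : ¬ (i + 1 ≤ m) := by
        intro hle
        have hle2 : l[i+1] ≤ l[m] := by
          rcases eq_or_lt_of_le hle with h | hlt'
          · simp [h]
          · exact le_of_lt (hpw (i+1) m hcase hm hlt')
        rw [hml] at hle2
        have h3 : s.val ≤ (x + (j : Fin (n+1))).val := hle2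
        omega
      omega
    · rw [hform]
      have h4 : l[(i+1) % l.length]'(Nat.mod_lt _ (by omega)) = s := by
        simp only [hmod, hs]
      rw [h4, hcast]
  · -- last element wraps to head
    have hieq : i + 1 = l.length := by omega
    have hlen2 : 2 ≤ l.length := by rw [hlen]; exact h2
    have h0 : 0 < l.length := by omega
    set s := l[0]'h0 with hs
    have hmod : (i+1) % l.length = 0 := by rw [hieq, Nat.mod_self]
    have hlt : s < x := hxi ▸ hpw 0 i h0 hi (by omega)
    have hltv : s.val < x.val := hlt
    have hxn : x.val < n + 1 := x.isLt
    have hsn : s.val < n + 1 := s.isLt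
    set k := s.val + (n+1) - x.val with hk
    have hcast : x + (k : Fin (n+1)) = s :=
      Fin.ext (by rw [cast_fin_eq_wrap x k (by omega) (by omega)]; omega)
    refine ⟨k, by omega, ?_, ?_, ?_⟩
    · rw [hcast]; exact (hmem s).mp (List.getElem_mem _)
    · intro j hj1 hj2 hmemS
      obtain ⟨m, hm, hml⟩ := hval _ hmemS
      by_cases hsmall : x.val + j < n + 1
      · have hv : (x + (j : Fin (n+1))).val = x.val + j := cast_fin_eq x j hsmall
        have hle2 : l[m] ≤ l[i] := by
          rcases eq_or_lt_of_le (by omega : m ≤ i) with rfl | hlt'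
          · exact le_rfl
          · exact le_of_lt (hpw m i hm hi hlt')
        rw [hml, hxi] at hle2
        have h3 : (x + (j : Fin (n+1))).val ≤ x.val := hle2
        omega
      · have hv : (x + (j : Fin (n+1))).val = x.val + j - (n+1) :=
          cast_fin_eq_wrap x j (by omega) (by omega)
        have hle2 : l[0] ≤ l[m] := by
          rcases Nat.eq_or_lt_of_le (Nat.zero_le m) with h | hlt'
          · simp [← h]
          · exact le_of_lt (hpw 0 m h0 hm hlt')
        rw [hml] at hle2
        have h3 : s.val ≤ (x + (j : Fin (n+1))).val := hle2
        omega
    · rw [hform]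
      have h4 : l[(i+1) % l.length]'(Nat.mod_lt _ (by omega)) = s := by
        simp only [hmod, hs]
      rw [h4, hcast]

lemma key_unique {S : Finset (Fin (n+1))} {x : Fin (n+1)} {k k' : ℕ}
    (h : 1 ≤ k ∧ x + (k : Fin (n+1)) ∈ S ∧ ∀ j : ℕ, 1 ≤ j → j < k → x + (j : Fin (n+1)) ∉ S)
    (h' : 1 ≤ k' ∧ x + (k' : Fin (n+1)) ∈ S ∧ ∀ j : ℕ, 1 ≤ j → j < k' → x + (j : Fin (n+1)) ∉ S) :
    k = k' := by
  rcases lt_trichotomy k k' with hlt | heq | hgt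
  · exact absurd h.2.1 (h'.2.2 k h.1 hlt)
  · exact heq
  · exact absurd h'.2.1 (h.2.2 k' h'.1 hgt)


end E


section F
variable {n : ℕ}

lemma sigma_apply_eq (σ : Perm (Fin (n+1))) (hne : σ.support.Nonempty)
    (hc : σ.support.card ≤ nOrbits (σ⁻¹ * finRotate (n+1))) :
    ∀ x ∈ σ.support, ∃ k : ℕ, 1 ≤ k ∧ x + (k : Fin (n+1)) ∈ σ.support ∧
      (∀ j : ℕ, 1 ≤ j → j < k → x + (j : Fin (n+1)) ∉ σ.support) ∧
      σ x = x + (k : Fin (n+1)) := by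
  classical
  set π := σ⁻¹ * finRotate (n+1) with hπ
  set M : Finset (Fin (n+1)) := σ.support.image (fun s => s - 1) with hM
  have hsubinj : Function.Injective (fun s : Fin (n+1) => s - 1) := by
    intro u v h
    have h2 := congrArg (fun z : Fin (n+1) => z + 1) h
    simpa [sub_add_cancel] using h2
  have hMcard : M.card = σ.support.card := Finset.card_image_of_injective _ hsubinj
  set Φ : {y // y ∈ M} → Quotient (scSetoid π) := fun y => Quotient.mk _ (y : Fin (n+1))
    with hΦ
  have hsurj : Function.Surjective Φ := by
    intro q
    induction q using Quotient.ind
    rename_i z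
    obtain ⟨y, hsc, hy1⟩ := orbit_hits_marked σ hne z
    have hyM : y ∈ M := Finset.mem_image.mpr ⟨y + 1, hy1, by ring⟩
    exact ⟨⟨y, hyM⟩, Quotient.sound hsc.symm⟩
  have hcard1 : Nat.card {y // y ∈ M} = M.card := by
    rw [Nat.card_eq_fintype_card, Fintype.card_coe]
  have hcardeq : Nat.card {y // y ∈ M} = Nat.card (Quotient (scSetoid π)) := by
    have h1 : Nat.card (Quotient (scSetoid π)) ≤ Nat.card {y // y ∈ M} :=
      Nat.card_le_card_of_surjective Φ hsurj
    have h2 : σ.support.card ≤ Nat.card (Quotient (scSetoid π)) := hc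
    omega
  have hbij : Function.Bijective Φ :=
    (Nat.bijective_iff_surjective_and_card Φ).mpr ⟨hsurj, hcardeq⟩
  intro x hx
  have hex : ∃ k : ℕ, 1 ≤ k ∧ x + (k : Fin (n+1)) ∈ σ.support :=
    ⟨n+1, by omega, by rw [Fin.natCast_self, add_zero]; exact hx⟩
  set k := Nat.find hex with hk
  obtain ⟨hk1, hkS⟩ := Nat.find_spec hex
  have hmin : ∀ j : ℕ, 1 ≤ j → j < k → x + (j : Fin (n+1)) ∉ σ.support := by
    intro j hj1 hj2 hmem
    exact Nat.find_min hex hj2 ⟨hj1, hmem⟩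
  -- first marked point: x + (k-1)
  set y1 := x + ((k - 1 : ℕ) : Fin (n+1)) with hy1
  have hy1p1 : y1 + 1 = x + (k : Fin (n+1)) := by
    have h5 : (k - 1) + 1 = k := by omega
    have h6 : ((k - 1 : ℕ) : Fin (n+1)) + 1 = ((k : ℕ) : Fin (n+1)) := by
      rw [← h5]; push_cast; ring
    rw [hy1, add_assoc, h6]
  have hy1M : y1 ∈ M := Finset.mem_image.mpr ⟨x + (k : Fin (n+1)), hkS, by rw [← hy1p1]; ring⟩
  have hsc1 : π.SameCycle x y1 := by
    refine ⟨(k - 1 : ℕ), ?_⟩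
    rw [zpow_natCast, hπ, walk σ x (k-1) (fun i h1 h2 => hmin i h1 (by omega))]
  -- second marked point: σ x - 1
  set y2 := σ x - 1 with hy2
  have hy2M : y2 ∈ M := Finset.mem_image.mpr ⟨σ x, Equiv.Perm.apply_mem_support.mpr hx, rfl⟩
  have hsc2 : π.SameCycle x y2 := by
    have : π y2 = x := by
      rw [hπ, Perm.mul_apply, finRotate_succ_apply, hy2, sub_add_cancel,
        Equiv.Perm.inv_def, Equiv.symm_apply_apply]
    have h7 : π.SameCycle y2 x := ⟨1, by rw [zpow_one, this]⟩
    exact h7.symm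
  have heq : (⟨y1, hy1M⟩ : {y // y ∈ M}) = ⟨y2, hy2M⟩ := by
    apply hbij.1
    show Quotient.mk _ y1 = Quotient.mk _ y2
    exact (Quotient.sound hsc1.symm).trans (Quotient.sound hsc2)
  have heq2 : y1 = y2 := congrArg Subtype.val heq
  refine ⟨k, hk1, hkS, hmin, ?_⟩
  have : σ x = y2 + 1 := by rw [hy2, sub_add_cancel]
  rw [this, ← heq2, hy1p1]

end F
section G
variable {n : ℕ}

lemma conj_list_prod {G : Type*} [Group G] (g : G) (l : List G) :
    (l.map (fun t => g * t * g⁻¹)).prod = g * l.prod * g⁻¹ := by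
  induction l with
  | nil => simp
  | cons a l ih => simp only [List.map_cons, List.prod_cons, ih]; group

lemma isSwap_conj {α : Type*} [DecidableEq α] {t : Perm α} (ht : t.IsSwap) (g : Perm α) :
    (g * t * g⁻¹).IsSwap := by
  obtain ⟨a, b, hab, rfl⟩ := ht
  exact ⟨g a, g b, fun h => hab (g.injective h), (Equiv.swap_apply_apply g a b).symm⟩

lemma cycle_clockwise (σ : Perm (Fin (n+1))) (hcy : σ.IsCycle)
    (hc : σ.support.card ≤ nOrbits (σ⁻¹ * finRotate (n+1))) :
    ∃ l : List (Fin (n+1)), l.length = σ.support.card ∧ l.Pairwise (· < ·) ∧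
      σ = l.formPerm := by
  classical
  refine ⟨σ.support.sort (· ≤ ·), σ.support.length_sort _, σ.support.sortedLT_sort.pairwise, ?_⟩
  have h2 : 2 ≤ σ.support.card := hcy.two_le_card_support
  have hne : σ.support.Nonempty := Finset.card_pos.mp (by omega)
  ext x
  by_cases hx : x ∈ σ.support
  · obtain ⟨k, hk⟩ := sigma_apply_eq σ hne hc x hx
    obtain ⟨k', hk'⟩ := formPerm_sort_step σ.support h2 x hx
    have hkk : k = k' := key_unique ⟨hk.1, hk.2.1, hk.2.2.1⟩ ⟨hk'.1, hk'.2.1, hk'.2.2.1⟩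
    rw [hk.2.2.2, hk'.2.2.2, hkk]
  · rw [Equiv.Perm.notMem_support.mp hx,
      List.formPerm_apply_of_notMem (by rwa [Finset.mem_sort])]

end G
end Clockwise


open Clockwise in
/-- **Corollary 3.10(i).** Assume `∑ (e_j - 1) = d - 1` and let `(σ₁, …, σ_{r-1})` be a
factorization of the `d`-cycle `τ = (1 2 ⋯ d)` (modelled as `finRotate d = (0 1 ⋯ d-1)`
on `Fin d`) of type `(e₁, …, e_{r-1})`. Then for each `j` the elements of `σ_j` appear
clockwise on `C_τ`: `σ_j` is the cycle `(c₁ c₂ ⋯ c_{e_j})` for some increasing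
`c₁ < c₂ < ⋯ < c_{e_j}`. -/
theorem factorization_cycles_clockwise (d r : ℕ) (hd : 2 ≤ d) (hr : 2 ≤ r)
    (e : Fin (r - 1) → ℕ) (he : ∀ j, 2 ≤ e j)
    (hsum : ∑ j, (e j - 1) = d - 1)
    (σ : Fin (r - 1) → Perm (Fin d))
    (hσ : (∀ j, (σ j).IsCycle ∧ (σ j).support.card = e j) ∧
      (List.ofFn σ).prod = finRotate d) :
    ∀ j : Fin (r - 1), ∃ l : List (Fin d),
      l.length = e j ∧ l.Pairwise (· < ·) ∧ σ j = l.formPerm := by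
  classical
  obtain ⟨n, rfl⟩ : ∃ n, d = n + 1 := ⟨d - 1, by omega⟩
  intro j
  obtain ⟨hcycs, hprod⟩ := hσ
  set L := List.ofFn σ with hL
  have hlenL : L.length = r - 1 := by rw [hL, List.length_ofFn]
  have hjlt : (j : ℕ) < L.length := by rw [hlenL]; exact j.isLt
  have hgetj : L[(j : ℕ)]'hjlt = σ j := by
    simp only [hL, List.getElem_ofFn, Fin.eta]
  have hsplit : L = L.take j ++ σ j :: L.drop ((j : ℕ)+1) := by
    conv_lhs => rw [← List.take_append_drop (j : ℕ) L]
    rw [List.drop_eq_getElem_cons hjlt, hgetj]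
  -- all members are cycles
  have hmemcyc : ∀ g ∈ L, g.IsCycle := by
    intro g hg
    rw [hL, List.mem_ofFn] at hg
    obtain ⟨i, rfl⟩ := hg
    exact (hcycs i).1
  obtain ⟨wT, hT1, hT2, hT3⟩ := cycles_swap_list (L.take j)
    (fun g hg => hmemcyc g (List.mem_of_mem_take hg))
  obtain ⟨wD, hD1, hD2, hD3⟩ := cycles_swap_list (L.drop ((j : ℕ)+1))
    (fun g hg => hmemcyc g (List.mem_of_mem_drop hg))
  -- sum of (support.card - 1) over L equals n
  have hmapsum : (L.map (fun g => g.support.card - 1)).sum = n := by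
    rw [hL, List.map_ofFn, List.sum_ofFn]
    have heq : ∑ i, ((fun g : Perm (Fin (n+1)) => g.support.card - 1) ∘ σ) i
        = ∑ i, (e i - 1) :=
      Finset.sum_congr rfl (fun i _ => by simp [(hcycs i).2])
    rw [heq, hsum]
    omega
  have hsummap : wT.length + ((σ j).support.card - 1) + wD.length = n := by
    have := hmapsum
    rw [hsplit, List.map_append, List.map_cons, List.sum_append, List.sum_cons] at this
    rw [hT3, hD3]
    omega
  -- π = σ j⁻¹ * finRotate is a product of wT.length + wD.length swaps
  set σj := σ j with hσj
  set π := σj⁻¹ * finRotate (n+1) with hπ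
  have hfactor : π = (σj⁻¹ * wT.prod * σj) * wD.prod := by
    have h0 : finRotate (n+1) = wT.prod * (σj * wD.prod) := by
      rw [← hprod, hT2, hD2]
      conv_lhs => rw [hsplit]
      rw [List.prod_append, List.prod_cons]
    rw [hπ, h0]
    group
  set wAll := (wT.map (fun t => σj⁻¹ * t * σj)) ++ wD with hwAll
  have hAllswap : ∀ t ∈ wAll, t.IsSwap := by
    intro t ht
    rcases List.mem_append.mp ht with h | h
    · rw [List.mem_map] at h
      obtain ⟨u, hu, rfl⟩ := h
      have := isSwap_conj (hT1 u hu) σj⁻¹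
      simpa using this
    · exact hD1 t h
  have hAllprod : wAll.prod = π := by
    rw [hwAll, List.prod_append, hfactor]
    congr 1
    have := conj_list_prod (σj⁻¹) wT
    simpa using this
  have hAlllen : wAll.length = wT.length + wD.length := by
    rw [hwAll, List.length_append, List.length_map]
  have hcount := card_le_nOrbits_add_length wAll hAllswap
  rw [hAllprod] at hcount
  have hcardfin : Nat.card (Fin (n+1)) = n + 1 := by
    rw [Nat.card_eq_fintype_card, Fintype.card_fin]
  rw [hcardfin, hAlllen] at hcount
  have hsupcard : (σ j).support.card = e j := (hcycs j).2
  have hc : σj.support.card ≤ nOrbits (σj⁻¹ * finRotate (n+1)) := by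
    have h2e : 2 ≤ (σ j).support.card := (hcycs j).1.two_le_card_support
    rw [← hπ]
    omega
  obtain ⟨l, hl1, hl2, hl3⟩ := cycle_clockwise σj (hcycs j).1 hc
  exact ⟨l, by rw [hl1, hσj, hsupcard], hl2, by rw [hσj] at hl3; exact hl3⟩
end

section
/- Suppose ∑_{j=1}^{r-1} (e_j − 1) = d − 1 and τ ∈ S_d is a d-cycle. If (σ_1, ..., σ_{r-1}) and (σ'_1, ..., σ'_{r-1}) are both factorizations of τ of type (e_1, ..., e_{r-1}) and supp(σ_j) = supp(σ'_j) for every 1 ≤ j ≤ r−1, then σ_j = σ'_j for every j. Consequently, the map sending a factorization to its factorization graph is a bijection from Fac(d, r, τ; e_1, ..., e_{r-1}) onto the set G*_S(d, r, τ; e_1, ..., e_{r-1}) of factorization graphs. -/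
open Equiv Equiv.Perm SimpleGraph

namespace Cor311

variable {α : Type*} [Fintype α] [DecidableEq α]

set_option linter.unusedSectionVars false in
theorem sameCycle_nat {π : Equiv.Perm α} {x y : α} :
    π.SameCycle x y ↔ ∃ n : ℕ, (π ^ n) x = y := by
  constructor
  · intro h
    obtain ⟨i, _, hi⟩ := h.exists_pow_eq'
    exact ⟨i, hi⟩
  · rintro ⟨n, rfl⟩
    exact ⟨(n : ℤ), by rw [zpow_natCast]⟩

/-- The number of orbits (cycles, including fixed points) of a permutation. -/
noncomputable def Om (π : Equiv.Perm α) : ℕ := Nat.card (Quotient (Equiv.Perm.SameCycle.setoid π))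

set_option linter.unusedSectionVars false in
theorem Om_one : Om (1 : Equiv.Perm α) = Fintype.card α := by
  rw [← Nat.card_eq_fintype_card]
  apply Nat.card_congr
  refine Equiv.ofBijective (Quotient.lift id ?_) ⟨?_, ?_⟩
  · intro a b (h : Equiv.Perm.SameCycle 1 a b)
    exact sameCycle_one.mp h
  · intro q1 q2
    induction q1 using Quotient.ind
    induction q2 using Quotient.ind
    intro h
    exact Quotient.sound (sameCycle_one.mpr h)
  · intro x
    exact ⟨⟦x⟧, rfl⟩

set_option linter.unusedSectionVars false in
theorem Om_conj (u π : Equiv.Perm α) : Om (u * π * u⁻¹) = Om π := by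
  apply Nat.card_congr
  refine Quotient.congr u.symm ?_
  intro x y
  show (u * π * u⁻¹).SameCycle x y ↔ π.SameCycle (u.symm x) (u.symm y)
  constructor
  · rintro ⟨i, hi⟩
    refine ⟨i, ?_⟩
    have hcp : (u * π * u⁻¹) ^ i = u * π ^ i * u⁻¹ := by rw [conj_zpow]
    rw [hcp] at hi
    simp only [mul_apply] at hi
    have := congrArg u.symm hi
    simpa using this
  · rintro ⟨i, hi⟩
    refine ⟨i, ?_⟩
    have hcp : (u * π * u⁻¹) ^ i = u * π ^ i * u⁻¹ := by rw [conj_zpow]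
    rw [hcp]
    simp only [mul_apply]
    have := congrArg u hi
    simpa using this

set_option linter.unusedSectionVars false in
theorem inv_lemma (π : Equiv.Perm α) (a b : α) {x y : α}
    (h : (π * Equiv.swap a b).SameCycle x y) :
    π.SameCycle x y ∨ (π.SameCycle x a ∧ π.SameCycle y b) ∨
      (π.SameCycle x b ∧ π.SameCycle y a) := by
  set ρ := π * Equiv.swap a b with hρ
  obtain ⟨n, rfl⟩ := sameCycle_nat.mp h
  clear h
  induction n with
  | zero => exact Or.inl (by simp [SameCycle.refl])
  | succ n ih =>
    set z := (ρ ^ n) x with hz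
    have hstep : (ρ ^ (n + 1)) x = π (Equiv.swap a b z) := by
      rw [pow_succ' ρ n, mul_apply, hρ, mul_apply]
    by_cases hza : z = a
    · rw [hstep, hza, swap_apply_left]
      have hb : π.SameCycle (π b) b := (sameCycle_apply_right.mpr (SameCycle.refl _ _)).symm
      rcases ih with h1 | ⟨h2, h2'⟩ | ⟨h3, h3'⟩
      · exact Or.inr (Or.inl ⟨hza ▸ h1, hb⟩)
      · exact Or.inl (h2.trans ((hza ▸ h2').trans hb.symm))
      · exact Or.inl (h3.trans hb.symm)
    · by_cases hzb : z = b
      · rw [hstep, hzb, swap_apply_right]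
        have ha : π.SameCycle (π a) a := (sameCycle_apply_right.mpr (SameCycle.refl _ _)).symm
        rcases ih with h1 | ⟨h2, h2'⟩ | ⟨h3, h3'⟩
        · exact Or.inr (Or.inr ⟨hzb ▸ h1, ha⟩)
        · exact Or.inl (h2.trans ha.symm)
        · exact Or.inl (h3.trans ((hzb ▸ h3').trans ha.symm))
      · rw [hstep, swap_apply_of_ne_of_ne hza hzb]
        have hz' : π.SameCycle z (π z) := sameCycle_apply_right.mpr (SameCycle.refl _ _)
        rcases ih with h1 | ⟨h2, h2'⟩ | ⟨h3, h3'⟩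
        · exact Or.inl (h1.trans hz')
        · exact Or.inr (Or.inl ⟨h2, hz'.symm.trans h2'⟩)
        · exact Or.inr (Or.inr ⟨h3, hz'.symm.trans h3'⟩)

set_option linter.unusedSectionVars false in
theorem merge_lemma (π : Equiv.Perm α) {a b : α} (_hab : a ≠ b)
    (h : ¬ π.SameCycle a b) : (π * Equiv.swap a b).SameCycle a b := by
  set ρ := π * Equiv.swap a b with hρ
  have hex : ∃ m, 0 < m ∧ (π ^ m) b = b :=
    ⟨orderOf π, orderOf_pos π, by rw [pow_orderOf_eq_one]; rfl⟩
  classical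
  let m₀ := Nat.find hex
  obtain ⟨hm₀pos, hm₀⟩ : 0 < m₀ ∧ (π ^ m₀) b = b := Nat.find_spec hex
  have key : ∀ k, 0 < k → k ≤ m₀ → (ρ ^ k) a = (π ^ k) b := by
    intro k hk hkm
    induction k with
    | zero => omega
    | succ k ih =>
      rcases Nat.eq_zero_or_pos k with rfl | hkpos
      · simp [hρ, mul_apply, swap_apply_left]
      · have hk' : (ρ ^ k) a = (π ^ k) b := ih hkpos (by omega)
        have hne_b : (π ^ k) b ≠ b := by
          intro hcon
          exact (Nat.find_min hex (show k < m₀ by omega)) ⟨hkpos, hcon⟩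
        have hne_a : (π ^ k) b ≠ a := by
          intro hcon
          exact h (SameCycle.symm ⟨(k : ℤ), by rw [zpow_natCast]; exact hcon⟩)
        rw [pow_succ' ρ k, mul_apply, hk', hρ, mul_apply,
          swap_apply_of_ne_of_ne hne_a hne_b, ← mul_apply, ← pow_succ' π k]
  exact ⟨(m₀ : ℤ), by rw [zpow_natCast, key m₀ hm₀pos le_rfl, hm₀]⟩

set_option linter.unusedSectionVars false in
theorem Om_le_swap_mul (π : Equiv.Perm α) {a b : α} (hab : a ≠ b) :
    Om π ≤ Om (π * Equiv.swap a b) + 1 := by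
  classical
  set ρ := π * Equiv.swap a b with hρ
  have hπρ : π = ρ * Equiv.swap a b := by
    rw [hρ, mul_assoc, Equiv.swap_mul_self, mul_one]
  have invρ : ∀ {x y : α}, π.SameCycle x y →
      ρ.SameCycle x y ∨ (ρ.SameCycle x a ∧ ρ.SameCycle y b) ∨
        (ρ.SameCycle x b ∧ ρ.SameCycle y a) := by
    intro x y hxy
    exact inv_lemma ρ a b (x := x) (y := y) (by rwa [← hπρ])
  have invπ : ∀ {x y : α}, ρ.SameCycle x y →
      π.SameCycle x y ∨ (π.SameCycle x a ∧ π.SameCycle y b) ∨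
        (π.SameCycle x b ∧ π.SameCycle y a) := fun h => inv_lemma π a b h
  have hmerge : ¬ ρ.SameCycle a b → π.SameCycle a b := by
    intro h
    have := merge_lemma ρ hab h
    rwa [← hπρ] at this
  have key : ∀ x y : α, π.SameCycle x y → ¬ π.SameCycle x a → ρ.SameCycle x y := by
    intro x y hxy hxa
    rcases invρ hxy with h1 | ⟨h2, h2'⟩ | ⟨h3, h3'⟩
    · exact h1
    · by_cases hb : ρ.SameCycle a b
      · exact (h2.trans hb).trans h2'.symm
      · have hπab : π.SameCycle a b := hmerge hb
        rcases invπ h2 with g1 | ⟨g2, _⟩ | ⟨g3, _⟩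
        · exact absurd g1 hxa
        · exact absurd g2 hxa
        · exact absurd (g3.trans hπab.symm) hxa
    · by_cases hb : ρ.SameCycle a b
      · exact (h3.trans hb.symm).trans h3'.symm
      · have hπab : π.SameCycle a b := hmerge hb
        have hya : ¬ π.SameCycle y a := fun hy => hxa (hxy.trans hy)
        rcases invπ h3' with g1 | ⟨g2, _⟩ | ⟨g3, _⟩
        · exact absurd g1 hya
        · exact absurd g2 hya
        · exact absurd (g3.trans hπab.symm) hya
  let F : α → Option (Quotient (SameCycle.setoid ρ)) := fun x =>
    if π.SameCycle x a then none else some ⟦x⟧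
  have hwd : ∀ x y : α, π.SameCycle x y → F x = F y := by
    intro x y hxy
    by_cases hxa : π.SameCycle x a
    · have hya : π.SameCycle y a := hxy.symm.trans hxa
      simp [F, hxa, hya]
    · have hya : ¬ π.SameCycle y a := fun hy => hxa (hxy.trans hy)
      simp only [F, if_neg hxa, if_neg hya, Option.some.injEq]
      exact Quotient.sound (key x y hxy hxa)
  let G : Quotient (SameCycle.setoid π) → Option (Quotient (SameCycle.setoid ρ)) :=
    Quotient.lift F hwd
  have hinj : Function.Injective G := by
    intro q1 q2
    induction q1 using Quotient.ind with | _ x =>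
    induction q2 using Quotient.ind with | _ y =>
    intro hF
    change F x = F y at hF
    apply Quotient.sound
    by_cases hxa : π.SameCycle x a
    · by_cases hya : π.SameCycle y a
      · exact hxa.trans hya.symm
      · simp [F, hxa, hya] at hF
    · by_cases hya : π.SameCycle y a
      · simp [F, hxa, hya] at hF
      · simp only [F, if_neg hxa, if_neg hya, Option.some.injEq] at hF
        have hxyρ : ρ.SameCycle x y := Quotient.exact hF
        rcases invπ hxyρ with g1 | ⟨g2, _⟩ | ⟨_, g3'⟩
        · exact g1
        · exact absurd g2 hxa
        · exact absurd g3' hya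
  calc Om π ≤ Nat.card (Option (Quotient (SameCycle.setoid ρ))) :=
        Nat.card_le_card_of_injective G hinj
    _ = Om ρ + 1 := Finite.card_option

set_option linter.unusedSectionVars false in
theorem Om_le_isSwap_mul (π : Equiv.Perm α) {g : Equiv.Perm α} (hg : g.IsSwap) :
    Om π ≤ Om (π * g) + 1 := by
  obtain ⟨a, b, hab, rfl⟩ := hg
  exact Om_le_swap_mul π hab

set_option linter.unusedSectionVars false in
theorem Om_le_swaps_mul (l : List (Equiv.Perm α)) (hl : ∀ g ∈ l, g.IsSwap) (x : Equiv.Perm α) :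
    Om x ≤ Om (x * l.prod) + l.length := by
  induction l generalizing x with
  | nil => simp
  | cons g l ih =>
    have h1 : Om x ≤ Om (x * g) + 1 := Om_le_isSwap_mul x (hl g List.mem_cons_self)
    have h2 : Om (x * g) ≤ Om ((x * g) * l.prod) + l.length :=
      ih (fun g' hg' => hl g' (List.mem_cons_of_mem _ hg')) (x * g)
    rw [List.prod_cons, ← mul_assoc]
    simp only [List.length_cons]
    omega

set_option linter.unusedSectionVars false in
theorem cycle_factors_swaps : ∀ (n : ℕ) (c : Equiv.Perm α), c.IsCycle → c.support.card = n →
    ∃ l : List (Equiv.Perm α), (∀ g ∈ l, g.IsSwap) ∧ l.prod = c ∧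
      l.length + 1 = c.support.card := by
  intro n
  induction n using Nat.strong_induction_on with
  | _ n ih =>
    intro c hc hcn
    obtain ⟨x, hx, -⟩ := id hc
    by_cases h2 : c (c x) = x
    · have hceq : c = Equiv.swap x (c x) := hc.eq_swap_of_apply_apply_eq_self hx h2
      refine ⟨[c], ?_, by simp, ?_⟩
      · intro g hg
        rw [List.mem_singleton] at hg
        exact hg ▸ ⟨x, c x, Ne.symm hx, hceq⟩
      · rw [show c.support.card = 2 by rw [hceq]; exact card_support_swap (Ne.symm hx)]
        rfl
    · set c' := Equiv.swap x (c x) * c with hc'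
      have hc'cyc : c'.IsCycle := hc.swap_mul hx h2
      have hsupp : c'.support = c.support \ {x} := support_swap_mul_eq c x h2
      have hxmem : x ∈ c.support := mem_support.mpr hx
      have hcard : c'.support.card = c.support.card - 1 := by
        rw [hsupp, Finset.sdiff_singleton_eq_erase, Finset.card_erase_of_mem hxmem]
      have h2le : 2 ≤ c.support.card := hc.two_le_card_support
      obtain ⟨l', hl'swap, hl'prod, hl'len⟩ :=
        ih (c.support.card - 1) (by omega) c' hc'cyc (by omega)
      refine ⟨Equiv.swap x (c x) :: l', ?_, ?_, ?_⟩
      · intro g hg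
        rcases List.mem_cons.mp hg with rfl | hg
        · exact ⟨x, c x, Ne.symm hx, rfl⟩
        · exact hl'swap g hg
      · rw [List.prod_cons, hl'prod, hc', ← mul_assoc, Equiv.swap_mul_self, one_mul]
      · simp only [List.length_cons]
        omega

set_option linter.unusedSectionVars false in
theorem Om_le_cycle_mul (x : Equiv.Perm α) {c : Equiv.Perm α} (hc : c.IsCycle) :
    Om x ≤ Om (x * c) + (c.support.card - 1) := by
  obtain ⟨l, hlswap, hlprod, hllen⟩ := cycle_factors_swaps c.support.card c hc rfl
  have := Om_le_swaps_mul l hlswap x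
  rw [hlprod] at this
  omega

set_option linter.unusedSectionVars false in
theorem Om_le_cycles_mul (l : List (Equiv.Perm α)) (hl : ∀ g ∈ l, g.IsCycle)
    (x : Equiv.Perm α) :
    Om x ≤ Om (x * l.prod) + (l.map fun g => g.support.card - 1).sum := by
  induction l generalizing x with
  | nil => simp
  | cons c l ih =>
    have h1 : Om x ≤ Om (x * c) + (c.support.card - 1) :=
      Om_le_cycle_mul x (hl c List.mem_cons_self)
    have h2 := ih (fun g hg => hl g (List.mem_cons_of_mem _ hg)) (x * c)
    have heq : (x * c) * l.prod = x * (c :: l).prod := by rw [List.prod_cons, mul_assoc]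
    rw [heq] at h2
    simp only [List.map_cons, List.sum_cons]
    omega

set_option linter.unusedSectionVars false in
/-- Key inequality: in a factorization into cycles, removing one factor. -/
theorem factor_bound {k : ℕ} (σ : Fin k → Equiv.Perm α) (hcyc : ∀ j, (σ j).IsCycle)
    (j : Fin k) :
    Fintype.card α + ((σ j).support.card - 1) ≤
      Om ((σ j)⁻¹ * (List.ofFn σ).prod) +
        ((List.ofFn σ).map fun g => g.support.card - 1).sum := by
  classical
  set l := List.ofFn σ with hl
  set f : Equiv.Perm α → ℕ := fun g => g.support.card - 1 with hf
  have hjlt : (j : ℕ) < l.length := by rw [hl, List.length_ofFn]; exact j.isLt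
  have hsplit : l = l.take j ++ (σ j :: l.drop (j + 1)) := by
    conv_lhs => rw [← List.take_append_drop (j : ℕ) l]
    congr 1
    rw [List.drop_eq_getElem_cons hjlt]
    congr 1
    simp [hl, List.getElem_ofFn]
  have hcycmem : ∀ g ∈ l, g.IsCycle := by
    intro g hg
    rw [hl, List.mem_ofFn] at hg
    obtain ⟨i, rfl⟩ := hg
    exact hcyc i
  set A := (l.take (j : ℕ)).prod with hA
  set B := (l.drop ((j : ℕ) + 1)).prod with hB
  have hprodeq : l.prod = A * (σ j * B) := by
    conv_lhs => rw [hsplit]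
    rw [List.prod_append, List.prod_cons]
  have hrw : (σ j)⁻¹ * l.prod = ((σ j)⁻¹ * A * ((σ j)⁻¹)⁻¹) * B := by
    rw [hprodeq, inv_inv]
    group
  have h1 : Fintype.card α ≤ Om A + ((l.take (j : ℕ)).map f).sum := by
    have := Om_le_cycles_mul (l.take (j : ℕ))
      (fun g hg => hcycmem g (List.mem_of_mem_take hg)) 1
    rwa [one_mul, Om_one] at this
  have h2 : Om A ≤ Om ((σ j)⁻¹ * l.prod) + ((l.drop ((j : ℕ) + 1)).map f).sum := by
    have hconj : Om ((σ j)⁻¹ * A * ((σ j)⁻¹)⁻¹) = Om A := Om_conj (σ j)⁻¹ A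
    have := Om_le_cycles_mul (l.drop ((j : ℕ) + 1))
      (fun g hg => hcycmem g (List.mem_of_mem_drop hg)) ((σ j)⁻¹ * A * ((σ j)⁻¹)⁻¹)
    rw [hconj, ← hB, ← hrw] at this
    exact this
  have hsum : (l.map f).sum =
      ((l.take (j : ℕ)).map f).sum + (f (σ j) + ((l.drop ((j : ℕ) + 1)).map f).sum) := by
    conv_lhs => rw [hsplit]
    rw [List.map_append, List.sum_append, List.map_cons, List.sum_cons]
  rw [hsum]
  simp only [hf] at h1 h2 ⊢
  omega

set_option linter.unusedSectionVars false in
/-- A cycle `c` "below" a full cycle `τ` is determined by its support: it acts as the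
first-return map of `τ` to the support. -/
theorem cycle_apply_eq (τ c : Equiv.Perm α) (hτcyc : τ.IsCycle) (hτ : τ.support = Finset.univ)
    (hΩ : c.support.card ≤ Om (c⁻¹ * τ)) {a : α} (ha : a ∈ c.support) :
    c a = (τ ^ sInf {k | 0 < k ∧ (τ ^ k) a ∈ c.support}) a := by
  classical
  set π := c⁻¹ * τ with hπ
  set A := c.support with hA
  have hEx : ∀ x : α, {k | 0 < k ∧ (τ ^ k) x ∈ A}.Nonempty := by
    intro x
    have hxm : τ x ≠ x := mem_support.mp (hτ ▸ Finset.mem_univ x)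
    have ham : τ a ≠ a := mem_support.mp (hτ ▸ Finset.mem_univ a)
    obtain ⟨i, hi⟩ := hτcyc.exists_pow_eq hxm ham
    rcases Nat.eq_zero_or_pos i with rfl | hipos
    · refine ⟨orderOf τ, orderOf_pos τ, ?_⟩
      rw [pow_orderOf_eq_one]
      simp only [Equiv.Perm.coe_one, id_eq, Equiv.Perm.one_apply]
      simp only [pow_zero, Equiv.Perm.coe_one, id_eq, Equiv.Perm.one_apply] at hi
      exact hi ▸ ha
    · exact ⟨i, hipos, hi ▸ ha⟩
  set N : α → ℕ := fun x => sInf {k | 0 < k ∧ (τ ^ k) x ∈ A} with hN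
  have hNspec : ∀ x, 0 < N x ∧ (τ ^ N x) x ∈ A := fun x =>
    (Nat.sInf_mem (hEx x) : _ ∈ {k | 0 < k ∧ (τ ^ k) x ∈ A})
  have hfix : ∀ y : α, y ∉ A → c⁻¹ y = y := by
    intro y hy
    apply notMem_support.mp
    rwa [support_inv]
  have key : ∀ (x : α) (k : ℕ), k < N x → (π ^ k) x = (τ ^ k) x := by
    intro x k
    induction k with
    | zero => simp
    | succ k ih =>
      intro hk
      have ihk := ih (by omega)
      have hnm : (τ ^ (k + 1)) x ∉ A := by
        intro hmem
        have : N x ≤ k + 1 := Nat.sInf_le ⟨Nat.succ_pos k, hmem⟩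
        omega
      have e2 : (τ ^ (k + 1)) x = τ ((τ ^ k) x) := by rw [pow_succ' τ k, mul_apply]
      rw [pow_succ' π k, mul_apply, ihk]
      show c⁻¹ (τ ((τ ^ k) x)) = (τ ^ (k + 1)) x
      rw [e2] at hnm ⊢
      exact hfix _ hnm
  have key2 : ∀ x : α, (π ^ N x) x = c⁻¹ ((τ ^ N x) x) := by
    intro x
    obtain ⟨M, hM⟩ := Nat.exists_eq_succ_of_ne_zero (Nat.pos_iff_ne_zero.mp (hNspec x).1)
    rw [hM, pow_succ' π M, mul_apply, key x M (by omega)]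
    show c⁻¹ (τ ((τ ^ M) x)) = c⁻¹ ((τ ^ (M + 1)) x)
    rw [pow_succ' τ M, mul_apply]
  have memA : ∀ x : α, c⁻¹ ((τ ^ N x) x) ∈ A := by
    intro x
    have h1 : (τ ^ N x) x ∈ c⁻¹.support := by rw [support_inv]; exact (hNspec x).2
    have := (apply_mem_support (f := c⁻¹) (x := (τ ^ N x) x)).mpr h1
    rwa [support_inv] at this
  have reach : ∀ x : α, π.SameCycle x (c⁻¹ ((τ ^ N x) x)) := fun x =>
    ⟨(N x : ℤ), by rw [zpow_natCast]; exact key2 x⟩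
  set φ : {z // z ∈ A} → Quotient (SameCycle.setoid π) := fun z => ⟦z.1⟧ with hφ
  have hsurj : Function.Surjective φ := by
    intro q
    induction q using Quotient.ind with | _ x =>
    exact ⟨⟨c⁻¹ ((τ ^ N x) x), memA x⟩, Quotient.sound (reach x).symm⟩
  have hcards : Nat.card {z // z ∈ A} = A.card := by
    rw [Nat.card_eq_fintype_card, Fintype.card_coe]
  have hle : Nat.card (Quotient (SameCycle.setoid π)) ≤ Nat.card {z // z ∈ A} :=
    Nat.card_le_card_of_surjective φ hsurj
  have hΩ' : Nat.card {z // z ∈ A} ≤ Nat.card (Quotient (SameCycle.setoid π)) := by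
    rw [hcards]
    exact hΩ
  have hcardeq : Nat.card {z // z ∈ A} = Nat.card (Quotient (SameCycle.setoid π)) :=
    le_antisymm hΩ' hle
  have hinj : Function.Injective φ :=
    ((Nat.bijective_iff_surjective_and_card φ).mpr ⟨hsurj, hcardeq⟩).injective
  have hφeq : φ ⟨a, ha⟩ = φ ⟨c⁻¹ ((τ ^ N a) a), memA a⟩ := Quotient.sound (reach a)
  have heq' : a = c⁻¹ ((τ ^ N a) a) := congrArg Subtype.val (hinj hφeq)
  calc c a = c (c⁻¹ ((τ ^ N a) a)) := by rw [← heq']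
    _ = (τ ^ N a) a := Equiv.apply_symm_apply c _

end Cor311


/-- **Corollary 3.11.** Assume `∑ (e_j - 1) = d - 1` and `τ` is a `d`-cycle. Two
factorizations of `τ` of type `(e₁, …, e_{r-1})` whose corresponding cycles have the same
supports coincide; consequently the map sending a factorization to its factorization
graph is a bijection from `Fac(d, r, τ; e₁, …, e_{r-1})` onto the set
`𝒢*_S(d, r, τ; e₁, …, e_{r-1})` of factorization graphs. -/
theorem factorization_to_graph_bijective (d r : ℕ) (hd : 2 ≤ d) (hr : 2 ≤ r)
    (τ : Perm (Fin d)) (hτ : τ.IsCycle) (hτd : τ.support.card = d)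
    (e : Fin (r - 1) → ℕ) (he : ∀ j, 2 ≤ e j)
    (hsum : ∑ j, (e j - 1) = d - 1) :
    (∀ σ σ' : Fin (r - 1) → Perm (Fin d),
      IsFactorization τ e σ → IsFactorization τ e σ' →
      (∀ j, (σ j).support = (σ' j).support) → σ = σ') ∧
    Set.BijOn (facGraph (k := r - 1) (d := d))
      {σ | IsFactorization τ e σ} (facGraph '' {σ | IsFactorization τ e σ}) := by
  classical
  have hcard : Fintype.card (Fin d) = d := Fintype.card_fin d
  have hτuniv : τ.support = Finset.univ := Finset.eq_univ_of_card _ (by rw [hτd, hcard])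
  have part1 : ∀ σ σ' : Fin (r - 1) → Perm (Fin d),
      IsFactorization τ e σ → IsFactorization τ e σ' →
      (∀ j, (σ j).support = (σ' j).support) → σ = σ' := by
    intro σ σ' hσ hσ' hss
    obtain ⟨hcyc, hprod⟩ := hσ
    obtain ⟨hcyc', hprod'⟩ := hσ'
    have hsum1 : ∀ (ρ : Fin (r - 1) → Perm (Fin d)), (∀ j, (ρ j).support.card = e j) →
        ((List.ofFn ρ).map fun g => g.support.card - 1).sum = d - 1 := by
      intro ρ hρ
      rw [List.map_ofFn, List.sum_ofFn]
      calc ∑ i, ((fun g : Perm (Fin d) => g.support.card - 1) ∘ ρ) i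
          = ∑ i, (e i - 1) := by
            apply Finset.sum_congr rfl
            intro i _
            simp [Function.comp, hρ i]
        _ = d - 1 := hsum
    have hbd : ∀ (ρ : Fin (r - 1) → Perm (Fin d)), IsFactorization τ e ρ → ∀ j,
        (ρ j).support.card ≤ Cor311.Om ((ρ j)⁻¹ * τ) := by
      rintro ρ ⟨hρcyc, hρprod⟩ j
      have h := Cor311.factor_bound ρ (fun i => (hρcyc i).1) j
      rw [hρprod, hsum1 ρ (fun i => (hρcyc i).2), hcard] at h
      have hsupp : (ρ j).support.card = e j := (hρcyc j).2
      have h2e : 2 ≤ e j := he j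
      omega
    funext j
    apply Equiv.ext
    intro x
    by_cases hx : x ∈ (σ j).support
    · have h1 := Cor311.cycle_apply_eq τ (σ j) hτ hτuniv
        (hbd σ ⟨hcyc, hprod⟩ j) hx
      have hx' : x ∈ (σ' j).support := (hss j) ▸ hx
      have h2 := Cor311.cycle_apply_eq τ (σ' j) hτ hτuniv
        (hbd σ' ⟨hcyc', hprod'⟩ j) hx'
      rw [hss j] at h1
      exact h1.trans h2.symm
    · have hx' : x ∉ (σ' j).support := fun h => hx ((hss j).symm ▸ h)
      rw [notMem_support.mp hx, notMem_support.mp hx']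
  have adj_iff : ∀ (σ : Fin (r - 1) → Perm (Fin d)) (j : Fin (r - 1)) (x : Fin d),
      (facGraph σ).Adj (Sum.inl j) (Sum.inr x) ↔ x ∈ (σ j).support := by
    intro σ j x
    simp [facGraph, SimpleGraph.fromRel_adj]
  refine ⟨part1, Set.InjOn.bijOn_image ?_⟩
  intro σ hσ σ' hσ' hg
  apply part1 σ σ' hσ hσ'
  intro j
  ext x
  rw [← adj_iff σ j x, ← adj_iff σ' j x, hg]
end

section
/- Let γ be a cycle in S_d, S' ⊆ S, and let G be an S'-supp(γ) bipartite tree. Let s ∈ S'. If every [d]-vertex incident to s has the counterclockwise increasing consecutive partition property (CICPP) on (G, γ), then s has the consecutive partition property (CPP) on (G, γ). -/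
open Equiv Equiv.Perm SimpleGraph

namespace L43

variable {V : Type*} {G : SimpleGraph V}

lemma delV_notMem_support {v : V} :
    ∀ {a b : V} (w : (delV G v).Walk a b), a ≠ v → v ∉ w.support := by
  intro a b w
  induction w with
  | nil =>
    intro ha h
    simp only [SimpleGraph.Walk.support_nil, List.mem_singleton] at h
    exact ha h.symm
  | @cons a c b h q ih =>
    intro ha hv
    rw [SimpleGraph.Walk.support_cons, List.mem_cons] at hv
    rcases hv with h1 | h2
    · exact ha h1.symm
    · have hc : c ≠ v := by
        have h2' := (SimpleGraph.deleteEdges_adj.mp h).2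
        simp only [Set.mem_setOf_eq, Sym2.mem_iff] at h2'
        intro hcv; exact h2' (Or.inr hcv.symm)
      exact ih hc h2

lemma not_reachable_delV {v a : V} (h : a ≠ v) : ¬ (delV G v).Reachable a v := by
  rintro ⟨w⟩
  exact delV_notMem_support w h w.end_mem_support

lemma delV_le (G : SimpleGraph V) (v : V) : delV G v ≤ G :=
  SimpleGraph.deleteEdges_le _

/-- transfer a `delV` walk to a `G`-walk with the same support -/
lemma exists_G_walk {v a b : V} (w : (delV G v).Walk a b) :
    ∃ w' : G.Walk a b, w'.support = w.support := by
  refine ⟨w.transfer G ?_, w.support_transfer _⟩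
  intro e he
  exact SimpleGraph.edgeSet_mono (delV_le G v) (w.edges_subset_edgeSet he)

lemma reachable_delV_of_walk {v a b : V} (w : G.Walk a b) (hv : v ∉ w.support) :
    (delV G v).Reachable a b := by
  refine ⟨w.toDeleteEdges _ ?_⟩
  intro e he
  induction e with
  | h x y =>
    simp only [Set.mem_setOf_eq, Sym2.mem_iff]
    rintro (rfl | rfl)
    · exact hv (w.fst_mem_support_of_mem_edges he)
    · exact hv (w.snd_mem_support_of_mem_edges he)

lemma support_subset_A {A : Set V} (hVert : ∀ v w, G.Adj v w → v ∈ A ∧ w ∈ A) :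
    ∀ {a b : V} (w : G.Walk a b), a ∈ A → ∀ u ∈ w.support, u ∈ A := by
  intro a b w
  induction w with
  | nil =>
    intro ha u hu
    simp only [SimpleGraph.Walk.support_nil, List.mem_singleton] at hu
    exact hu ▸ ha
  | @cons a c b h q ih =>
    intro ha u hu
    rw [SimpleGraph.Walk.support_cons, List.mem_cons] at hu
    rcases hu with rfl | hu
    · exact ha
    · exact ih (hVert _ _ h).2 u hu

lemma lift_to_induce {A : Set V} :
    ∀ {a b : V} (w : G.Walk a b) (_ : ∀ u ∈ w.support, u ∈ A) (ha : a ∈ A) (hb : b ∈ A),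
    ∃ w' : (G.induce A).Walk ⟨a, ha⟩ ⟨b, hb⟩,
      ∀ p : A, p ∈ w'.support → (p : V) ∈ w.support := by
  intro a b w
  induction w with
  | nil =>
    intro hw ha hb
    refine ⟨SimpleGraph.Walk.nil, ?_⟩
    intro p hp
    simp only [SimpleGraph.Walk.support_nil, List.mem_singleton] at hp
    subst hp
    simp
  | @cons a c b h q ih =>
    intro hw ha hb
    have hc : c ∈ A := hw c (by
      rw [SimpleGraph.Walk.support_cons]
      exact List.mem_cons_of_mem _ q.start_mem_support)
    have hq : ∀ u ∈ q.support, u ∈ A := by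
      intro u hu
      exact hw u (by rw [SimpleGraph.Walk.support_cons]; exact List.mem_cons_of_mem _ hu)
    obtain ⟨w', hw'⟩ := ih hq hc hb
    have hadj : (G.induce A).Adj ⟨a, ha⟩ ⟨c, hc⟩ := by
      simpa using h
    refine ⟨SimpleGraph.Walk.cons hadj w', ?_⟩
    intro p hp
    rw [SimpleGraph.Walk.support_cons, List.mem_cons] at hp
    rw [SimpleGraph.Walk.support_cons, List.mem_cons]
    rcases hp with rfl | hp
    · exact Or.inl rfl
    · exact Or.inr (hw' p hp)

lemma lower_from_induce {A : Set V} :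
    ∀ {a b : A} (w : (G.induce A).Walk a b),
    ∃ w' : G.Walk (a : V) (b : V),
      ∀ u : V, u ∈ w'.support → ∀ hu : u ∈ A, (⟨u, hu⟩ : A) ∈ w.support := by
  intro a b w
  induction w with
  | nil =>
    refine ⟨SimpleGraph.Walk.nil, ?_⟩
    intro u hu hu'
    simp only [SimpleGraph.Walk.support_nil, List.mem_singleton] at hu ⊢
    subst hu
    rfl
  | @cons a cA b h q ih =>
    obtain ⟨w', hw'⟩ := ih
    have hadj : G.Adj (a : V) (cA : V) := by simpa using h
    refine ⟨SimpleGraph.Walk.cons hadj w', ?_⟩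
    intro u hu hu'
    rw [SimpleGraph.Walk.support_cons, List.mem_cons] at hu ⊢
    rcases hu with rfl | hu
    · exact Or.inl (Subtype.ext rfl)
    · exact Or.inr (hw' u hu hu')

/-- The key tree lemma: it is impossible that, for an edge `uv` of `G`, some vertex `w` is
both reachable from `v` avoiding `u` and reachable from `u` avoiding `v`. -/
lemma tree_no_double {A : Set V}
    (hVert : ∀ v w, G.Adj v w → v ∈ A ∧ w ∈ A)
    (htree : (G.induce A).IsTree)
    {u v w : V} (huv : G.Adj u v)
    (h1 : (delV G u).Reachable v w) (h2 : (delV G v).Reachable u w) : False := by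
  classical
  obtain ⟨W1⟩ := h1
  obtain ⟨W2⟩ := h2
  have hu : u ∈ A := (hVert _ _ huv).1
  have hv : v ∈ A := (hVert _ _ huv).2
  have hW1u : u ∉ W1.support := delV_notMem_support W1 huv.ne.symm
  have hW2v : v ∉ W2.support := delV_notMem_support W2 huv.ne
  obtain ⟨W1', hW1s⟩ := exists_G_walk W1
  obtain ⟨W2', hW2s⟩ := exists_G_walk W2
  have hW1A : ∀ x ∈ W1'.support, x ∈ A := support_subset_A hVert W1' hv
  have hW2A : ∀ x ∈ W2'.support, x ∈ A := support_subset_A hVert W2' hu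
  have hw : w ∈ A := hW1A w W1'.end_mem_support
  obtain ⟨Q1, hQ1⟩ := lift_to_induce W1' hW1A hv hw
  obtain ⟨Q2, hQ2⟩ := lift_to_induce W2' hW2A hu hw
  have hQ1u : (⟨u, hu⟩ : A) ∉ Q1.support := by
    intro hmem
    exact hW1u (hW1s ▸ hQ1 _ hmem)
  have hQ2v : (⟨v, hv⟩ : A) ∉ Q2.support := by
    intro hmem
    exact hW2v (hW2s ▸ hQ2 _ hmem)
  set p1 := Q1.toPath with hp1
  set p2 := Q2.toPath with hp2
  have hp1u : (⟨u, hu⟩ : A) ∉ p1.1.support := fun hm => hQ1u (Q1.support_toPath_subset hm)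
  have hp2v : (⟨v, hv⟩ : A) ∉ p2.1.support := fun hm => hQ2v (Q2.support_toPath_subset hm)
  have hadj : (G.induce A).Adj ⟨u, hu⟩ ⟨v, hv⟩ := by simpa using huv
  have hbigP : (SimpleGraph.Walk.cons hadj p1.1).IsPath := p1.2.cons hp1u
  have huniq := SimpleGraph.isAcyclic_iff_path_unique.mp htree.IsAcyclic
    (⟨SimpleGraph.Walk.cons hadj p1.1, hbigP⟩ : (G.induce A).Path ⟨u, hu⟩ ⟨w, hw⟩) p2
  apply hp2v
  have hvmem : (⟨v, hv⟩ : A) ∈ (SimpleGraph.Walk.cons hadj p1.1).support := by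
    rw [SimpleGraph.Walk.support_cons]
    exact List.mem_cons_of_mem _ p1.1.start_mem_support
  rw [show p2.1 = SimpleGraph.Walk.cons hadj p1.1 from congrArg Subtype.val huniq.symm]
  exact hvmem

end L43

namespace L43C

variable {d : ℕ} {γ : Perm (Fin d)} {ν : Fin d}

lemma isCycleOn (hγ : γ.IsCycle) : γ.IsCycleOn (γ.support : Set (Fin d)) := by
  rw [Equiv.Perm.coe_support_eq_set_support]
  exact hγ.isCycleOn

lemma inv_pow_inj (hγ : γ.IsCycle) (hν : ν ∈ γ.support) {m n : ℕ} :
    (γ⁻¹ ^ m) ν = (γ⁻¹ ^ n) ν ↔ m ≡ n [MOD γ.support.card] :=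
  (isCycleOn hγ).inv.pow_apply_eq_pow_apply hν

lemma ccwPos_spec (hγ : γ.IsCycle) (hν : ν ∈ γ.support) {n : ℕ}
    (h1 : 1 ≤ n) (h2 : n ≤ γ.support.card) :
    ccwPos γ ν ((γ⁻¹ ^ n) ν) = n := by
  unfold ccwPos
  have hne : {m : ℕ | 1 ≤ m ∧ (γ⁻¹ ^ m) ν = (γ⁻¹ ^ n) ν}.Nonempty := ⟨n, h1, rfl⟩
  have hmem := Nat.sInf_mem hne
  obtain ⟨hm1, hm2⟩ := hmem
  set m := sInf {m : ℕ | 1 ≤ m ∧ (γ⁻¹ ^ m) ν = (γ⁻¹ ^ n) ν} with hm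
  have hle : m ≤ n := Nat.sInf_le ⟨h1, rfl⟩
  by_contra hne'
  have hlt : m < n := lt_of_le_of_ne hle hne'
  have := (inv_pow_inj hγ hν).mp hm2
  have hdvd := (Nat.modEq_iff_dvd' (le_of_lt hlt)).mp this
  have := Nat.le_of_dvd (by omega) hdvd
  omega

lemma ccwPos_exists (hγ : γ.IsCycle) (hν : ν ∈ γ.support) {y : Fin d} (hy : y ∈ γ.support) :
    ∃ n : ℕ, 1 ≤ n ∧ n ≤ γ.support.card ∧ (γ⁻¹ ^ n) ν = y ∧ ccwPos γ ν y = n := by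
  have hsc : γ.SameCycle ν y := (isCycleOn hγ).2 (by exact_mod_cast hν) (by exact_mod_cast hy)
  obtain ⟨n, hn0, hn1, hn2⟩ := hsc.inv.exists_pow_eq''
  rw [orderOf_inv, hγ.orderOf] at hn1
  exact ⟨n, hn0, hn1, hn2, hn2 ▸ ccwPos_spec hγ hν hn0 hn1⟩

lemma inv_pow_card (hγ : γ.IsCycle) : γ⁻¹ ^ γ.support.card = 1 := by
  have : orderOf γ⁻¹ = γ.support.card := by rw [orderOf_inv, hγ.orderOf]
  rw [← this]
  exact pow_orderOf_eq_one _

lemma ccwPos_self (hγ : γ.IsCycle) (hν : ν ∈ γ.support) :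
    ccwPos γ ν ν = γ.support.card := by
  have h1 : 1 ≤ γ.support.card := by
    have := Finset.card_pos.mpr ⟨ν, hν⟩; omega
  have := ccwPos_spec hγ hν h1 le_rfl
  rwa [inv_pow_card hγ] at this

lemma pow_inv_pow {i j : ℕ} (hij : i ≤ j) :
    (γ ^ i) ((γ⁻¹ ^ j) ν) = (γ⁻¹ ^ (j - i)) ν := by
  have h : γ ^ i * γ⁻¹ ^ j = γ⁻¹ ^ (j - i) := by
    calc γ ^ i * γ⁻¹ ^ j = γ ^ i * (γ⁻¹ ^ i * γ⁻¹ ^ (j - i)) := by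
          rw [← pow_add, Nat.add_sub_cancel' hij]
      _ = (γ ^ i * γ⁻¹ ^ i) * γ⁻¹ ^ (j - i) := by rw [mul_assoc]
      _ = γ⁻¹ ^ (j - i) := by rw [inv_pow, mul_inv_cancel, one_mul]
  calc (γ ^ i) ((γ⁻¹ ^ j) ν) = (γ ^ i * γ⁻¹ ^ j) ν := rfl
    _ = (γ⁻¹ ^ (j - i)) ν := by rw [h]

lemma pow_eq_inv_pow (hγ : γ.IsCycle) {j : ℕ} (hj : j ≤ γ.support.card) :
    (γ ^ j : Perm (Fin d)) = γ⁻¹ ^ (γ.support.card - j) := by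
  have h1 : γ⁻¹ ^ (γ.support.card - j) * γ⁻¹ ^ j = 1 := by
    rw [← pow_add, Nat.sub_add_cancel hj, inv_pow_card hγ]
  have h2 := eq_inv_of_mul_eq_one_left h1
  rw [h2, inv_pow, inv_inv]

lemma inv_pow_mem_support (hν : ν ∈ γ.support) (n : ℕ) :
    (γ⁻¹ ^ n) ν ∈ γ.support := by
  rw [← Equiv.Perm.support_inv]
  exact Equiv.Perm.pow_apply_mem_support.mpr (by rwa [Equiv.Perm.support_inv])

lemma piece_char (hγ : γ.IsCycle) (hν : ν ∈ γ.support) {P : Set (Fin d)}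
    (hP : IsConsecPiece γ P) (hνP : ν ∉ P) :
    ∃ a b : ℕ, 1 ≤ a ∧ a ≤ b ∧ b < γ.support.card ∧
      ∀ y, y ∈ P ↔ (y ∈ γ.support ∧ a ≤ ccwPos γ ν y ∧ ccwPos γ ν y ≤ b) := by
  obtain ⟨z, hz, m, hm1, hPeq⟩ := hP
  have hzP : z ∈ P := by
    rw [hPeq]; exact ⟨0, Set.mem_Iio.mpr hm1, by simp⟩
  have hzν : z ≠ ν := fun h => hνP (h ▸ hzP)
  obtain ⟨b, hb1, hbc, hbz, hbpos⟩ := ccwPos_exists hγ hν hz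
  have hbc' : b < γ.support.card := by
    rcases lt_or_eq_of_le hbc with h | h
    · exact h
    · exfalso; apply hzν; rw [← hbz, h, inv_pow_card hγ]; simp
  have hmb : m ≤ b := by
    by_contra hlt
    push_neg at hlt
    apply hνP
    rw [hPeq]
    refine ⟨b, hlt, ?_⟩
    show (γ ^ b) z = ν
    rw [← hbz, pow_inv_pow le_rfl]
    simp
  refine ⟨b - m + 1, b, by omega, by omega, hbc', ?_⟩
  intro y
  constructor
  · rintro hy
    rw [hPeq] at hy
    obtain ⟨i, hi, hyeq⟩ := hy
    have hyeq' : (γ ^ i) z = y := hyeq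
    subst hyeq'
    simp only [Set.mem_Iio] at hi
    have hib : i ≤ b := by omega
    have heq : (γ ^ i) z = (γ⁻¹ ^ (b - i)) ν := by rw [← hbz, pow_inv_pow hib]
    have hpos : ccwPos γ ν ((γ ^ i) z) = b - i := by
      rw [heq]; exact ccwPos_spec hγ hν (by omega) (by omega)
    rw [hpos]
    refine ⟨heq ▸ inv_pow_mem_support hν (b - i), by omega, by omega⟩
  · rintro ⟨hysupp, h1, h2⟩
    obtain ⟨n, hn1, hnc, hny, hnpos⟩ := ccwPos_exists hγ hν hysupp
    rw [hnpos] at h1 h2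
    rw [hPeq]
    refine ⟨b - n, by simp only [Set.mem_Iio]; omega, ?_⟩
    show (γ ^ (b - n)) z = y
    rw [← hbz, pow_inv_pow (by omega), show b - (b - n) = n by omega, hny]

end L43C

/-- **Lemma 4.3.** Let `γ` be a cycle in `S_d`, `S' ⊆ S`, and let `G` be an
`S'`-`supp(γ)` bipartite tree (its edges lie inside the vertex set
`S' ∪ supp(γ)`, on which it induces a tree). If every `[d]`-vertex incident to `s ∈ S'`
has CICPP on `(G, γ)`, then `s` has CPP on `(G, γ)`. -/
theorem CICPP_of_incident_implies_CPP (d k : ℕ)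
    (γ : Perm (Fin d)) (hγ : γ.IsCycle)
    (S' : Set (Fin k)) (G : SimpleGraph (Fin k ⊕ Fin d))
    (hbip : IsBipartiteSD G)
    (A : Set (Fin k ⊕ Fin d))
    (hA : A = Sum.inl '' S' ∪ Sum.inr '' (↑γ.support : Set (Fin d)))
    (hVert : ∀ v w, G.Adj v w → v ∈ A ∧ w ∈ A)
    (htree : (G.induce A).IsTree)
    (s : Fin k) (hs : s ∈ S')
    (hCICPP : ∀ x : Fin d, G.Adj (Sum.inl s) (Sum.inr x) → HasCICPP G γ x) :
    HasCPP G γ s := by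
  classical
  intro x hx
  have hsA : Sum.inl s ∈ A := by rw [hA]; exact Or.inl ⟨s, hs, rfl⟩
  have hxA : Sum.inr x ∈ A := by rw [hA]; exact Or.inr ⟨x, by exact_mod_cast hx, rfl⟩
  -- Step 1: find the neighbor ν of s towards x
  have hreach0 : (G.induce A).Reachable ⟨Sum.inl s, hsA⟩ ⟨Sum.inr x, hxA⟩ :=
    htree.isConnected.preconnected _ _
  obtain ⟨w0⟩ := hreach0
  set p0 := w0.toPath with hp0def
  have hne0 : (⟨Sum.inl s, hsA⟩ : A) ≠ ⟨Sum.inr x, hxA⟩ := by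
    intro h
    exact Sum.inl_ne_inr (congrArg Subtype.val h)
  have hnotnil : ¬ p0.1.Nil := SimpleGraph.Walk.not_nil_of_ne hne0
  obtain ⟨mv, hadj0, q, hq0⟩ := SimpleGraph.Walk.not_nil_iff.mp hnotnil
  have hGadj : G.Adj (Sum.inl s) (mv : Fin k ⊕ Fin d) := by simpa using hadj0
  obtain ⟨ν, hmv⟩ : ∃ ν : Fin d, (mv : Fin k ⊕ Fin d) = Sum.inr ν := by
    rcases hmveq : (mv : Fin k ⊕ Fin d) with j | ν
    · rw [hmveq] at hGadj
      exact absurd hGadj (hbip.1 s j)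
    · exact ⟨ν, rfl⟩
  rw [hmv] at hGadj
  have hsnotq : (⟨Sum.inl s, hsA⟩ : A) ∉ q.support := by
    have hp := p0.2
    rw [hq0] at hp
    exact ((SimpleGraph.Walk.cons_isPath_iff _ _).mp hp).2
  obtain ⟨qG, hqG⟩ := L43.lower_from_induce q
  have hsqG : Sum.inl s ∉ qG.support := by
    intro hmem
    exact hsnotq (hqG _ hmem hsA)
  have hreachνx : (delV G (Sum.inl s)).Reachable (Sum.inr ν) (Sum.inr x) := by
    have h := L43.reachable_delV_of_walk qG hsqG
    rw [hmv] at h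
    exact h
  -- basic facts about ν
  have hνA : Sum.inr ν ∈ A := (hVert _ _ hGadj).2
  have hνsupp : ν ∈ γ.support := by
    rw [hA] at hνA
    rcases hνA with ⟨j, -, hj⟩ | ⟨z, hz, hzeq⟩
    · exact absurd hj (by simp)
    · obtain rfl := Sum.inr.inj hzeq
      exact_mod_cast hz
  obtain ⟨hCI1, hCI2, hCI3, -⟩ := hCICPP ν hGadj
  have hs_adj : G.Adj (Sum.inr ν) (Sum.inl s) := hGadj.symm
  have hνPs : ν ∉ compD G (Sum.inr ν) (Sum.inl s) := by
    intro h
    exact L43.not_reachable_delV (by simp) h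
  obtain ⟨a, b, ha1, hab, hbc, hPschar⟩ :=
    L43C.piece_char hγ hνsupp (hCI1 s hs_adj) hνPs
  -- Step 2: characterization of the component of ν in G - s
  have hDchar : ∀ y : Fin d, (delV G (Sum.inl s)).Reachable (Sum.inr ν) (Sum.inr y) ↔
      (y ∈ γ.support ∧ ¬(a ≤ ccwPos γ ν y ∧ ccwPos γ ν y ≤ b)) := by
    intro y
    constructor
    · intro hr
      by_cases hyν : y = ν
      · subst hyν
        exact ⟨hνsupp, by rw [L43C.ccwPos_self hγ hνsupp]; omega⟩
      · have hysupp : y ∈ γ.support := by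
          obtain ⟨W⟩ := hr
          obtain ⟨W', hW's⟩ := L43.exists_G_walk W
          have hyA : Sum.inr y ∈ A :=
            L43.support_subset_A hVert W' hνA (Sum.inr y) W'.end_mem_support
          rw [hA] at hyA
          rcases hyA with ⟨j, -, hj⟩ | ⟨z, hz, hzeq⟩
          · exact absurd hj (by simp)
          · obtain rfl := Sum.inr.inj hzeq
            exact_mod_cast hz
        obtain ⟨j, hj, hyj⟩ := hCI3 y hysupp hyν
        have hjs : j ≠ s := by
          rintro rfl
          exact L43.tree_no_double hVert htree hGadj hr hyj
        refine ⟨hysupp, ?_⟩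
        rintro ⟨hay, hyb⟩
        have hyPs : y ∈ compD G (Sum.inr ν) (Sum.inl s) := (hPschar y).mpr ⟨hysupp, hay, hyb⟩
        exact Set.disjoint_left.mp (hCI2 j s hj hs_adj hjs) hyj hyPs
    · rintro ⟨hysupp, hnab⟩
      by_cases hyν : y = ν
      · subst hyν
        exact SimpleGraph.Reachable.refl _
      · obtain ⟨j, hj, hyj⟩ := hCI3 y hysupp hyν
        have hjs : j ≠ s := by
          rintro rfl
          exact hnab ⟨((hPschar y).mp hyj).2.1, ((hPschar y).mp hyj).2.2⟩
        have hedge : (delV G (Sum.inl s)).Adj (Sum.inr ν) (Sum.inl j) := by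
          show (G.deleteEdges {e : Sym2 (Fin k ⊕ Fin d) | Sum.inl s ∈ e}).Adj _ _
          rw [SimpleGraph.deleteEdges_adj]
          refine ⟨hj, ?_⟩
          simp only [Set.mem_setOf_eq, Sym2.mem_iff]
          rintro (h | h)
          · exact Sum.inl_ne_inr h
          · exact hjs (Sum.inl.inj h).symm
        obtain ⟨W⟩ := hyj
        have hsW : Sum.inl s ∉ W.support := by
          intro hmem
          have hpre : (delV G (Sum.inr ν)).Reachable (Sum.inl j) (Sum.inl s) :=
            ⟨W.takeUntil _ hmem⟩
          exact L43.tree_no_double hVert htree hs_adj hpre.symm hedge.reachable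
        obtain ⟨W', hW's⟩ := L43.exists_G_walk W
        have hr2 := L43.reachable_delV_of_walk W' (hW's ▸ hsW)
        exact hedge.reachable.trans hr2
  -- Step 3: build the consecutive piece
  have h1c : 1 ≤ γ.support.card := by
    have := Finset.card_pos.mpr ⟨ν, hνsupp⟩; omega
  set m := γ.support.card - (b - a + 1) with hm
  set x₀ := (γ⁻¹ ^ (a - 1)) ν with hx₀
  have hx₀supp : x₀ ∈ γ.support := L43C.inv_pow_mem_support hνsupp (a - 1)
  refine ⟨x₀, hx₀supp, m, by omega, ?_⟩
  ext y
  simp only [compD, Set.mem_setOf_eq, Set.mem_image, Set.mem_Iio]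
  have hyiff : (delV G (Sum.inl s)).Reachable (Sum.inr x) (Sum.inr y) ↔
      (delV G (Sum.inl s)).Reachable (Sum.inr ν) (Sum.inr y) :=
    ⟨fun h => hreachνx.trans h, fun h => hreachνx.symm.trans h⟩
  rw [hyiff, hDchar y]
  constructor
  · rintro ⟨hysupp, hnab⟩
    obtain ⟨n, hn1, hnc, hny, hnpos⟩ := L43C.ccwPos_exists hγ hνsupp hysupp
    rw [hnpos] at hnab
    by_cases hna : n < a
    · refine ⟨a - 1 - n, by omega, ?_⟩
      show (γ ^ (a - 1 - n)) x₀ = y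
      rw [hx₀, L43C.pow_inv_pow (by omega), show a - 1 - (a - 1 - n) = n by omega, hny]
    · have hnb : b < n := by omega
      by_cases hnc' : n = γ.support.card
      · refine ⟨a - 1, by omega, ?_⟩
        show (γ ^ (a - 1)) x₀ = y
        rw [hx₀, L43C.pow_inv_pow le_rfl]
        simp only [Nat.sub_self, pow_zero]
        rw [← hny, hnc', L43C.inv_pow_card hγ]
      · refine ⟨a - 1 + (γ.support.card - n), by omega, ?_⟩
        show (γ ^ (a - 1 + (γ.support.card - n))) x₀ = y
        have h1 : (γ ^ (a - 1)) x₀ = ν := by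
          rw [hx₀, L43C.pow_inv_pow le_rfl]; simp
        have h2 : (γ ^ (a - 1 + (γ.support.card - n))) x₀
            = (γ ^ (γ.support.card - n)) ((γ ^ (a - 1)) x₀) := by
          rw [add_comm, pow_add]; rfl
        rw [h2, h1, L43C.pow_eq_inv_pow hγ (by omega),
          show γ.support.card - (γ.support.card - n) = n by omega, hny]
  · rintro ⟨i, hi, hyeq⟩
    have hyeq' : (γ ^ i) x₀ = y := hyeq
    subst hyeq'
    by_cases hia : i + 1 < a
    · have heq : (γ ^ i) x₀ = (γ⁻¹ ^ (a - 1 - i)) ν := by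
        rw [hx₀, L43C.pow_inv_pow (by omega)]
      rw [heq]
      have hpos := L43C.ccwPos_spec hγ hνsupp (n := a - 1 - i) (by omega) (by omega)
      exact ⟨L43C.inv_pow_mem_support hνsupp _, by rw [hpos]; omega⟩
    · by_cases hia2 : i + 1 = a
      · have heq : (γ ^ i) x₀ = ν := by
          rw [hx₀, show i = a - 1 by omega, L43C.pow_inv_pow le_rfl]; simp
        rw [heq]
        exact ⟨hνsupp, by rw [L43C.ccwPos_self hγ hνsupp]; omega⟩
      · have hia3 : a ≤ i := by omega
        have h1 : (γ ^ i) x₀ = (γ ^ (i - (a - 1))) ν := by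
          rw [hx₀, show i = (i - (a - 1)) + (a - 1) by omega, pow_add,
            Equiv.Perm.mul_apply, L43C.pow_inv_pow le_rfl]
          simp
        rw [h1, L43C.pow_eq_inv_pow hγ (by omega)]
        have hpos := L43C.ccwPos_spec hγ hνsupp
          (n := γ.support.card - (i - (a - 1))) (by omega) (by omega)
        exact ⟨L43C.inv_pow_mem_support hνsupp _, by rw [hpos]; omega⟩
end
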